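/- arXiv:2008.01256 — 9 statements merged into one kernel-verified Lean document; each statement's English description precedes it below -/
import Mathlib

section
/- Let h, q : ℝ^m → ℝ be quadratic polynomials and suppose there exists u0 ∈ ℝ^m with q(u0) > 0. Then the following are equivalent: (i) for all x, q(x) ≥ 0 implies h(x) ≥ 0; (ii) there exists λ ≥ 0 such that h(x) ≥ λ·q(x) for all x ∈ ℝ^m. -/
open MvPolynomial


private lemma finsupp_inj {m : ℕ} (d e : Fin m →₀ ℕ)
    (h : Finsupp.toMultiset d = Finsupp.toMultiset e) : d = e := by
  ext a
  rw [← Finsupp.count_toMultiset d a, ← Finsupp.count_toMultiset e a, h]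

private lemma deg_classify {m : ℕ} (d : Fin m →₀ ℕ) (hd : (d.sum fun _ e => e) ≤ 2) :
    d = 0 ∨ (∃ i, d = Finsupp.single i 1) ∨
      (∃ i j, d = Finsupp.single i 1 + Finsupp.single j 1) := by
  have hcard : Multiset.card (Finsupp.toMultiset d) ≤ 2 := by
    rw [Finsupp.card_toMultiset]; exact hd
  interval_cases hc : Multiset.card (Finsupp.toMultiset d)
  · left
    apply finsupp_inj
    rw [Multiset.card_eq_zero.mp hc, Finsupp.toMultiset_zero]
  · right; left
    obtain ⟨a, ha⟩ := Multiset.card_eq_one.mp hc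
    exact ⟨a, finsupp_inj _ _ (by rw [ha, Finsupp.toMultiset_single, one_nsmul])⟩
  · right; right
    obtain ⟨a, b, hab⟩ := Multiset.card_eq_two.mp hc
    refine ⟨a, b, finsupp_inj _ _ ?_⟩
    rw [hab, Finsupp.toMultiset_add, Finsupp.toMultiset_single, Finsupp.toMultiset_single,
      one_nsmul, one_nsmul]
    rfl

private def GoodRep {m : ℕ} (p : MvPolynomial (Fin m) ℝ) : Prop :=
  ∃ (B : (Fin m → ℝ) →ₗ[ℝ] (Fin m → ℝ) →ₗ[ℝ] ℝ) (L : (Fin m → ℝ) →ₗ[ℝ] ℝ) (c : ℝ),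
    ∀ x, eval x p = B x x + L x + c

private lemma goodRep_add {m : ℕ} {p q : MvPolynomial (Fin m) ℝ}
    (hp : GoodRep p) (hq : GoodRep q) : GoodRep (p + q) := by
  obtain ⟨B1, L1, c1, h1⟩ := hp
  obtain ⟨B2, L2, c2, h2⟩ := hq
  refine ⟨B1 + B2, L1 + L2, c1 + c2, fun x => ?_⟩
  simp [h1, h2]; ring

private lemma goodRep_monomial {m : ℕ} (d : Fin m →₀ ℕ) (c : ℝ)
    (hd : (d.sum fun _ e => e) ≤ 2) : GoodRep (monomial d c) := by
  rcases deg_classify d hd with h0 | ⟨i, hi⟩ | ⟨i, j, hij⟩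
  · refine ⟨0, 0, c, fun x => ?_⟩
    subst h0; simp
  · refine ⟨0, c • LinearMap.proj i, 0, fun x => ?_⟩
    subst hi
    simp [eval_monomial, Finsupp.prod_single_index]
  · refine ⟨LinearMap.mk₂ ℝ (fun x y => c * (x i * y j))
      (fun a b n => by simp [Pi.add_apply]; ring)
      (fun r a n => by simp [Pi.smul_apply, smul_eq_mul]; ring)
      (fun a n1 n2 => by simp [Pi.add_apply]; ring)
      (fun r a n => by simp [Pi.smul_apply, smul_eq_mul]; ring), 0, 0, fun x => ?_⟩
    subst hij
    rw [eval_monomial, Finsupp.prod_add_index (by simp) (by intros; rw [pow_add]),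
      Finsupp.prod_single_index (by simp), Finsupp.prod_single_index (by simp)]
    simp [LinearMap.mk₂]

private lemma quad_rep {m : ℕ} (p : MvPolynomial (Fin m) ℝ) (hp : p.totalDegree ≤ 2) :
    GoodRep p := by
  rw [← support_sum_monomial_coeff p]
  apply Finset.sum_induction _ GoodRep (fun a b => goodRep_add)
  · exact ⟨0, 0, 0, fun x => by simp⟩
  · intro d hd
    exact goodRep_monomial d _ (le_trans (le_totalDegree hd) hp)


private lemma dines_root (u0 v0 a b : ℝ) (ha : 0 < a) (hb : 0 < b) :
    ∃ t, (a + t*u0)*(b + t*v0) - t^2 = 0 := by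
  by_cases hk : u0 * v0 - 1 = 0
  · have hc : a * v0 + b * u0 ≠ 0 := by
      intro hc0
      have h2 : a*(u0*v0 - 1) + (a * v0 + b * u0)*u0 = 0 := by rw [hk, hc0]; ring
      nlinarith [sq_nonneg u0]
    refine ⟨-(a*b)/(a*v0 + b*u0), ?_⟩
    have ht1c : -(a*b)/(a*v0 + b*u0) * (a*v0 + b*u0) = -(a*b) := div_mul_cancel₀ _ hc
    linear_combination ht1c + (-(a*b)/(a*v0 + b*u0))^2 * hk
  · have hdpos : 0 ≤ (a*v0 + b*u0)^2 - 4*(u0*v0 - 1)*(a*b) := by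
      nlinarith [sq_nonneg (a*v0 - b*u0)]
    obtain ⟨s, hsq⟩ : ∃ s : ℝ, s^2 = (a*v0 + b*u0)^2 - 4*(u0*v0 - 1)*(a*b) :=
      ⟨Real.sqrt _, Real.sq_sqrt hdpos⟩
    have h2k : (2*(u0*v0 - 1)) ≠ 0 := by
      intro h; apply hk; linarith
    obtain ⟨t1, ht1k⟩ : ∃ t1 : ℝ, t1 * (2*(u0*v0 - 1)) = -(a*v0 + b*u0) + s :=
      ⟨_, div_mul_cancel₀ _ h2k⟩
    refine ⟨t1, ?_⟩
    have key : (4*(u0*v0-1)) * ((a + t1*u0)*(b + t1*v0) - t1^2) = 0 := by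
      linear_combination (2*(u0*v0-1)*t1 + (a*v0 + b*u0) + s) * ht1k + hsq
    rcases mul_eq_zero.mp key with h | h
    · exact absurd (by linarith : u0*v0 - 1 = 0) hk
    · exact h

private lemma dines_key_nondeg (Fy Gy Fz Gz sF sG a b u0 v0 : ℝ) (ha : 0 < a) (hb : 0 < b)
    (idF : u0 * Fy + v0 * Fz = -sF) (idG : u0 * Gy + v0 * Gz = -sG) :
    ∃ α β : ℝ, α^2 * Fy + α*β*sF + β^2*Fz = a*Fy + b*Fz ∧
               α^2 * Gy + α*β*sG + β^2*Gz = a*Gy + b*Gz := by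
  obtain ⟨t1, ht1⟩ := dines_root u0 v0 a b ha hb
  have hgood : ∀ t, (a + t*u0)*(b + t*v0) - t^2 = 0 → 0 ≤ a + t*u0 →
      0 ≤ a + t*u0 ∧ 0 ≤ b + t*v0 := by
    intro t ht hA
    refine ⟨hA, ?_⟩
    rcases eq_or_lt_of_le hA with hA0 | hA0
    · exfalso
      have h1 : t^2 = (a + t*u0)*(b + t*v0) := by linarith
      rw [← hA0, zero_mul] at h1
      have ht0 : t = 0 := by
        have := sq_eq_zero_iff.mp h1
        exact this
      rw [ht0] at hA0
      simp at hA0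
      linarith
    · nlinarith [sq_nonneg t]
  obtain ⟨t2, hroot, hA, hB⟩ : ∃ t, (a + t*u0)*(b + t*v0) - t^2 = 0 ∧
      0 ≤ a + t*u0 ∧ 0 ≤ b + t*v0 := by
    by_cases hA1 : 0 ≤ a + t1*u0
    · obtain ⟨h1, h2⟩ := hgood t1 ht1 hA1
      exact ⟨t1, ht1, h1, h2⟩
    · push_neg at hA1
      have hu0ne : u0 ≠ 0 := by
        intro h; rw [h] at hA1; simp at hA1; linarith
      have ht0A : a + (-a/u0) * u0 = 0 := by field_simp; ring
      have ht0ne : -a/u0 ≠ 0 := by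
        apply div_ne_zero _ hu0ne; linarith
      have hφt0 : (a + (-a/u0)*u0)*(b + (-a/u0)*v0) - (-a/u0)^2 < 0 := by
        rw [ht0A]
        have : (0:ℝ) < (-a/u0)^2 := by positivity
        linarith
      have hφ0 : (0:ℝ) < (a + 0*u0)*(b + 0*v0) - 0^2 := by simp; positivity
      have hcont : ContinuousOn (fun t => (a + t*u0)*(b + t*v0) - t^2)
          (Set.uIcc 0 (-a/u0)) := by fun_prop
      have hmem : (0:ℝ) ∈ Set.uIcc ((a + 0*u0)*(b + 0*v0) - 0^2)
          ((a + (-a/u0)*u0)*(b + (-a/u0)*v0) - (-a/u0)^2) := by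
        rw [Set.mem_uIcc]; right; exact ⟨hφt0.le, hφ0.le⟩
      obtain ⟨t2, ht2mem, ht2⟩ := intermediate_value_uIcc hcont hmem
      have hA2 : 0 ≤ a + t2 * u0 := by
        rw [Set.mem_uIcc] at ht2mem
        have hkey : a + (-a/u0) * u0 = 0 := ht0A
        rcases lt_or_gt_of_ne hu0ne with hu | hu
        · have ht0pos : 0 < -a/u0 := div_pos_of_neg_of_neg (by linarith) hu
          rcases ht2mem with ⟨_, h2⟩ | ⟨h2, _⟩
          · nlinarith
          · nlinarith
        · have ht0neg : -a/u0 < 0 := div_neg_of_neg_of_pos (by linarith) hu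
          rcases ht2mem with ⟨h2, _⟩ | ⟨_, h2⟩
          · nlinarith
          · nlinarith
      obtain ⟨h1, h2⟩ := hgood t2 ht2 hA2
      exact ⟨t2, ht2, h1, h2⟩
  have hABt : (a + t2*u0) * (b + t2*v0) = t2^2 := by linarith [hroot]
  set α := Real.sqrt (a + t2*u0) with hα
  set β := if 0 ≤ t2 then Real.sqrt (b + t2*v0) else -Real.sqrt (b + t2*v0) with hβ
  have hα2 : α^2 = a + t2*u0 := Real.sq_sqrt hA
  have hβ2 : β^2 = b + t2*v0 := by
    rw [hβ]; split
    · exact Real.sq_sqrt hB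
    · rw [neg_pow]; simp [Real.sq_sqrt hB]
  have hαβ : α * β = t2 := by
    rw [hα, hβ]
    split
    · rename_i hpos
      rw [← Real.sqrt_mul hA, hABt, Real.sqrt_sq_eq_abs, abs_of_nonneg hpos]
    · rename_i hneg
      push_neg at hneg
      rw [mul_neg, ← Real.sqrt_mul hA, hABt, Real.sqrt_sq_eq_abs, abs_of_neg hneg]
      ring
  refine ⟨α, β, ?_, ?_⟩
  · rw [hα2, hβ2, hαβ]
    linear_combination t2 * idF
  · rw [hα2, hβ2, hαβ]
    linear_combination t2 * idG

private lemma dines_key (Fy Gy Fz Gz sF sG a b : ℝ) (ha : 0 < a) (hb : 0 < b) :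
    ∃ α β : ℝ, α^2 * Fy + α*β*sF + β^2*Fz = a*Fy + b*Fz ∧
               α^2 * Gy + α*β*sG + β^2*Gz = a*Gy + b*Gz := by
  by_cases hD : Fy * Gz - Fz * Gy = 0
  · by_cases hy : Fy = 0 ∧ Gy = 0
    · refine ⟨0, Real.sqrt b, ?_, ?_⟩ <;>
        rw [Real.sq_sqrt hb.le] <;> simp [hy.1, hy.2]
    · obtain ⟨s, hsF, hsG⟩ : ∃ s : ℝ, Fz = s * Fy ∧ Gz = s * Gy := by
        by_cases hFy : Fy = 0
        · have hGy : Gy ≠ 0 := fun h => hy ⟨hFy, h⟩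
          have hFz : Fz = 0 := by
            have h1 : Fz * Gy = 0 := by linear_combination -hD + Gz * hFy
            exact (mul_eq_zero.mp h1).resolve_right hGy
          exact ⟨Gz / Gy, by rw [hFy, hFz]; ring, by field_simp⟩
        · refine ⟨Fz / Fy, by field_simp, ?_⟩
          field_simp
          linear_combination hD
      by_cases hμ0 : 0 ≤ a + b * s
      · refine ⟨Real.sqrt (a + b*s), 0, ?_, ?_⟩ <;> rw [Real.sq_sqrt hμ0]
        · linear_combination (-b) * hsF
        · linear_combination (-b) * hsG
      · push_neg at hμ0
        have hs : s < 0 := by nlinarith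
        have hms : 0 ≤ (a + b*s) / s := by
          rw [div_nonneg_iff]; right; exact ⟨hμ0.le, hs.le⟩
        have hν : ((a + b*s) / s) * s = a + b*s := div_mul_cancel₀ _ (ne_of_lt hs)
        refine ⟨0, Real.sqrt ((a + b*s)/s), ?_, ?_⟩ <;> rw [Real.sq_sqrt hms]
        · linear_combination ((a + b*s)/s - b) * hsF + Fy * hν
        · linear_combination ((a + b*s)/s - b) * hsG + Gy * hν
  · exact dines_key_nondeg Fy Gy Fz Gz sF sG a b
      ((-sF * Gz + sG * Fz) / (Fy * Gz - Fz * Gy))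
      ((-sG * Fy + sF * Gy) / (Fy * Gz - Fz * Gy)) ha hb
      (by rw [div_mul_eq_mul_div, div_mul_eq_mul_div, ← add_div, div_eq_iff hD]; ring)
      (by rw [div_mul_eq_mul_div, div_mul_eq_mul_div, ← add_div, div_eq_iff hD]; ring)


private def IsQuad {E : Type*} [AddCommGroup E] [Module ℝ E] (f : E → ℝ) : Prop :=
  ∃ B : E →ₗ[ℝ] E →ₗ[ℝ] ℝ, ∀ z, f z = B z z

private lemma IsQuad.expand {E : Type*} [AddCommGroup E] [Module ℝ E] {f : E → ℝ}
    (hf : IsQuad f) (y z : E) (s t : ℝ) :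
    f (s • y + t • z) = s^2 * f y + s*t*(f (y+z) - f y - f z) + t^2 * f z := by
  obtain ⟨B, hB⟩ := hf
  simp only [hB, map_add, map_smul, LinearMap.add_apply, LinearMap.smul_apply, smul_eq_mul]
  ring

private lemma IsQuad.zero {E : Type*} [AddCommGroup E] [Module ℝ E] {f : E → ℝ}
    (hf : IsQuad f) : f 0 = 0 := by
  obtain ⟨B, hB⟩ := hf
  simp [hB]


private lemma dines {E : Type*} [AddCommGroup E] [Module ℝ E] {F G : E → ℝ}
    (hF : IsQuad F) (hG : IsQuad G) :
    Convex ℝ {p : ℝ × ℝ | ∃ z, p = (F z, G z)} := by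
  rintro p ⟨y, rfl⟩ p' ⟨z, rfl⟩ a b ha hb hab
  rcases eq_or_lt_of_le ha with ha0 | ha0
  · refine ⟨z, ?_⟩
    have hb1 : b = 1 := by linarith
    simp [← ha0, hb1, Prod.ext_iff]
  rcases eq_or_lt_of_le hb with hb0 | hb0
  · refine ⟨y, ?_⟩
    have ha1 : a = 1 := by linarith
    simp [← hb0, ha1, Prod.ext_iff]
  obtain ⟨α, β, h1, h2⟩ := dines_key (F y) (G y) (F z) (G z)
    (F (y+z) - F y - F z) (G (y+z) - G y - G z) a b ha0 hb0
  refine ⟨α • y + β • z, ?_⟩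
  rw [hF.expand, hG.expand, h1, h2]
  rw [Prod.ext_iff]
  constructor <;> simp [smul_eq_mul] <;> ring

private lemma homog_slemma {E : Type*} [AddCommGroup E] [Module ℝ E] {F G : E → ℝ}
    (hF : IsQuad F) (hG : IsQuad G) (hslater : ∃ z0, 0 < G z0)
    (himp : ∀ z, 0 ≤ G z → 0 ≤ F z) :
    ∃ lam : ℝ, 0 ≤ lam ∧ ∀ z, lam * G z ≤ F z := by
  set M : Set (ℝ × ℝ) := {p | ∃ z, p = (G z, F z)} with hM
  have hMconv : Convex ℝ M := dines hG hF
  have hNconv : Convex ℝ ((Set.Ioi (0:ℝ)) ×ˢ (Set.Iio (0:ℝ))) :=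
    (convex_Ioi (0:ℝ)).prod (convex_Iio (0:ℝ))
  have hNopen : IsOpen ((Set.Ioi (0:ℝ)) ×ˢ (Set.Iio (0:ℝ))) := isOpen_Ioi.prod isOpen_Iio
  have hdisj : Disjoint ((Set.Ioi (0:ℝ)) ×ˢ (Set.Iio (0:ℝ))) M := by
    rw [Set.disjoint_right]
    rintro p ⟨z, rfl⟩ hp
    rw [Set.mem_prod] at hp
    exact absurd (himp z (le_of_lt hp.1)) (not_le.mpr hp.2)
  obtain ⟨f, u, hfN, hfM⟩ := geometric_hahn_banach_open hNconv hNopen hMconv hdisj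
  set c1 := f (1, 0) with hc1
  set c2 := f (0, 1) with hc2
  have hf : ∀ x y : ℝ, f (x, y) = x * c1 + y * c2 := by
    intro x y
    have hxy : ((x:ℝ), (y:ℝ)) = x • ((1:ℝ), (0:ℝ)) + y • ((0:ℝ), (1:ℝ)) := by
      simp [Prod.ext_iff]
    rw [hxy, map_add, map_smul, map_smul, smul_eq_mul, smul_eq_mul, ← hc1, ← hc2]
  have hNf : ∀ x y : ℝ, 0 < x → y < 0 → x * c1 + y * c2 < u := by
    intro x y hx hy
    have := hfN (x, y) (Set.mem_prod.mpr ⟨Set.mem_Ioi.mpr hx, Set.mem_Iio.mpr hy⟩)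
    rwa [hf] at this
  have hMf : ∀ z, u ≤ G z * c1 + F z * c2 := by
    intro z
    have := hfM (G z, F z) ⟨z, rfl⟩
    rwa [hf] at this
  have hule : u ≤ 0 := by
    have := hMf 0
    rw [hG.zero, hF.zero] at this
    linarith
  have huge : 0 ≤ u := by
    by_contra hgt
    push_neg at hgt
    by_cases hcc : 0 ≤ c1 - c2
    · have := hNf 1 (-1) one_pos (by norm_num)
      linarith
    · push_neg at hcc
      have hε : (0:ℝ) < u / (2*(c1 - c2)) := div_pos_of_neg_of_neg hgt (by linarith)
      have h2 := hNf _ _ hε (neg_lt_zero.mpr hε)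
      have hne : c1 - c2 ≠ 0 := ne_of_lt hcc
      have heq : u / (2*(c1-c2)) * c1 + -(u / (2*(c1-c2))) * c2 = u / 2 := by
        field_simp
        ring
      linarith
  have hu : u = 0 := le_antisymm hule huge
  have hc2nn : 0 ≤ c2 := by
    by_contra hc2neg
    push_neg at hc2neg
    set y := min (-1) ((u - c1)/c2) with hy
    have hy0 : y < 0 := lt_of_le_of_lt (min_le_left _ _) (by norm_num)
    have hc2ne : c2 ≠ 0 := ne_of_lt hc2neg
    have hy1 : u - c1 ≤ y * c2 := by
      have hle := min_le_right (-1) ((u - c1)/c2)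
      calc u - c1 = ((u - c1)/c2) * c2 := by field_simp
        _ ≤ y * c2 := mul_le_mul_of_nonpos_right hle hc2neg.le
    have := hNf 1 y one_pos hy0
    linarith
  have hc1np : c1 ≤ 0 := by
    by_contra hc1pos
    push_neg at hc1pos
    set x := max 1 ((u + c2)/c1) with hx
    have hx0 : (0:ℝ) < x := lt_of_lt_of_le one_pos (le_max_left _ _)
    have hx1 : u + c2 ≤ x * c1 := by
      have hle := le_max_right 1 ((u + c2)/c1)
      calc u + c2 = ((u + c2)/c1) * c1 := by field_simp
        _ ≤ x * c1 := mul_le_mul_of_nonneg_right hle hc1pos.le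
    have := hNf x (-1) hx0 (by norm_num)
    linarith
  have hc2pos : 0 < c2 := by
    rcases eq_or_lt_of_le hc2nn with hc20 | h
    · exfalso
      obtain ⟨z0, hz0⟩ := hslater
      have h1 := hNf 1 (-1) one_pos (by norm_num)
      have hc1neg : c1 < 0 := by
        rcases eq_or_lt_of_le hc1np with hc10 | h'
        · exfalso; rw [hc10, ← hc20] at h1; linarith
        · exact h'
      have h2 := hMf z0
      rw [← hc20] at h2
      nlinarith
    · exact h
  refine ⟨-c1/c2, div_nonneg (by linarith) hc2pos.le, fun z => ?_⟩
  have h2 := hMf z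
  rw [div_mul_eq_mul_div, div_le_iff₀ hc2pos]
  nlinarith



section Main

variable {m : ℕ}

private lemma mk2_quad (B : (Fin m → ℝ) →ₗ[ℝ] (Fin m → ℝ) →ₗ[ℝ] ℝ)
    (L : (Fin m → ℝ) →ₗ[ℝ] ℝ) (c : ℝ) :
    ∃ B' : ((Fin m → ℝ) × ℝ) →ₗ[ℝ] ((Fin m → ℝ) × ℝ) →ₗ[ℝ] ℝ,
      ∀ z : (Fin m → ℝ) × ℝ, B' z z = B z.1 z.1 + z.2 * L z.1 + c * z.2^2 := by
  refine ⟨LinearMap.mk₂ ℝ (fun z w => B z.1 w.1 + z.2 * L w.1 + c * (z.2 * w.2))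
    (fun z z' w => by
      simp only [Prod.fst_add, Prod.snd_add, map_add, LinearMap.add_apply]
      ring)
    (fun r z w => by
      simp only [Prod.smul_fst, Prod.smul_snd, map_smul, LinearMap.smul_apply, smul_eq_mul]
      ring)
    (fun z w w' => by
      simp only [Prod.fst_add, Prod.snd_add, map_add, LinearMap.add_apply]
      ring)
    (fun r z w => by
      simp only [Prod.smul_fst, Prod.smul_snd, map_smul, LinearMap.smul_apply, smul_eq_mul]
      ring), fun z => ?_⟩
  simp only [LinearMap.mk₂_apply]
  ring

end Main

/-- The S-lemma for quadratic polynomials in `m` variables. -/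
theorem s_lemma (m : ℕ) (h q : MvPolynomial (Fin m) ℝ)
    (hh : h.totalDegree ≤ 2) (hq : q.totalDegree ≤ 2)
    (hslater : ∃ u0 : Fin m → ℝ, 0 < eval u0 q) :
    (∀ x : Fin m → ℝ, 0 ≤ eval x q → 0 ≤ eval x h) ↔
      ∃ lam : ℝ, 0 ≤ lam ∧ ∀ x : Fin m → ℝ, lam * eval x q ≤ eval x h := by
  constructor
  · -- hard direction
    intro himp
    obtain ⟨u0, hu0⟩ := hslater
    obtain ⟨Bh, Lh, ch, hrep⟩ := quad_rep h hh
    obtain ⟨Bq, Lq, cq, qrep⟩ := quad_rep q hq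
    -- homogenizations
    set Hfun : ((Fin m → ℝ) × ℝ) → ℝ := fun z => Bh z.1 z.1 + z.2 * Lh z.1 + ch * z.2^2
      with hHfun
    set Gfun : ((Fin m → ℝ) × ℝ) → ℝ := fun z => Bq z.1 z.1 + z.2 * Lq z.1 + cq * z.2^2
      with hGfun
    have hHquad : IsQuad Hfun := by
      obtain ⟨B', hB'⟩ := mk2_quad Bh Lh ch
      exact ⟨B', fun z => (hB' z).symm⟩
    have hGquad : IsQuad Gfun := by
      obtain ⟨B', hB'⟩ := mk2_quad Bq Lq cq
      exact ⟨B', fun z => (hB' z).symm⟩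
    -- evaluation at (x, 1)
    have hH1 : ∀ x, Hfun (x, 1) = eval x h := by
      intro x; rw [hrep]; simp [hHfun]
    have hG1 : ∀ x, Gfun (x, 1) = eval x q := by
      intro x; rw [qrep]; simp [hGfun]
    -- scaling for t ≠ 0
    have hHscale : ∀ (x : Fin m → ℝ) (t : ℝ), t ≠ 0 →
        Hfun (x, t) = t^2 * eval (t⁻¹ • x) h := by
      intro x t ht
      rw [hrep]
      simp only [hHfun, map_smul, LinearMap.smul_apply, smul_eq_mul]
      field_simp
    have hGscale : ∀ (x : Fin m → ℝ) (t : ℝ), t ≠ 0 →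
        Gfun (x, t) = t^2 * eval (t⁻¹ • x) q := by
      intro x t ht
      rw [qrep]
      simp only [hGfun, map_smul, LinearMap.smul_apply, smul_eq_mul]
      field_simp
    -- line expansions
    have hline_h : ∀ (x : Fin m → ℝ) (s : ℝ), eval (u0 + s • x) h =
        Bh x x * s^2 + (Bh u0 x + Bh x u0 + Lh x) * s + eval u0 h := by
      intro x s
      rw [hrep, hrep]
      simp only [map_add, map_smul, LinearMap.add_apply, LinearMap.smul_apply, smul_eq_mul]
      ring
    have hline_q : ∀ (x : Fin m → ℝ) (s : ℝ), eval (u0 + s • x) q =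
        Bq x x * s^2 + (Bq u0 x + Bq x u0 + Lq x) * s + eval u0 q := by
      intro x s
      rw [qrep, qrep]
      simp only [map_add, map_smul, LinearMap.add_apply, LinearMap.smul_apply, smul_eq_mul]
      ring
    -- transfer of the implication to homogenizations
    have himp' : ∀ z : (Fin m → ℝ) × ℝ, 0 ≤ Gfun z → 0 ≤ Hfun z := by
      rintro ⟨x, t⟩ hz
      by_cases ht : t = 0
      · subst ht
        simp only [hHfun, hGfun, mul_zero, zero_mul, add_zero, ne_eq,
          OfNat.ofNat_ne_zero, not_false_eq_true, zero_pow] at hz ⊢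
        -- hz : 0 ≤ Bq x x ; goal : 0 ≤ Bh x x
        by_contra hneg
        push_neg at hneg
        set bq := Bq u0 x + Bq x u0 + Lq x with hbq
        set bh := Bh u0 x + Bh x u0 + Lh x with hbh
        set σ : ℝ := if 0 ≤ bq then 1 else -1 with hσ
        have hσ1 : σ = 1 ∨ σ = -1 := by
          rw [hσ]; split <;> simp
        have hσbq : ∀ s : ℝ, 0 ≤ s → 0 ≤ bq * (σ * s) := by
          intro s hs
          rw [hσ]; split
          · rename_i hbq0; rw [one_mul]; exact mul_nonneg hbq0 hs
          · rename_i hbq0; push_neg at hbq0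
            have : bq * (-1 * s) = (-bq) * s := by ring
            rw [this]
            exact mul_nonneg (by linarith) hs
        have hq_pos : ∀ s : ℝ, 0 ≤ s → 0 ≤ eval (u0 + (σ * s) • x) q := by
          intro s hs
          rw [hline_q, ← hbq]
          have h1 : Bq x x * (σ*s)^2 ≥ 0 := by
            apply mul_nonneg hz (sq_nonneg _)
          have h2 := hσbq s hs
          nlinarith [hu0]
        have hh_pos : ∀ s : ℝ, 0 ≤ s →
            0 ≤ Bh x x * s^2 + bh * (σ * s) + eval u0 h := by
          intro s hs
          have := himp _ (hq_pos s hs)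
          rw [hline_h, ← hbh] at this
          have hσsq : (σ*s)^2 = s^2 := by
            rcases hσ1 with h | h <;> rw [h] <;> ring
          rw [hσsq] at this
          linarith [this]
        -- contradiction with large s
        set s := max 1 ((1 + |bh| + |eval u0 h|) / (-(Bh x x))) with hs
        have hs1 : (1:ℝ) ≤ s := le_max_left _ _
        have hspos : (0:ℝ) < s := lt_of_lt_of_le one_pos hs1
        have hs2 : Bh x x * s ≤ -(1 + |bh| + |eval u0 h|) := by
          have hle := le_max_right 1 ((1 + |bh| + |eval u0 h|) / (-(Bh x x)))
          rw [div_le_iff₀ (by linarith : (0:ℝ) < -(Bh x x))] at hle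
      -- hle : 1 + |bh| + |eval u0 h| ≤ s * -(Bh x x)
          nlinarith
        have h0 := hh_pos s hspos.le
        have h3 : Bh x x * s^2 ≤ -(1 + |bh| + |eval u0 h|) * s := by
          calc Bh x x * s^2 = (Bh x x * s) * s := by ring
            _ ≤ -(1 + |bh| + |eval u0 h|) * s :=
                mul_le_mul_of_nonneg_right hs2 hspos.le
        have h4 : bh * (σ * s) ≤ |bh| * s := by
          have habs : bh * σ ≤ |bh| := by
            rcases hσ1 with hσe | hσe <;> rw [hσe]
            · simpa using le_abs_self bh
            · simpa using neg_le_abs bh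
          calc bh * (σ * s) = (bh * σ) * s := by ring
            _ ≤ |bh| * s := mul_le_mul_of_nonneg_right habs hspos.le
        have h5 : eval u0 h ≤ |eval u0 h| * s := by
          calc eval u0 h ≤ |eval u0 h| := le_abs_self _
            _ = |eval u0 h| * 1 := by ring
            _ ≤ |eval u0 h| * s := mul_le_mul_of_nonneg_left hs1 (abs_nonneg _)
        have h6 : -(1 + |bh| + |eval u0 h|) * s + |bh| * s + |eval u0 h| * s = -s := by
          ring
        linarith
      · -- t ≠ 0
        rw [hGscale x t ht] at hz
        rw [hHscale x t ht]
        have ht2 : (0:ℝ) < t^2 := by positivity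
        have hq' : 0 ≤ eval (t⁻¹ • x) q := nonneg_of_mul_nonneg_right hz ht2
        exact mul_nonneg ht2.le (himp _ hq')
    obtain ⟨lam, hlam, hineq⟩ := homog_slemma hHquad hGquad
      ⟨((u0, 1) : (Fin m → ℝ) × ℝ), by rw [hG1]; exact hu0⟩ himp'
    refine ⟨lam, hlam, fun x => ?_⟩
    have := hineq (x, 1)
    rwa [hG1, hH1] at this
  · rintro ⟨lam, hlam, hineq⟩ x hx
    calc (0:ℝ) ≤ lam * eval x q := mul_nonneg hlam hx
      _ ≤ eval x h := hineq x
end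

section
/- Every nonnegative real polynomial of total degree 2 in m variables is a sum of squares of real polynomials. -/
open MvPolynomial

open Finsupp in

lemma wt_zero_eq {m : ℕ} (d : Fin m →₀ ℕ) (hd : (d.sum fun _ n => n) = 0) : d = 0 := by
  ext a
  by_cases ha : a ∈ d.support
  · have := Finset.sum_eq_zero_iff.mp hd a ha
    simpa using this
  · simpa using Finsupp.notMem_support_iff.mp ha

lemma degle2_cases {m : ℕ} (d : Fin m →₀ ℕ) (hd : (d.sum fun _ n => n) ≤ 2) :
    d = 0 ∨ (∃ i, d = Finsupp.single i 1) ∨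
      ∃ i j, d = Finsupp.single i 1 + Finsupp.single j 1 := by
  classical
  rcases eq_or_ne d 0 with h0 | h0
  · exact Or.inl h0
  obtain ⟨i, hi⟩ : ∃ i, d i ≠ 0 := by
    by_contra hc; push_neg at hc; exact h0 (Finsupp.ext fun a => hc a)
  set d' : Fin m →₀ ℕ := d - Finsupp.single i 1 with hd'
  have hsplit : d = Finsupp.single i 1 + d' := by
    ext a
    simp only [hd', Finsupp.add_apply, Finsupp.tsub_apply, Finsupp.single_apply]
    by_cases hai : i = a
    · subst hai; simp; omega
    · simp [hai]
  have wt_split : (d.sum fun _ n => n) = 1 + (d'.sum fun _ n => n) := by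
    rw [hsplit, Finsupp.sum_add_index' (fun _ => rfl) (fun _ _ _ => rfl),
      Finsupp.sum_single_index rfl]
  rcases eq_or_ne d' 0 with h1 | h1
  · exact Or.inr (Or.inl ⟨i, by rw [hsplit, h1, add_zero]⟩)
  obtain ⟨j, hj⟩ : ∃ j, d' j ≠ 0 := by
    by_contra hc; push_neg at hc; exact h1 (Finsupp.ext fun a => hc a)
  set d'' : Fin m →₀ ℕ := d' - Finsupp.single j 1 with hd''
  have hsplit2 : d' = Finsupp.single j 1 + d'' := by
    ext a
    simp only [hd'', Finsupp.add_apply, Finsupp.tsub_apply, Finsupp.single_apply]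
    by_cases haj : j = a
    · subst haj; simp; omega
    · simp [haj]
  have wt_split2 : (d'.sum fun _ n => n) = 1 + (d''.sum fun _ n => n) := by
    rw [hsplit2, Finsupp.sum_add_index' (fun _ => rfl) (fun _ _ _ => rfl),
      Finsupp.sum_single_index rfl]
  have : (d''.sum fun _ n => n) = 0 := by omega
  have h2 := wt_zero_eq d'' this
  refine Or.inr (Or.inr ⟨i, j, ?_⟩)
  rw [hsplit, hsplit2, h2, add_zero]

open Finsupp in

lemma wt_single {m : ℕ} (i : Fin m) :
    ((Finsupp.single i 1 : Fin m →₀ ℕ).sum fun _ n => n) = 1 :=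
  Finsupp.sum_single_index rfl

lemma wt_pair {m : ℕ} (i j : Fin m) :
    (((Finsupp.single i 1 + Finsupp.single j 1) : Fin m →₀ ℕ).sum fun _ n => n) = 2 := by
  rw [Finsupp.sum_add_index' (fun _ => rfl) (fun _ _ _ => rfl), wt_single, wt_single]

lemma pair_eq_iff {m : ℕ} (i j k l : Fin m) :
    (Finsupp.single i 1 + Finsupp.single j 1 : Fin m →₀ ℕ)
      = Finsupp.single k 1 + Finsupp.single l 1 ↔ (i = k ∧ j = l) ∨ (i = l ∧ j = k) := by
  constructor
  · intro e
    have hk := DFunLike.congr_fun e k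
    simp only [Finsupp.add_apply, Finsupp.single_apply] at hk
    by_cases hik : i = k
    · subst hik
      have := add_left_cancel e
      exact Or.inl ⟨rfl, (Finsupp.single_left_inj one_ne_zero).mp this⟩
    · have hjk : j = k := by
        by_cases hjk : j = k
        · exact hjk
        · exfalso; simp [hik, hjk] at hk; omega
      subst hjk
      rw [add_comm (Finsupp.single i 1)] at e
      have := add_left_cancel e
      exact Or.inr ⟨(Finsupp.single_left_inj one_ne_zero).mp this, rfl⟩
  · rintro (⟨rfl, rfl⟩ | ⟨rfl, rfl⟩)
    · rfl
    · rw [add_comm]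

open Finsupp in
lemma double_ite {α : Type*} [Fintype α] [DecidableEq α] (a b : α) (g : α → α → ℝ) :
    (∑ i : α, ∑ j : α, if i = a ∧ j = b then g i j else 0) = g a b := by
  rw [Finset.sum_eq_single a]
  · simp [ite_and, Finset.sum_ite_eq']
  · intro i _ hia
    simp [hia]
  · simp

lemma quad_decomp {m : ℕ} (h : MvPolynomial (Fin m) ℝ) (hdeg : h.totalDegree ≤ 2) :
    h = C (coeff 0 h) + (∑ i, C (coeff (Finsupp.single i 1) h) * X i)
      + ∑ i : Fin m, ∑ j : Fin m,
          C (coeff (Finsupp.single i 1 + Finsupp.single j 1) h * (if i = j then 1 else 1/2))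
            * (X i * X j) := by
  classical
  have hXX : ∀ (a : ℝ) (i j : Fin m), C a * (X i * X j)
      = monomial (Finsupp.single i 1 + Finsupp.single j 1) a := by
    intro a i j
    rw [show (X i : MvPolynomial (Fin m) ℝ) = monomial (Finsupp.single i 1) 1 from rfl,
      show (X j : MvPolynomial (Fin m) ℝ) = monomial (Finsupp.single j 1) 1 from rfl,
      monomial_mul, C_mul_monomial]
    norm_num
  ext d
  simp only [coeff_add, coeff_sum, coeff_C_mul, coeff_X', coeff_C, hXX, coeff_monomial]
  have hsingle_ne_zero : ∀ i : Fin m, (Finsupp.single i 1 : Fin m →₀ ℕ) ≠ 0 := by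
    intro i e
    have := wt_single i
    rw [e] at this
    simp [Finsupp.sum_zero_index] at this
  have hpair_ne_zero : ∀ i j : Fin m,
      (Finsupp.single i 1 + Finsupp.single j 1 : Fin m →₀ ℕ) ≠ 0 := by
    intro i j e
    have := wt_pair i j
    rw [e] at this
    simp [Finsupp.sum_zero_index] at this
  have hpair_ne_single : ∀ i j k : Fin m,
      (Finsupp.single i 1 + Finsupp.single j 1 : Fin m →₀ ℕ) ≠ Finsupp.single k 1 := by
    intro i j k e
    have h1 := wt_pair i j
    rw [e, wt_single] at h1
    omega
  by_cases hw : (d.sum fun _ n => n) ≤ 2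
  · rcases degle2_cases d hw with rfl | ⟨k, rfl⟩ | ⟨k, l, rfl⟩
    · have hB : (∑ i : Fin m, coeff (Finsupp.single i 1) h
          * if (Finsupp.single i 1 : Fin m →₀ ℕ) = 0 then (1:ℝ) else 0) = 0 :=
        Finset.sum_eq_zero fun i _ => by rw [if_neg (hsingle_ne_zero i), mul_zero]
      have hC : (∑ i : Fin m, ∑ j : Fin m,
          if (Finsupp.single i 1 + Finsupp.single j 1 : Fin m →₀ ℕ) = 0
          then coeff (Finsupp.single i 1 + Finsupp.single j 1) h * (if i = j then (1:ℝ) else 1/2)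
          else 0) = 0 :=
        Finset.sum_eq_zero fun i _ => Finset.sum_eq_zero fun j _ => if_neg (hpair_ne_zero i j)
      rw [hB, hC, if_pos rfl]
      ring
    · have hB : (∑ i : Fin m, coeff (Finsupp.single i 1) h
          * if (Finsupp.single i 1 : Fin m →₀ ℕ) = Finsupp.single k 1 then (1:ℝ) else 0)
          = coeff (Finsupp.single k 1) h := by
        have e1 : ∀ i : Fin m, (coeff (Finsupp.single i 1) h
            * if (Finsupp.single i 1 : Fin m →₀ ℕ) = Finsupp.single k 1 then (1:ℝ) else 0)
            = if i = k then coeff (Finsupp.single i 1) h else 0 := by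
          intro i
          by_cases hik : i = k
          · subst hik; simp
          · rw [if_neg hik, if_neg, mul_zero]
            rw [Finsupp.single_left_inj (one_ne_zero (α := ℕ))]
            exact hik
        simp only [e1, Finset.sum_ite_eq' Finset.univ k, Finset.mem_univ, if_pos]
      have hC : (∑ i : Fin m, ∑ j : Fin m,
          if (Finsupp.single i 1 + Finsupp.single j 1 : Fin m →₀ ℕ) = Finsupp.single k 1
          then coeff (Finsupp.single i 1 + Finsupp.single j 1) h * (if i = j then (1:ℝ) else 1/2)
          else 0) = 0 :=
        Finset.sum_eq_zero fun i _ => Finset.sum_eq_zero fun j _ => if_neg (hpair_ne_single i j k)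
      have hA : (if (0 : Fin m →₀ ℕ) = Finsupp.single k 1 then coeff 0 h else 0) = 0 :=
        if_neg fun e => hsingle_ne_zero k e.symm
      rw [hA, hB, hC]
      ring
    · have hB : (∑ i : Fin m, coeff (Finsupp.single i 1) h
          * if (Finsupp.single i 1 : Fin m →₀ ℕ) = Finsupp.single k 1 + Finsupp.single l 1
            then (1:ℝ) else 0) = 0 :=
        Finset.sum_eq_zero fun i _ => by
          rw [if_neg fun e => hpair_ne_single k l i e.symm, mul_zero]
      have hC : (∑ i : Fin m, ∑ j : Fin m,
          if (Finsupp.single i 1 + Finsupp.single j 1 : Fin m →₀ ℕ)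
            = Finsupp.single k 1 + Finsupp.single l 1
          then coeff (Finsupp.single i 1 + Finsupp.single j 1) h * (if i = j then (1:ℝ) else 1/2)
          else 0) = coeff (Finsupp.single k 1 + Finsupp.single l 1) h := by
        have key : ∀ i j : Fin m,
            (if (Finsupp.single i 1 + Finsupp.single j 1 : Fin m →₀ ℕ)
              = Finsupp.single k 1 + Finsupp.single l 1
            then coeff (Finsupp.single i 1 + Finsupp.single j 1) h * (if i = j then (1:ℝ) else 1/2)
            else 0)
            = (if (i = k ∧ j = l) ∨ (i = l ∧ j = k)
              then coeff (Finsupp.single i 1 + Finsupp.single j 1) h * (if i = j then (1:ℝ) else 1/2)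
              else 0) := by
          intro i j
          congr 1
          · exact propext (pair_eq_iff i j k l)
        simp only [key]
        by_cases hkl : k = l
        · subst hkl
          simp only [or_self]
          rw [double_ite k k (fun i j => coeff (Finsupp.single i 1 + Finsupp.single j 1) h
            * (if i = j then (1:ℝ) else 1/2))]
          simp
        · have split : ∀ i j : Fin m,
              (if (i = k ∧ j = l) ∨ (i = l ∧ j = k)
                then coeff (Finsupp.single i 1 + Finsupp.single j 1) h * (if i = j then (1:ℝ) else 1/2)
                else 0)
              = (if i = k ∧ j = l
                  then coeff (Finsupp.single i 1 + Finsupp.single j 1) h * (if i = j then (1:ℝ) else 1/2)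
                  else 0)
                + (if i = l ∧ j = k
                  then coeff (Finsupp.single i 1 + Finsupp.single j 1) h * (if i = j then (1:ℝ) else 1/2)
                  else 0) := by
            intro i j
            by_cases h1 : i = k ∧ j = l <;> by_cases h2 : i = l ∧ j = k
            · exact absurd (h1.1.symm.trans h2.1) hkl
            · rw [if_pos (Or.inl h1), if_pos h1, if_neg h2, add_zero]
            · rw [if_pos (Or.inr h2), if_neg h1, if_pos h2, zero_add]
            · rw [if_neg (by tauto), if_neg h1, if_neg h2, add_zero]
          simp only [split, Finset.sum_add_distrib]
          rw [double_ite k l (fun i j => coeff (Finsupp.single i 1 + Finsupp.single j 1) h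
            * (if i = j then (1:ℝ) else 1/2)),
            double_ite l k (fun i j => coeff (Finsupp.single i 1 + Finsupp.single j 1) h
            * (if i = j then (1:ℝ) else 1/2))]
          rw [if_neg hkl, if_neg (Ne.symm hkl), add_comm (Finsupp.single l 1)]
          ring
      have hA : (if (0 : Fin m →₀ ℕ) = Finsupp.single k 1 + Finsupp.single l 1
          then coeff 0 h else 0) = 0 :=
        if_neg fun e => hpair_ne_zero k l e.symm
      rw [hA, hB, hC]
      ring
  · push_neg at hw
    have hc : coeff d h = 0 := by
      apply coeff_eq_zero_of_totalDegree_lt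
      calc h.totalDegree ≤ 2 := hdeg
        _ < _ := hw
    have hA : (if (0 : Fin m →₀ ℕ) = d then coeff 0 h else 0) = 0 := by
      rw [if_neg]
      intro e
      rw [← e] at hw
      simp [Finsupp.sum_zero_index] at hw
    have hB : (∑ i : Fin m, coeff (Finsupp.single i 1) h
        * if (Finsupp.single i 1 : Fin m →₀ ℕ) = d then (1:ℝ) else 0) = 0 := by
      refine Finset.sum_eq_zero fun i _ => ?_
      rw [if_neg fun e => ?_, mul_zero]
      rw [← e, wt_single] at hw
      omega
    have hC : (∑ i : Fin m, ∑ j : Fin m,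
        if (Finsupp.single i 1 + Finsupp.single j 1 : Fin m →₀ ℕ) = d
        then coeff (Finsupp.single i 1 + Finsupp.single j 1) h * (if i = j then (1:ℝ) else 1/2)
        else 0) = 0 := by
      refine Finset.sum_eq_zero fun i _ => Finset.sum_eq_zero fun j _ => if_neg fun e => ?_
      rw [← e, wt_pair] at hw
      omega
    rw [hc, hA, hB, hC]
    ring

/-- Hilbert: every nonnegative polynomial of total degree 2 in `m` variables is a
sum of squares of polynomials. -/
theorem quadratic_nonneg_isSumSq (m : ℕ) (h : MvPolynomial (Fin m) ℝ)
    (hdeg : h.totalDegree = 2) (hnn : ∀ x : Fin m → ℝ, 0 ≤ eval x h) :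
    IsSumSq h := by
  classical
  set c : ℝ := coeff 0 h with hc
  set b : Fin m → ℝ := fun i => coeff (Finsupp.single i 1) h with hb
  set a : Fin m → Fin m → ℝ := fun i j =>
    coeff (Finsupp.single i 1 + Finsupp.single j 1) h * (if i = j then 1 else 1/2) with ha
  have hdec := quad_decomp h (le_of_eq hdeg)
  have heval : ∀ x : Fin m → ℝ,
      eval x h = c + (∑ i, b i * x i) + ∑ i, ∑ j, a i j * (x i * x j) := by
    intro x
    conv_lhs => rw [hdec]
    simp only [map_add, map_sum, map_mul, eval_C, eval_X]
    rfl
  have asymm : ∀ i j, a i j = a j i := by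
    intro i j
    by_cases hij : i = j
    · rw [hij]
    · simp only [ha, if_neg hij, if_neg (Ne.symm hij), add_comm (Finsupp.single i 1)]
  -- the (m+1)×(m+1) matrix
  set M : Matrix (Fin (m+1)) (Fin (m+1)) ℝ :=
    Matrix.of (Fin.cons (Fin.cons c (fun j => b j / 2))
      (fun i => Fin.cons (b i / 2) (a i))) with hM
  have key : ∀ (t : ℝ) (x : Fin m → ℝ),
      dotProduct (Fin.cons t x) (M.mulVec (Fin.cons t x))
        = c * t^2 + t * (∑ i, b i * x i) + ∑ i, ∑ j, a i j * (x i * x j) := by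
    intro t x
    simp only [dotProduct, Matrix.mulVec, Fin.sum_univ_succ, Fin.cons_zero, Fin.cons_succ,
      hM, Matrix.of_apply]
    have inner : ∀ i, x i * (b i / 2 * t + ∑ j, a i j * x j)
        = t * (b i / 2 * x i) + ∑ j, a i j * (x i * x j) := by
      intro i
      rw [mul_add, Finset.mul_sum]
      congr 1
      · ring
      · exact Finset.sum_congr rfl fun j _ => by ring
    have comb : ((∑ i, t * (b i / 2 * x i)) + ∑ i, t * (b i / 2 * x i))
        = ∑ i, t * (b i * x i) := by
      rw [← Finset.sum_add_distrib]
      exact Finset.sum_congr rfl fun i _ => by ring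
    have hg : (∑ i, b i * x i) = ∑ i, b i * x i := rfl
    rw [mul_add, Finset.mul_sum]
    simp only [inner, Finset.sum_add_distrib]
    rw [show t * ∑ i, b i * x i = ∑ i, t * (b i * x i) from by
      rw [Finset.mul_sum]]
    linear_combination comb
  have entry_symm : ∀ i j, M j i = M i j := by
    intro i j
    refine Fin.cases ?_ (fun i' => ?_) i
    · refine Fin.cases ?_ (fun j' => ?_) j
      · rfl
      · simp [hM]
    · refine Fin.cases ?_ (fun j' => ?_) j
      · simp [hM]
      · simp [hM, asymm i' j']
  have hherm : M.IsHermitian :=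
    Matrix.ext fun i j => by
      rw [Matrix.conjTranspose_apply, star_trivial, entry_symm]
  have hPSD : M.PosSemidef := by
    refine Matrix.PosSemidef.of_dotProduct_mulVec_nonneg hherm fun v => ?_
    have hsv : star v = v := star_trivial v
    rw [hsv]
    have hv : v = Fin.cons (v 0) (Fin.tail v) := (Fin.cons_self_tail v).symm
    set t : ℝ := v 0 with ht
    set w : Fin m → ℝ := Fin.tail v with hw
    rw [hv, key t w]
    set B : ℝ := ∑ i, b i * w i with hB
    set S : ℝ := ∑ i, ∑ j, a i j * (w i * w j) with hS
    have claim : ∀ u : ℝ, u ≠ 0 → 0 ≤ c * u^2 + u * B + S := by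
      intro u hu
      have h1 := hnn (fun i => w i / u)
      rw [heval] at h1
      have y : u^2 * (∑ i, b i * (w i / u)) = u * B := by
        rw [hB, Finset.mul_sum, Finset.mul_sum]
        exact Finset.sum_congr rfl fun i _ => by field_simp
      have z : u^2 * (∑ i, ∑ j, a i j * (w i / u * (w j / u))) = S := by
        rw [hS, Finset.mul_sum]
        refine Finset.sum_congr rfl fun i _ => ?_
        rw [Finset.mul_sum]
        exact Finset.sum_congr rfl fun j _ => by field_simp
      have he : u^2 * (c + (∑ i, b i * (w i / u))
          + ∑ i, ∑ j, a i j * (w i / u * (w j / u))) = c * u^2 + u * B + S := by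
        rw [mul_add, mul_add, y, z]
        ring
      calc (0:ℝ) ≤ u^2 * (c + (∑ i, b i * (w i / u))
            + ∑ i, ∑ j, a i j * (w i / u * (w j / u))) := mul_nonneg (sq_nonneg u) h1
        _ = _ := he
    by_cases htz : t = 0
    · rw [htz]
      have hcont : Continuous fun u : ℝ => c * u^2 + u * B + S :=
        ((continuous_const.mul (continuous_pow 2)).add
          (continuous_id.mul continuous_const)).add continuous_const
      have htnd : Filter.Tendsto (fun u : ℝ => c * u^2 + u * B + S)
          (nhdsWithin 0 (Set.Ioi 0)) (nhds (c * 0^2 + 0 * B + S)) :=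
        (hcont.tendsto 0).mono_left nhdsWithin_le_nhds
      have hev : ∀ᶠ u in nhdsWithin (0:ℝ) (Set.Ioi 0), 0 ≤ c * u^2 + u * B + S := by
        filter_upwards [self_mem_nhdsWithin] with u hu
        exact claim u (ne_of_gt hu)
      have := ge_of_tendsto htnd hev
      calc (0:ℝ) ≤ c * 0^2 + 0 * B + S := this
        _ = _ := by norm_num
    · exact claim t htz
  obtain ⟨B2, hB2⟩ : ∃ B : Matrix (Fin (m+1)) (Fin (m+1)) ℝ, M = Matrix.conjTranspose B * B := by
    open scoped MatrixOrder in exact CStarAlgebra.nonneg_iff_eq_star_mul_self.mp hPSD.nonneg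
  set p : Fin (m+1) → MvPolynomial (Fin m) ℝ :=
    fun i => C (B2 i 0) + ∑ j, C (B2 i (Fin.succ j)) * X j with hp
  have hfin : h = ∑ i, p i * p i := by
    apply MvPolynomial.funext
    intro x
    rw [heval x, map_sum]
    set v : Fin (m+1) → ℝ := Fin.cons (1:ℝ) x with hv
    have hev : ∀ i, eval x (p i) = Matrix.mulVec B2 v i := by
      intro i
      simp only [hp, map_add, map_sum, map_mul, eval_C, eval_X]
      rw [show Matrix.mulVec B2 v i = ∑ j, B2 i j * v j from rfl, Fin.sum_univ_succ]
      simp [hv]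
    simp only [map_mul, hev]
    have hct : Matrix.conjTranspose B2 = Matrix.transpose B2 := Matrix.ext fun i j => by
      rw [Matrix.conjTranspose_apply, star_trivial, Matrix.transpose_apply]
    have e2 : (∑ i, Matrix.mulVec B2 v i * Matrix.mulVec B2 v i)
        = dotProduct v (M.mulVec v) := by
      rw [hB2, hct, ← Matrix.mulVec_mulVec, Matrix.dotProduct_mulVec, Matrix.vecMul_transpose]
      rfl
    rw [e2, hv, key 1 x]
    ring
  rw [hfin]
  exact IsSumSq.sum_mul_self _ _
end

section
/- Let h : ℝ^m → ℝ be a convex polynomial. If the Hessian ∇²h(u') is positive definite at some point u' ∈ ℝ^m, then h is coercive (all sublevel sets {x : h(x) ≤ α} are compact) and strictly convex on ℝ^m. -/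
open MvPolynomial


noncomputable def lineQ {m : ℕ} (p : MvPolynomial (Fin m) ℝ) (x v : Fin m → ℝ) : Polynomial ℝ :=
  MvPolynomial.aeval (fun i => Polynomial.C (x i) + Polynomial.C (v i) * Polynomial.X) p

theorem eval_lineQ {m : ℕ} (p : MvPolynomial (Fin m) ℝ) (x v : Fin m → ℝ) (t : ℝ) :
    Polynomial.eval t (lineQ p x v) = eval (x + t • v) p := by
  have h1 : Polynomial.eval t (lineQ p x v) = Polynomial.aeval t (lineQ p x v) := by
    rw [Polynomial.coe_aeval_eq_eval]
  rw [h1, lineQ, MvPolynomial.comp_aeval_apply]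
  have h3 : (fun i => Polynomial.aeval t (Polynomial.C (x i) + Polynomial.C (v i) * Polynomial.X))
      = x + t • v := by
    funext i
    simp only [map_add, map_mul, Polynomial.aeval_C, Polynomial.aeval_X, Pi.add_apply,
      Pi.smul_apply, smul_eq_mul, Algebra.algebraMap_self, RingHom.id_apply]
    ring
  rw [h3, MvPolynomial.aeval_eq_eval₂Hom, Algebra.algebraMap_self]
  rfl

theorem derivative_aeval_line {m : ℕ} (p : MvPolynomial (Fin m) ℝ) (g : Fin m → Polynomial ℝ) :
    Polynomial.derivative (MvPolynomial.aeval g p) =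
      ∑ i, MvPolynomial.aeval g (pderiv i p) * Polynomial.derivative (g i) := by
  induction p using MvPolynomial.induction_on with
  | C a => simp
  | add p q hp hq => simp [hp, hq, map_add, add_mul, Finset.sum_add_distrib]
  | mul_X p n hp =>
      simp only [map_mul, MvPolynomial.aeval_X, Polynomial.derivative_mul, hp, pderiv_mul,
        map_add, pderiv_X, add_mul, Finset.sum_add_distrib, Finset.sum_mul]
      refine congrArg₂ (· + ·) ?_ ?_
      · exact Finset.sum_congr rfl fun i _ => by ring
      · simp [Pi.single_apply, Finset.sum_ite_eq, mul_comm]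

theorem derivative_lineQ {m : ℕ} (p : MvPolynomial (Fin m) ℝ) (x v : Fin m → ℝ) :
    Polynomial.derivative (lineQ p x v) = ∑ i, Polynomial.C (v i) * lineQ (pderiv i p) x v := by
  rw [lineQ, derivative_aeval_line]
  refine Finset.sum_congr rfl fun i _ => ?_
  rw [lineQ]
  simp only [Polynomial.derivative_add, Polynomial.derivative_C, Polynomial.derivative_mul,
    Polynomial.derivative_X, zero_add, mul_one, zero_mul, add_zero, mul_zero]
  rw [mul_comm]

theorem secondDeriv_lineQ {m : ℕ} (p : MvPolynomial (Fin m) ℝ) (x v : Fin m → ℝ) :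
    Polynomial.eval 0 (Polynomial.derivative (Polynomial.derivative (lineQ p x v))) =
      ∑ i, ∑ j, v i * (v j * eval x (pderiv j (pderiv i p))) := by
  rw [derivative_lineQ, map_sum]
  rw [Polynomial.eval_finset_sum]
  refine Finset.sum_congr rfl fun i _ => ?_
  rw [Polynomial.derivative_mul, Polynomial.derivative_C, zero_mul, zero_add, derivative_lineQ,
    Finset.mul_sum, Polynomial.eval_finset_sum]
  refine Finset.sum_congr rfl fun j _ => ?_
  rw [Polynomial.eval_mul, Polynomial.eval_mul, Polynomial.eval_C, Polynomial.eval_C, eval_lineQ]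
  simp

theorem convexOn_affine (c d : ℝ) : ConvexOn ℝ Set.univ (fun t : ℝ => c * t + d) := by
  refine ⟨convex_univ, fun s _ t _ a b ha hb hab => ?_⟩
  simp only [smul_eq_mul]
  apply le_of_eq
  linear_combination (-d) * hab

theorem convexOn_line {m : ℕ} (h : MvPolynomial (Fin m) ℝ)
    (hconv : ConvexOn ℝ Set.univ (fun x : Fin m → ℝ => eval x h)) (x v : Fin m → ℝ) :
    ConvexOn ℝ Set.univ (fun t : ℝ => eval (x + t • v) h) := by
  refine ⟨convex_univ, fun s _ t _ a b ha hb hab => ?_⟩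
  have hpt : x + (a • s + b • t) • v = a • (x + s • v) + b • (x + t • v) := by
    funext i
    simp only [Pi.add_apply, Pi.smul_apply, smul_eq_mul]
    linear_combination (x i) * hab.symm
  show eval (x + (a • s + b • t) • v) h ≤ a • eval (x + s • v) h + b • eval (x + t • v) h
  rw [hpt]
  exact hconv.2 (Set.mem_univ _) (Set.mem_univ _) ha hb hab

theorem tendsto_of_convex (p : Polynomial ℝ)
    (hc : ConvexOn ℝ Set.univ fun t : ℝ => Polynomial.eval t p)
    (hd : Polynomial.derivative (Polynomial.derivative p) ≠ 0) :
    Filter.Tendsto (fun t : ℝ => Polynomial.eval t p) Filter.atTop Filter.atTop := by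
  have h2 : 2 ≤ p.natDegree := by
    by_contra hlt
    push_neg at hlt
    have h0 : (Polynomial.derivative p).natDegree = 0 := by
      have := Polynomial.natDegree_derivative_le p
      omega
    have hC := Polynomial.eq_C_of_natDegree_le_zero h0.le
    rw [hC] at hd
    simp at hd
  set a := Polynomial.eval 0 p with ha
  set b := Polynomial.eval 1 p with hb
  set L : Polynomial ℝ := Polynomial.C (b - a) * Polynomial.X + Polynomial.C a with hL
  have hp0 : p ≠ 0 := fun h0 => by rw [h0] at h2; simp at h2
  have hdegp : 1 < p.degree := by
    rw [Polynomial.degree_eq_natDegree hp0]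
    exact_mod_cast (by omega : 1 < p.natDegree)
  have hLdeg : L.degree < p.degree := lt_of_le_of_lt (Polynomial.degree_linear_le) hdegp
  have key : ∀ t : ℝ, 1 ≤ t → Polynomial.eval t L ≤ Polynomial.eval t p := by
    intro t ht
    have ht0 : 0 < t := lt_of_lt_of_le one_pos ht
    have hcomb := hc.2 (Set.mem_univ (0:ℝ)) (Set.mem_univ t)
      (show (0:ℝ) ≤ 1 - 1/t by rw [sub_nonneg, div_le_one ht0]; linarith)
      (show (0:ℝ) ≤ 1/t by positivity)
      (show (1 - 1/t) + 1/t = 1 by ring)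
    simp only [smul_eq_mul, mul_zero, zero_add] at hcomb
    have hpt : (1/t) * t = 1 := by field_simp
    rw [hpt] at hcomb
    -- hcomb : eval 1 p ≤ (1 - 1/t) * eval 0 p + (1/t) * eval t p
    have := mul_le_mul_of_nonneg_left hcomb (le_of_lt ht0)
    simp only [hL, Polynomial.eval_add, Polynomial.eval_mul, Polynomial.eval_C, Polynomial.eval_X]
    have hexp : t * ((1 - 1/t) * a + 1/t * Polynomial.eval t p)
        = (t - 1) * a + Polynomial.eval t p := by field_simp
    rw [hexp] at this
    show (Polynomial.eval 1 p - Polynomial.eval 0 p) * t + Polynomial.eval 0 p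
      ≤ Polynomial.eval t p
    rw [← ha, ← hb]
    nlinarith
  have hlead : 0 ≤ p.leadingCoeff := by
    by_contra hneg
    push_neg at hneg
    have hdsub : (p - L).degree = p.degree := Polynomial.degree_sub_eq_left_of_degree_lt hLdeg
    have hlsub : (p - L).leadingCoeff = p.leadingCoeff :=
      Polynomial.leadingCoeff_sub_of_degree_lt hLdeg
    have hbot := Polynomial.tendsto_atBot_of_leadingCoeff_nonpos (p - L)
      (by rw [hdsub]; exact lt_trans zero_lt_one hdegp) (by rw [hlsub]; exact hneg.le)
    obtain ⟨t, ht1, ht2⟩ := ((hbot.eventually (Filter.eventually_lt_atBot 0)).and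
      (Filter.eventually_ge_atTop 1)).exists
    have := key t ht2
    rw [Polynomial.eval_sub] at ht1
    linarith
  exact Polynomial.tendsto_atTop_of_leadingCoeff_nonneg p (lt_trans zero_lt_one hdegp) hlead

theorem qform_pos {m : ℕ} (h : MvPolynomial (Fin m) ℝ) (u' : Fin m → ℝ)
    (hpd : (Matrix.of fun i j : Fin m => eval u' (pderiv i (pderiv j h))).PosDef)
    (v : Fin m → ℝ) (hv : v ≠ 0) :
    0 < Polynomial.eval 0 (Polynomial.derivative (Polynomial.derivative (lineQ h u' v))) := by
  have hq := hpd.dotProduct_mulVec_pos hv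
  rw [secondDeriv_lineQ]
  have hstar : star v = v := by funext i; simp
  rw [hstar] at hq
  have heq : dotProduct v
      (Matrix.mulVec (Matrix.of fun i j : Fin m => eval u' (pderiv i (pderiv j h))) v)
      = ∑ i, ∑ j, v i * (v j * eval u' (pderiv j (pderiv i h))) := by
    conv_rhs => rw [Finset.sum_comm]
    rw [dotProduct]
    refine Finset.sum_congr rfl fun i _ => ?_
    rw [Matrix.mulVec, dotProduct, Finset.mul_sum]
    refine Finset.sum_congr rfl fun j _ => ?_
    rw [Matrix.of_apply]
    ring
  rw [heq] at hq
  exact hq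

theorem tendsto_line {m : ℕ} (h : MvPolynomial (Fin m) ℝ)
    (hconv : ConvexOn ℝ Set.univ (fun x : Fin m → ℝ => eval x h)) (u' : Fin m → ℝ)
    (hpd : (Matrix.of fun i j : Fin m => eval u' (pderiv i (pderiv j h))).PosDef)
    (v : Fin m → ℝ) (hv : v ≠ 0) :
    Filter.Tendsto (fun t : ℝ => eval (u' + t • v) h) Filter.atTop Filter.atTop := by
  have heq : (fun t : ℝ => eval (u' + t • v) h) = fun t => Polynomial.eval t (lineQ h u' v) := by
    funext t; rw [eval_lineQ]
  rw [heq]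
  apply tendsto_of_convex
  · rw [← heq]; exact convexOn_line h hconv u' v
  · intro h0
    have := qform_pos h u' hpd v hv
    rw [h0] at this; simp at this

theorem not_affine_line {m : ℕ} (h : MvPolynomial (Fin m) ℝ)
    (hconv : ConvexOn ℝ Set.univ (fun x : Fin m → ℝ => eval x h)) (u' : Fin m → ℝ)
    (hpd : (Matrix.of fun i j : Fin m => eval u' (pderiv i (pderiv j h))).PosDef)
    (w v : Fin m → ℝ) (hv : v ≠ 0) (bb cc : ℝ)
    (haff : ∀ t : ℝ, eval (w + t • v) h = cc + bb * t) : False := by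
  classical
  set z : Fin m → ℝ := (2:ℝ) • u' - w with hz
  set K : ℝ := (cc + eval z h) / 2 with hK
  have hbd : ∀ t : ℝ, eval (u' + t • v) h ≤ K + bb * t := by
    intro t
    have hmid : u' + t • v = (1/2 : ℝ) • (w + (2*t) • v) + (1/2 : ℝ) • z := by
      funext i
      simp only [Pi.add_apply, Pi.smul_apply, Pi.sub_apply, smul_eq_mul, hz]
      ring
    rw [hmid]
    have := hconv.2 (Set.mem_univ (w + (2*t) • v)) (Set.mem_univ z)
      (show (0:ℝ) ≤ 1/2 by norm_num) (show (0:ℝ) ≤ 1/2 by norm_num)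
      (show (1:ℝ)/2 + 1/2 = 1 by norm_num)
    simp only [smul_eq_mul] at this
    calc eval ((1/2 : ℝ) • (w + (2*t) • v) + (1/2 : ℝ) • z) h
        ≤ (1/2) * eval (w + (2*t) • v) h + (1/2) * eval z h := this
      _ = K + bb * t := by rw [haff (2*t), hK]; ring
  set p : Polynomial ℝ := lineQ h u' v - (Polynomial.C bb * Polynomial.X + Polynomial.C K)
    with hp
  have hple : ∀ t : ℝ, Polynomial.eval t p ≤ 0 := by
    intro t
    rw [hp]
    simp only [Polynomial.eval_sub, Polynomial.eval_add, Polynomial.eval_mul, Polynomial.eval_C,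
      Polynomial.eval_X, eval_lineQ]
    linarith [hbd t]
  have hpconv : ConvexOn ℝ Set.univ fun t : ℝ => Polynomial.eval t p := by
    have h1 := convexOn_line h hconv u' v
    have h2 := convexOn_affine (-bb) (-K)
    have h3 := h1.add h2
    have h4 : (fun t : ℝ => Polynomial.eval t p)
        = fun t : ℝ => eval (u' + t • v) h + (-bb * t + -K) := by
      funext t
      rw [hp]
      simp only [Polynomial.eval_sub, Polynomial.eval_add, Polynomial.eval_mul, Polynomial.eval_C,
        Polynomial.eval_X, eval_lineQ]
      ring
    rw [h4]
    exact h3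
  have hdd : Polynomial.derivative (Polynomial.derivative p) ≠ 0 := by
    intro h0
    have hq := qform_pos h u' hpd v hv
    have : Polynomial.derivative (Polynomial.derivative p)
        = Polynomial.derivative (Polynomial.derivative (lineQ h u' v)) := by
      rw [hp]
      simp
    rw [this] at h0
    rw [h0] at hq
    simp at hq
  have htend := tendsto_of_convex p hpconv hdd
  obtain ⟨t, ht⟩ := (htend.eventually (Filter.eventually_gt_atTop 0)).exists
  exact absurd (hple t) (not_le.2 ht)


/-- A convex polynomial whose Hessian is positive definite at some point is coercive
(all sublevel sets are compact) and strictly convex on `ℝ^m`. -/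
theorem convex_poly_posdef_hessian_coercive_strictConvex (m : ℕ)
    (h : MvPolynomial (Fin m) ℝ)
    (hconv : ConvexOn ℝ Set.univ (fun x : Fin m → ℝ => eval x h))
    (u' : Fin m → ℝ)
    (hpd : (Matrix.of fun i j : Fin m => eval u' (pderiv i (pderiv j h))).PosDef) :
    (∀ α : ℝ, IsCompact {x : Fin m → ℝ | eval x h ≤ α}) ∧
      StrictConvexOn ℝ Set.univ (fun x : Fin m → ℝ => eval x h) := by
  have hcont : Continuous fun x : Fin m → ℝ => eval x h := MvPolynomial.continuous_eval h
  constructor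
  · -- coercivity
    intro α
    apply Metric.isCompact_of_isClosed_isBounded
    · exact IsClosed.preimage hcont isClosed_Iic
    · set M : ℝ := max α (eval u' h) with hM
      have hex : ∀ v : Metric.sphere (0 : Fin m → ℝ) 1,
          ∃ T : ℝ, 1 ≤ T ∧ M < eval (u' + T • (v : Fin m → ℝ)) h := by
        intro v
        have hv0 : (v : Fin m → ℝ) ≠ 0 := by
          have hmem := v.2
          rw [mem_sphere_zero_iff_norm] at hmem
          intro h0
          rw [h0] at hmem
          simp at hmem
        have ht := tendsto_line h hconv u' hpd v hv0
        obtain ⟨T, hT1, hT2⟩ := ((ht.eventually (Filter.eventually_gt_atTop M)).and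
          (Filter.eventually_ge_atTop 1)).exists
        exact ⟨T, hT2, hT1⟩
      choose T hT1 hT2 using hex
      have hUopen : ∀ v : Metric.sphere (0 : Fin m → ℝ) 1,
          IsOpen {w : Fin m → ℝ | M < eval (u' + T v • w) h} := by
        intro v
        have hcw : Continuous fun w : Fin m → ℝ => eval (u' + T v • w) h :=
          hcont.comp (continuous_const.add (continuous_id.const_smul (T v)))
        exact isOpen_lt continuous_const hcw
      have hcover : (Metric.sphere (0 : Fin m → ℝ) 1) ⊆
          ⋃ v : Metric.sphere (0 : Fin m → ℝ) 1, {w | M < eval (u' + T v • w) h} := by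
        intro w hw
        exact Set.mem_iUnion.2 ⟨⟨w, hw⟩, hT2 ⟨w, hw⟩⟩
      obtain ⟨F, hF⟩ := (isCompact_sphere (0 : Fin m → ℝ) 1).elim_finite_subcover
        _ hUopen hcover
      obtain ⟨R0, hR0⟩ := Finset.exists_le (F.image T)
      set R : ℝ := max 1 R0 with hR
      apply Bornology.IsBounded.subset (Metric.isBounded_closedBall (x := u') (r := R))
      intro x hx
      simp only [Set.mem_setOf_eq] at hx
      rw [Metric.mem_closedBall]
      by_contra hdist
      push_neg at hdist
      set s : ℝ := dist x u' with hs
      have hRR : R0 ≤ R := le_max_right 1 R0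
      have hs1 : 1 < s := lt_of_le_of_lt (le_max_left 1 R0) hdist
      have hs0 : 0 < s := lt_trans one_pos hs1
      set w : Fin m → ℝ := s⁻¹ • (x - u') with hw
      have hwmem : w ∈ Metric.sphere (0 : Fin m → ℝ) 1 := by
        rw [mem_sphere_zero_iff_norm, hw, norm_smul, norm_inv, Real.norm_eq_abs,
          abs_of_pos hs0, ← dist_eq_norm, ← hs]
        field_simp
      obtain ⟨v, hv⟩ := Set.mem_iUnion.1 (hF hwmem)
      obtain ⟨hvF, hvU⟩ := Set.mem_iUnion.1 hv
      simp only [Set.mem_setOf_eq] at hvU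
      have hTv : T v ≤ R0 := hR0 _ (Finset.mem_image_of_mem T hvF)
      set lam : ℝ := T v / s with hlam
      have hT0 : 0 < T v := lt_of_lt_of_le one_pos (hT1 v)
      have hlam0 : 0 < lam := div_pos hT0 hs0
      have hlam1 : lam < 1 := by
        rw [hlam, div_lt_one hs0]
        calc T v ≤ R0 := hTv
          _ ≤ R := hRR
          _ < s := hdist
      have hcomb : u' + T v • w = (1 - lam) • u' + lam • x := by
        funext i
        simp only [hw, hlam, Pi.add_apply, Pi.smul_apply, Pi.sub_apply, smul_eq_mul]
        field_simp
        ring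
      have hle := hconv.2 (Set.mem_univ u') (Set.mem_univ x)
        (show (0:ℝ) ≤ 1 - lam by linarith) hlam0.le (show (1 - lam) + lam = 1 by ring)
      rw [← hcomb] at hle
      simp only [smul_eq_mul] at hle
      have hub : eval (u' + T v • w) h ≤ M := by
        have h1 : eval u' h ≤ M := le_max_right α (eval u' h)
        have h2 : eval x h ≤ M := le_trans hx (le_max_left α (eval u' h))
        calc eval (u' + T v • w) h ≤ (1 - lam) * eval u' h + lam * eval x h := hle
          _ ≤ (1 - lam) * M + lam * M := by
              apply add_le_add
              · exact mul_le_mul_of_nonneg_left h1 (by linarith)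
              · exact mul_le_mul_of_nonneg_left h2 hlam0.le
          _ = M := by ring
      linarith
  · -- strict convexity
    refine ⟨convex_univ, fun x _ y _ hxy a b ha hb hab => ?_⟩
    have hle := hconv.2 (Set.mem_univ x) (Set.mem_univ y) ha.le hb.le hab
    rcases hle.lt_or_eq with hlt | heqq
    · exact hlt
    · exfalso
      set v : Fin m → ℝ := y - x with hv
      have hvne : v ≠ 0 := sub_ne_zero.2 (Ne.symm hxy)
      have hxv : x + v = y := by funext i; simp [hv]
      have hgconv := convexOn_line h hconv x v
      have hgb : eval (x + b • v) h = a * eval x h + b * eval y h := by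
        have hpt : x + b • v = a • x + b • y := by
          funext i
          simp only [hv, Pi.add_apply, Pi.smul_apply, Pi.sub_apply, smul_eq_mul]
          linear_combination (x i) * hab.symm
        rw [hpt]
        simpa [smul_eq_mul] using heqq
      have hb1 : b < 1 := by linarith
      have hclaim : ∀ t : ℝ, 0 < t → t < 1 →
          eval (x + t • v) h = (1 - t) * eval x h + t * eval y h := by
        intro t ht0 ht1
        have hchord : eval (x + t • v) h ≤ (1 - t) * eval x h + t * eval y h := by
          have hcc := hgconv.2 (Set.mem_univ (0:ℝ)) (Set.mem_univ (1:ℝ))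
            (show (0:ℝ) ≤ 1 - t by linarith) ht0.le (show (1 - t) + t = 1 by ring)
          simpa [smul_eq_mul, hxv] using hcc
        rcases le_or_gt t b with hcase | hcase
        · set c : ℝ := (b - t) / (1 - t) with hc
          have h1t : (0:ℝ) < 1 - t := by linarith
          have hc0 : 0 ≤ c := div_nonneg (by linarith) h1t.le
          have hc1 : c < 1 := by rw [hc, div_lt_one h1t]; linarith
          have hkey : c * (1 - t) = b - t := by rw [hc, div_mul_cancel₀ _ h1t.ne']
          have h1 := hgconv.2 (Set.mem_univ t) (Set.mem_univ (1:ℝ))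
            (show (0:ℝ) ≤ 1 - c by linarith) hc0 (show (1 - c) + c = 1 by ring)
          simp only [smul_eq_mul, one_smul, hxv] at h1
          rw [show (1 - c) * t + c * 1 = b by linarith [hkey]] at h1
          rw [hgb] at h1
          have hid : (1 - c) * ((1 - t) * eval x h + t * eval y h) + c * eval y h
              = a * eval x h + b * eval y h := by
            have ha2 : a = 1 - b := by linarith
            rw [ha2]
            linear_combination (eval y h - eval x h) * hkey
          have hge : (1 - c) * ((1 - t) * eval x h + t * eval y h)
              ≤ (1 - c) * eval (x + t • v) h := by linarith
          have hgt := le_of_mul_le_mul_left hge (by linarith : (0:ℝ) < 1 - c)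
          exact le_antisymm hchord hgt
        · set c : ℝ := (t - b) / t with hc
          have hc0 : 0 ≤ c := div_nonneg (by linarith) ht0.le
          have hc1 : c < 1 := by rw [hc, div_lt_one ht0]; linarith
          have hkey : c * t = t - b := by rw [hc, div_mul_cancel₀ _ ht0.ne']
          have h1 := hgconv.2 (Set.mem_univ (0:ℝ)) (Set.mem_univ t)
            hc0 (show (0:ℝ) ≤ 1 - c by linarith) (show c + (1 - c) = 1 by ring)
          simp only [smul_eq_mul, zero_smul, add_zero] at h1
          rw [show c * 0 + (1 - c) * t = b by linarith [hkey]] at h1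
          rw [hgb] at h1
          have hid : c * eval x h + (1 - c) * ((1 - t) * eval x h + t * eval y h)
              = a * eval x h + b * eval y h := by
            have ha2 : a = 1 - b := by linarith
            rw [ha2]
            linear_combination (eval x h - eval y h) * hkey
          have hge : (1 - c) * ((1 - t) * eval x h + t * eval y h)
              ≤ (1 - c) * eval (x + t • v) h := by linarith
          have hgt := le_of_mul_le_mul_left hge (by linarith : (0:ℝ) < 1 - c)
          exact le_antisymm hchord hgt
      have hinf : {t : ℝ | Polynomial.eval t (lineQ h x v) = Polynomial.eval t
          (Polynomial.C (eval y h - eval x h) * Polynomial.X + Polynomial.C (eval x h))}.Infinite := by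
        apply Set.Infinite.mono ?_ (Set.Ioo_infinite (show (0:ℝ) < 1 by norm_num))
        intro t ht
        simp only [Set.mem_setOf_eq]
        rw [eval_lineQ]
        simp only [Polynomial.eval_add, Polynomial.eval_mul, Polynomial.eval_C, Polynomial.eval_X]
        rw [hclaim t ht.1 ht.2]
        ring
      have hPL := Polynomial.eq_of_infinite_eval_eq _ _ hinf
      have haff : ∀ t : ℝ, eval (x + t • v) h = eval x h + (eval y h - eval x h) * t := by
        intro t
        have hev := congrArg (Polynomial.eval t) hPL
        rw [eval_lineQ] at hev
        simp only [Polynomial.eval_add, Polynomial.eval_mul, Polynomial.eval_C,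
          Polynomial.eval_X] at hev
        rw [hev]
        ring
      exact not_affine_line h hconv u' hpd x v hvne (eval y h - eval x h) (eval x h) haff
end

section
/- Let h ∈ ℝ[x_1,...,x_m] be an s.o.s-convex polynomial. If h(u) = 0 and ∇h(u) = 0 for some u ∈ ℝ^m, then h is a sum of squares of polynomials. -/
set_option maxHeartbeats 1000000

open MvPolynomial

/-- A polynomial is s.o.s-convex if its Hessian matrix is `H(x)ᵀ H(x)` for some
polynomial matrix `H`. -/
def SosConvex {m : ℕ} (h : MvPolynomial (Fin m) ℝ) : Prop :=
  ∃ (r : ℕ) (H : Matrix (Fin r) (Fin m) (MvPolynomial (Fin m) ℝ)),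
    ∀ i j : Fin m, pderiv i (pderiv j h) = ∑ k : Fin r, H k i * H k j

namespace SosConvexAux

open Polynomial

noncomputable def momC (g : ℕ) : ℝ := (((g:ℝ)+1)*((g:ℝ)+2))⁻¹

lemma mom_integral (g : ℕ) : ∫ t in (0:ℝ)..1, ((1-t) * t^g) = momC g := by
  have h1 : (fun t : ℝ => (1-t) * t^g) = fun t : ℝ => t^g - t^(g+1) := by
    funext t; ring
  rw [h1, intervalIntegral.integral_sub ((by continuity : Continuous fun t : ℝ => t^_).intervalIntegrable 0 1)
    ((by continuity : Continuous fun t : ℝ => t^_).intervalIntegrable 0 1)]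
  rw [integral_pow, integral_pow]
  have h2 : ((g:ℝ)+1) ≠ 0 := by positivity
  have h3 : ((g:ℝ)+2) ≠ 0 := by positivity
  have : momC g = 1/((g:ℝ)+1) - 1/((g:ℝ)+2) := by
    unfold momC; field_simp; ring
  rw [this]
  push_cast
  norm_num
  ring

lemma hankel_psd (n : ℕ) :
    Matrix.PosSemidef (Matrix.of fun e f : Fin n => momC ((e:ℕ)+(f:ℕ))) := by
  rw [Matrix.posSemidef_iff_dotProduct_mulVec]
  constructor
  · ext e f
    simp only [Matrix.conjTranspose_apply, Matrix.of_apply, star_trivial]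
    rw [add_comm]
  · intro x
    have cont : ∀ (c : ℝ) (g : ℕ), Continuous fun t : ℝ => c * ((1-t)*t^g) := by
      intro c g; continuity
    have key : ∀ e f : Fin n, ∫ t in (0:ℝ)..1, ((x e * x f) * ((1-t)*t^((e:ℕ)+(f:ℕ))))
        = (x e * x f) * momC ((e:ℕ)+(f:ℕ)) := by
      intro e f
      rw [intervalIntegral.integral_const_mul, mom_integral]
    have expand : ∀ t : ℝ, (1-t) * (∑ e : Fin n, x e * t^(e:ℕ))^2
        = ∑ e : Fin n, ∑ f : Fin n, (x e * x f) * ((1-t)*t^((e:ℕ)+(f:ℕ))) := by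
      intro t
      rw [sq, Finset.sum_mul_sum, Finset.mul_sum]
      refine Finset.sum_congr rfl fun e _ => ?_
      rw [Finset.mul_sum]
      refine Finset.sum_congr rfl fun f _ => ?_
      rw [pow_add]; ring
    have hint : (0:ℝ) ≤ ∫ t in (0:ℝ)..1, ((1-t) * (∑ e : Fin n, x e * t^(e:ℕ))^2) := by
      apply intervalIntegral.integral_nonneg (by norm_num)
      intro t ht
      have h1 : (0:ℝ) ≤ 1 - t := by linarith [ht.2]
      positivity
    have hval : (∫ t in (0:ℝ)..1, ((1-t) * (∑ e : Fin n, x e * t^(e:ℕ))^2))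
        = ∑ e : Fin n, ∑ f : Fin n, (x e * x f) * momC ((e:ℕ)+(f:ℕ)) := by
      simp_rw [expand]
      have integ : ∀ e : Fin n, IntervalIntegrable
          (fun t : ℝ => ∑ f : Fin n, x e * x f * ((1-t)*t^((e:ℕ)+(f:ℕ))))
          MeasureTheory.volume 0 1 := by
        intro e
        refine Continuous.intervalIntegrable ?_ 0 1
        exact continuous_finset_sum _ (fun f _ => cont _ _)
      have h1 := intervalIntegral.integral_finset_sum (μ := MeasureTheory.volume) (a := (0:ℝ))
        (b := 1) (s := Finset.univ)
        (f := fun (e : Fin n) (t : ℝ) => ∑ f : Fin n, x e * x f * ((1-t)*t^((e:ℕ)+(f:ℕ))))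
        (fun e _ => integ e)
      rw [h1]
      refine Finset.sum_congr rfl fun e _ => ?_
      have h2 := intervalIntegral.integral_finset_sum (μ := MeasureTheory.volume) (a := (0:ℝ))
        (b := 1) (s := Finset.univ)
        (f := fun (f : Fin n) (t : ℝ) => x e * x f * ((1-t)*t^((e:ℕ)+(f:ℕ))))
        (fun f _ => (cont _ _).intervalIntegrable 0 1)
      rw [h2]
      exact Finset.sum_congr rfl fun f _ => key e f
    rw [hval] at hint
    simp only [star_trivial]
    refine le_of_le_of_eq hint ?_
    simp only [dotProduct, Matrix.mulVec, Matrix.of_apply, Finset.mul_sum]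
    exact Finset.sum_congr rfl fun e _ => Finset.sum_congr rfl fun f _ => by ring


variable {m : ℕ} (u : Fin m → ℝ)

noncomputable abbrev dpoly (i : Fin m) : MvPolynomial (Fin m) ℝ :=
  MvPolynomial.X i - MvPolynomial.C (u i)

noncomputable def psi : MvPolynomial (Fin m) ℝ →ₐ[ℝ] Polynomial (MvPolynomial (Fin m) ℝ) :=
  MvPolynomial.aeval fun i =>
    Polynomial.C (MvPolynomial.C (u i)) + Polynomial.X * Polynomial.C (dpoly u i)

lemma psi_X (i : Fin m) : psi u (MvPolynomial.X i)
    = Polynomial.C (MvPolynomial.C (u i)) + Polynomial.X * Polynomial.C (dpoly u i) := by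
  simp [psi]

lemma psi_C (a : ℝ) : psi u (MvPolynomial.C a) = Polynomial.C (MvPolynomial.C a) := by
  simp [psi, algebraMap_eq, Polynomial.algebraMap_apply]

lemma eval_one_psi (p : MvPolynomial (Fin m) ℝ) : Polynomial.eval 1 (psi u p) = p := by
  induction p using MvPolynomial.induction_on with
  | C a => rw [psi_C]; simp
  | add p q hp hq => rw [map_add, Polynomial.eval_add, hp, hq]
  | mul_X p i hp => rw [map_mul, Polynomial.eval_mul, hp, psi_X]; simp [dpoly]

lemma eval_zero_psi (p : MvPolynomial (Fin m) ℝ) :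
    Polynomial.eval 0 (psi u p) = MvPolynomial.C (MvPolynomial.eval u p) := by
  induction p using MvPolynomial.induction_on with
  | C a => rw [psi_C]; simp
  | add p q hp hq => rw [map_add, Polynomial.eval_add, hp, hq, map_add, map_add]
  | mul_X p i hp => rw [map_mul, Polynomial.eval_mul, hp, psi_X]; simp

lemma deriv_psi (p : MvPolynomial (Fin m) ℝ) :
    Polynomial.derivative (psi u p)
      = ∑ i : Fin m, Polynomial.C (dpoly u i) * psi u (pderiv i p) := by
  induction p using MvPolynomial.induction_on with
  | C a => simp [psi_C]
  | add p q hp hq =>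
      simp only [map_add, hp, hq, mul_add, Finset.sum_add_distrib]
  | mul_X p j hp =>
      rw [map_mul, Polynomial.derivative_mul, hp, psi_X]
      simp only [Polynomial.derivative_add, Polynomial.derivative_C,
        Polynomial.derivative_mul, Polynomial.derivative_X, Polynomial.derivative_C,
        one_mul, mul_zero, zero_add, add_zero]
      have : ∀ i : Fin m, pderiv i (p * MvPolynomial.X j)
          = pderiv i p * MvPolynomial.X j + p * (if j = i then 1 else 0) := by
        intro i
        rw [pderiv_mul]
        congr 1
        rw [pderiv_X]
        simp [Pi.single_apply]
      simp only [this, map_add, map_mul, mul_add, Finset.sum_add_distrib,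
        apply_ite (psi u), map_one, map_zero, mul_ite, mul_one, mul_zero,
        Finset.sum_ite_eq, Finset.mem_univ, if_true, Finset.sum_mul]
      rw [mul_comm ((psi u) p) (Polynomial.C (dpoly u j))]
      congr 1
      simp only [psi_X, mul_add, Finset.sum_add_distrib]
      simp only [mul_assoc]

variable {m : ℕ}

noncomputable def Lf (p : Polynomial (MvPolynomial (Fin m) ℝ)) : MvPolynomial (Fin m) ℝ :=
  p.sum fun e a => momC e • a

lemma Lf_add (p q : Polynomial (MvPolynomial (Fin m) ℝ)) : Lf (p + q) = Lf p + Lf q :=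
  Polynomial.sum_add_index p q _ (fun e => smul_zero _) (fun e a b => smul_add _ _ _)

lemma Lf_zero : Lf (0 : Polynomial (MvPolynomial (Fin m) ℝ)) = 0 :=
  Polynomial.sum_zero_index _

lemma Lf_sum {ι : Type*} (s : Finset ι) (f : ι → Polynomial (MvPolynomial (Fin m) ℝ)) :
    Lf (∑ k ∈ s, f k) = ∑ k ∈ s, Lf (f k) := by
  induction s using Finset.cons_induction with
  | empty => simp [Lf_zero]
  | cons i s his ih => rw [Finset.sum_cons, Finset.sum_cons, Lf_add, ih]

lemma Lf_monomial (e : ℕ) (a : MvPolynomial (Fin m) ℝ) :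
    Lf (Polynomial.monomial e a) = momC e • a :=
  Polynomial.sum_monomial_index a _ (smul_zero _)

lemma momC_cancel (e : ℕ) : momC e * (((e:ℝ)+2) * ((e:ℝ)+1)) = 1 := by
  have h2 : ((e:ℝ)+1) ≠ 0 := by positivity
  have h3 : ((e:ℝ)+2) ≠ 0 := by positivity
  unfold momC
  field_simp

lemma Lf_dd (g : Polynomial (MvPolynomial (Fin m) ℝ)) :
    Lf (derivative (derivative g))
      = ∑ e ∈ Finset.range (g.natDegree + 1), g.coeff (e+2) := by
  have hdeg : (derivative (derivative g)).natDegree < g.natDegree + 1 := by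
    have h1 := natDegree_derivative_le g
    have h2 := natDegree_derivative_le (derivative g)
    omega
  rw [Lf, Polynomial.sum_over_range' _ (fun n => smul_zero _) _ hdeg]
  refine Finset.sum_congr rfl fun e _ => ?_
  rw [Polynomial.coeff_derivative, Polynomial.coeff_derivative]
  have c1 : ((e+1 : ℕ) : MvPolynomial (Fin m) ℝ) + 1 = MvPolynomial.C ((e:ℝ)+2) := by
    rw [← map_natCast (MvPolynomial.C : ℝ →+* MvPolynomial (Fin m) ℝ), ← MvPolynomial.C_1,
      ← map_add]
    congr 1; push_cast; try ring
  have c2 : ((e : ℕ) : MvPolynomial (Fin m) ℝ) + 1 = MvPolynomial.C ((e:ℝ)+1) := by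
    rw [← map_natCast (MvPolynomial.C : ℝ →+* MvPolynomial (Fin m) ℝ), ← MvPolynomial.C_1,
      ← map_add]
  have he : (e + 1 + 1) = (e + 2) := by omega
  rw [c1, c2, he]
  have hx : g.coeff (e+2) * MvPolynomial.C ((e:ℝ)+2) * MvPolynomial.C ((e:ℝ)+1)
      = (((e:ℝ)+2) * ((e:ℝ)+1)) • g.coeff (e+2) := by
    rw [MvPolynomial.smul_eq_C_mul, map_mul]; ring
  rw [hx, smul_smul, momC_cancel, one_smul]

lemma Lf_sq_isSumSq (q : Polynomial (MvPolynomial (Fin m) ℝ)) : IsSumSq (Lf (q^2)) := by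
  set n := q.natDegree + 1 with hn
  have hq : q = ∑ e ∈ Finset.range n, Polynomial.monomial e (q.coeff e) :=
    q.as_sum_range' n (by omega)
  obtain ⟨B, hB⟩ : ∃ B : Matrix (Fin n) (Fin n) ℝ,
      Matrix.of (fun e f : Fin n => momC ((e:ℕ)+(f:ℕ))) = B.conjTranspose * B := by
    open scoped MatrixOrder in
    have h0 := (hankel_psd n).nonneg
    open scoped MatrixOrder in
    exact ⟨CFC.sqrt (Matrix.of fun e f : Fin n => momC ((e:ℕ)+(f:ℕ))), by
      rw [← Matrix.star_eq_conjTranspose, (CFC.sqrt_nonneg _).isSelfAdjoint.star_eq,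
        CFC.sqrt_mul_sqrt_self _ h0]⟩
  have hBent : ∀ e f : Fin n, momC ((e:ℕ)+(f:ℕ)) = ∑ l : Fin n, B l e * B l f := by
    intro e f
    have := congrFun (congrFun (congrArg Matrix.of.symm hB) e) f
    simpa [Matrix.mul_apply, Matrix.conjTranspose_apply] using this
  have key : Lf (q^2) = ∑ l : Fin n, (∑ e : Fin n, B l e • q.coeff e)
      * (∑ e : Fin n, B l e • q.coeff e) := by
    conv_lhs => rw [sq, hq, Finset.sum_mul_sum]
    rw [Lf_sum]
    simp_rw [Lf_sum, Polynomial.monomial_mul_monomial, Lf_monomial]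
    rw [← Fin.sum_univ_eq_sum_range (fun e => ∑ f ∈ Finset.range n,
      momC (e + f) • (q.coeff e * q.coeff f))]
    simp_rw [← Fin.sum_univ_eq_sum_range]
    simp_rw [hBent, Finset.sum_smul]
    have swap1 : (∑ e : Fin n, ∑ f : Fin n, ∑ l : Fin n,
          (B l e * B l f) • (q.coeff ↑e * q.coeff ↑f))
        = ∑ e : Fin n, ∑ l : Fin n, ∑ f : Fin n,
          (B l e * B l f) • (q.coeff ↑e * q.coeff ↑f) :=
      Finset.sum_congr rfl fun e _ => Finset.sum_comm
    rw [swap1, Finset.sum_comm]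
    refine Finset.sum_congr rfl fun l _ => ?_
    rw [Finset.sum_mul_sum]
    exact Finset.sum_congr rfl fun e _ => Finset.sum_congr rfl fun f _ =>
      (smul_mul_smul_comm _ _ _ _).symm
  rw [key]
  exact IsSumSq.sum_mul_self _ _

lemma isSumSq_finset_sum {R : Type*} [AddCommMonoid R] [Mul R] {ι : Type*}
    (s : Finset ι) (f : ι → R) (hf : ∀ k ∈ s, IsSumSq (f k)) :
    IsSumSq (∑ k ∈ s, f k) :=
  Finset.sum_induction f IsSumSq (fun _ _ => IsSumSq.add) IsSumSq.zero hf

end SosConvexAux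

open SosConvexAux Polynomial

/-- An s.o.s-convex polynomial vanishing together with its gradient at some point
is a sum of squares. -/
theorem sosConvex_zero_grad_isSumSq (m : ℕ) (h : MvPolynomial (Fin m) ℝ)
    (hsc : SosConvex h) (u : Fin m → ℝ) (h0 : eval u h = 0)
    (hgrad : ∀ i : Fin m, eval u (pderiv i h) = 0) :
    IsSumSq h := by
  obtain ⟨r, H, hH⟩ := hsc
  set g := psi u h with hg
  have hdd : derivative (derivative g) = ∑ k : Fin r,
      (∑ i : Fin m, Polynomial.C (dpoly u i) * psi u (H k i))^2 := by
    rw [hg, deriv_psi, map_sum]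
    simp_rw [Polynomial.derivative_mul, Polynomial.derivative_C, zero_mul, zero_add, deriv_psi]
    have hH' : ∀ i j : Fin m, pderiv j (pderiv i h) = ∑ k : Fin r, H k j * H k i :=
      fun i j => hH j i
    simp_rw [hH', map_sum, map_mul]
    have rhs_eq : ∑ k : Fin r, (∑ i : Fin m, Polynomial.C (dpoly u i) * psi u (H k i))^2
        = ∑ i : Fin m, ∑ j : Fin m, ∑ k : Fin r,
          (Polynomial.C (dpoly u i) * psi u (H k i)) *
          (Polynomial.C (dpoly u j) * psi u (H k j)) := by
      simp_rw [sq, Finset.sum_mul_sum]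
      rw [Finset.sum_comm]
      exact Finset.sum_congr rfl fun i _ => Finset.sum_comm
    rw [rhs_eq]
    simp_rw [Finset.mul_sum]
    exact Finset.sum_congr rfl fun i _ => Finset.sum_congr rfl fun j _ =>
      Finset.sum_congr rfl fun k _ => by ring
  have hc0 : g.coeff 0 = 0 := by
    rw [Polynomial.coeff_zero_eq_eval_zero, hg, eval_zero_psi, h0, map_zero]
  have hc1 : g.coeff 1 = 0 := by
    have h1 : (derivative g).coeff 0 = 0 := by
      rw [Polynomial.coeff_zero_eq_eval_zero, hg, deriv_psi, Polynomial.eval_finset_sum]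
      refine Finset.sum_eq_zero fun i _ => ?_
      rw [Polynomial.eval_mul, Polynomial.eval_C, eval_zero_psi, hgrad, map_zero, mul_zero]
    rw [Polynomial.coeff_derivative] at h1
    simpa using h1
  have hsum : h = ∑ e ∈ Finset.range (g.natDegree + 1), g.coeff (e+2) := by
    conv_lhs => rw [← eval_one_psi u h]
    rw [← hg, Polynomial.eval_eq_sum_range' (n := g.natDegree + 3) (by omega) 1]
    simp_rw [one_pow, mul_one]
    rw [Finset.sum_range_succ' _ (g.natDegree + 2), Finset.sum_range_succ' _ (g.natDegree + 1)]
    simp [hc0, hc1]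
  rw [hsum, ← Lf_dd, hdd, Lf_sum]
  exact isSumSq_finset_sum _ _ fun k _ => Lf_sq_isSumSq _
end

section
/- Let h ∈ ℝ[x]_{2d} be s.o.s-convex and let L : ℝ[x]_{2d} → ℝ be a linear functional satisfying L(1) = 1 and L(σ) ≥ 0 for every sum of squares σ of degree at most 2d. Then L(h) ≥ h(L(x_1),...,L(x_m)). -/
open MvPolynomial

namespace JensenAux

open Polynomial Matrix

noncomputable section
variable {m : ℕ}

abbrev Rm (m : ℕ) := MvPolynomial (Fin m) ℝ

def wgt (n : ℕ) : ℝ := (((n+1) * (n+2) : ℕ) : ℝ)⁻¹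

lemma integral_wgt (n : ℕ) : ∫ t in (0:ℝ)..1, ((1:ℝ)-t) * t^n = wgt n := by
  have h1 : ∀ t : ℝ, (1-t)*t^n = t^n - t^(n+1) := fun t => by ring
  simp only [h1]
  rw [intervalIntegral.integral_sub ((continuous_pow n).intervalIntegrable 0 1)
    ((continuous_pow (n+1)).intervalIntegrable 0 1), integral_pow, integral_pow]
  unfold wgt
  have h2 : ((n:ℝ)+1) ≠ 0 := by positivity
  have h3 : ((n:ℝ)+1+1) ≠ 0 := by positivity
  push_cast
  rw [one_pow, one_pow, zero_pow (by omega), zero_pow (by omega)]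
  rw [div_sub_div _ _ h2 h3]
  rw [show ((1:ℝ) - 0) * (↑n + 1 + 1) - (↑n + 1) * (1 - 0) = 1 by ring, one_div,
    show ((n:ℝ) + 1) * (↑n + 1 + 1) = (↑n + 1) * (↑n + 2) by ring]

lemma momentPSD (N : ℕ) : (Matrix.of fun i j : Fin N => wgt (i+j)).PosSemidef := by
  refine Matrix.PosSemidef.of_dotProduct_mulVec_nonneg ?_ ?_
  · ext i j
    simp only [Matrix.conjTranspose_apply, Matrix.of_apply, star_trivial]
    rw [Nat.add_comm]
  · intro x
    have key : dotProduct (star x) ((Matrix.of fun i j : Fin N => wgt (i+j)) *ᵥ x)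
        = ∑ i : Fin N, ∑ j : Fin N, x i * x j * wgt ((i:ℕ)+(j:ℕ)) := by
      simp only [dotProduct, Matrix.mulVec, Matrix.of_apply, star_trivial,
        Finset.mul_sum]
      refine Finset.sum_congr rfl fun i _ => Finset.sum_congr rfl fun j _ => by ring
    have key2 : (∑ i : Fin N, ∑ j : Fin N, x i * x j * wgt ((i:ℕ)+(j:ℕ)))
        = ∫ t in (0:ℝ)..1, ((1:ℝ)-t) * (∑ i : Fin N, x i * t^(i:ℕ))^2 := by
      have expand : ∀ t : ℝ, ((1:ℝ)-t) * (∑ i : Fin N, x i * t^(i:ℕ))^2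
          = ∑ i : Fin N, ∑ j : Fin N, x i * x j * ((1-t) * t^((i:ℕ)+(j:ℕ))) := by
        intro t
        rw [sq, Finset.sum_mul_sum, Finset.mul_sum]
        refine Finset.sum_congr rfl fun i _ => ?_
        rw [Finset.mul_sum]
        refine Finset.sum_congr rfl fun j _ => ?_
        rw [pow_add]; ring
      simp only [expand]
      rw [intervalIntegral.integral_finset_sum]
      · refine Finset.sum_congr rfl fun i _ => ?_
        rw [intervalIntegral.integral_finset_sum]
        · refine Finset.sum_congr rfl fun j _ => ?_
          rw [intervalIntegral.integral_const_mul, integral_wgt]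
        · intro j _
          exact Continuous.intervalIntegrable (by continuity) 0 1
      · intro i _
        exact Continuous.intervalIntegrable (by continuity) 0 1
    rw [key, key2]
    apply intervalIntegral.integral_nonneg zero_le_one
    intro t ht
    have h4 : (0:ℝ) ≤ 1 - t := by
      simp only [Set.mem_Icc] at ht; linarith [ht.2]
    positivity
def Lam (q : Polynomial (Rm m)) : Rm m := q.sum fun n c => wgt n • c

lemma Lam_zero : Lam (0 : Polynomial (Rm m)) = 0 := Polynomial.sum_zero_index _

lemma Lam_add (p q : Polynomial (Rm m)) : Lam (p + q) = Lam p + Lam q :=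
  Polynomial.sum_add_index p q _ (fun i => smul_zero _) (fun i a b => smul_add _ a b)

def LamHom : Polynomial (Rm m) →+ Rm m := AddMonoidHom.mk' Lam Lam_add

lemma Lam_monomial (n : ℕ) (c : Rm m) : Lam (Polynomial.monomial n c) = wgt n • c := by
  unfold Lam
  rw [Polynomial.sum_monomial_index]
  exact smul_zero _

lemma taylor_id (p : Polynomial (Rm m)) :
    p.eval 1 = p.eval 0 + (Polynomial.derivative p).eval 0
      + Lam (Polynomial.derivative (Polynomial.derivative p)) := by
  induction p using Polynomial.induction_on' with
  | add p q hp hq =>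
      simp only [map_add, Polynomial.eval_add, Lam_add, hp, hq]; ring
  | monomial n c =>
      rcases n with _ | _ | n
      · simp [Lam_zero]
      · simp [Polynomial.derivative_monomial, Lam_zero, Lam_monomial]
      · simp only [Polynomial.eval_monomial, one_pow, mul_one, Polynomial.derivative_monomial,
          Nat.add_sub_cancel, Lam_monomial]
        rw [zero_pow (by omega), zero_pow (by omega)]
        simp only [mul_zero, zero_add]
        have h1 : c * ((n+1+1 : ℕ) : Rm m) * ((n+1 : ℕ) : Rm m) = ((n+1)*(n+2) : ℕ) • c := by
          rw [mul_assoc, ← Nat.cast_mul, mul_comm c, ← nsmul_eq_mul]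
          congr 1
          ring
        rw [h1, ← Nat.cast_smul_eq_nsmul ℝ, smul_smul, wgt,
          inv_mul_cancel₀ (by positivity), one_smul]

lemma Lam_sum {ι : Type*} (s : Finset ι) (f : ι → Polynomial (Rm m)) :
    Lam (∑ i ∈ s, f i) = ∑ i ∈ s, Lam (f i) :=
  map_sum (LamHom (m := m)) f s

lemma isSumSq_Lam_sq (Q : Polynomial (Rm m)) : IsSumSq (Lam (Q * Q)) := by
  set N := Q.natDegree + 1 with hN
  obtain ⟨B, hB⟩ : ∃ B : Matrix (Fin N) (Fin N) ℝ,
      (Matrix.of fun i j : Fin N => wgt (i+j)) = Bᴴ * B := by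
    open scoped MatrixOrder in
    exact CStarAlgebra.nonneg_iff_eq_star_mul_self.mp (momentPSD N).nonneg
  have hM : ∀ i j : Fin N, wgt ((i:ℕ) + (j:ℕ)) = ∑ k : Fin N, B k i * B k j := by
    intro i j
    have h1 : (Matrix.of fun i j : Fin N => wgt ((i:ℕ)+(j:ℕ))) i j = (Bᴴ * B) i j := by
      rw [← hB]
    simpa [Matrix.mul_apply, Matrix.conjTranspose_apply] using h1
  have hQ : Q = ∑ i : Fin N, Polynomial.monomial (i:ℕ) (Q.coeff i) := by
    rw [Fin.sum_univ_eq_sum_range (fun i => Polynomial.monomial i (Q.coeff i)) N]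
    exact Q.as_sum_range
  have step : Lam (Q * Q)
      = ∑ k : Fin N, (∑ i : Fin N, B k i • Q.coeff i) * (∑ j : Fin N, B k j • Q.coeff j) := by
    conv_lhs => rw [hQ]
    rw [Finset.sum_mul_sum, Lam_sum]
    have inner : ∀ i : Fin N,
        Lam (∑ j : Fin N, Polynomial.monomial (i:ℕ) (Q.coeff i)
            * Polynomial.monomial (j:ℕ) (Q.coeff j))
        = ∑ j : Fin N, ∑ k : Fin N, (B k i • Q.coeff i) * (B k j • Q.coeff j) := by
      intro i
      rw [Lam_sum]
      refine Finset.sum_congr rfl fun j _ => ?_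
      rw [Polynomial.monomial_mul_monomial, Lam_monomial, hM i j, Finset.sum_smul]
      exact Finset.sum_congr rfl fun k _ => (smul_mul_smul_comm _ _ _ _).symm
    simp only [inner]
    have swap : ∀ i : Fin N,
        (∑ j : Fin N, ∑ k : Fin N, (B k i • Q.coeff ↑i) * (B k j • Q.coeff ↑j))
        = ∑ k : Fin N, ∑ j : Fin N, (B k i • Q.coeff ↑i) * (B k j • Q.coeff ↑j) :=
      fun _ => Finset.sum_comm
    simp only [swap]
    rw [Finset.sum_comm]
    exact Finset.sum_congr rfl fun k _ => (Finset.sum_mul_sum _ _ _ _).symm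
  rw [step]
  exact IsSumSq.sum_mul_self Finset.univ _
def psi (a : Fin m → ℝ) : Rm m →ₐ[ℝ] Polynomial (Rm m) :=
  aeval fun i => Polynomial.C (X i - MvPolynomial.C (a i)) * Polynomial.X
    + Polynomial.C (MvPolynomial.C (a i))

lemma psi_X (a : Fin m → ℝ) (i : Fin m) :
    psi a (X i) = Polynomial.C (X i - MvPolynomial.C (a i)) * Polynomial.X
      + Polynomial.C (MvPolynomial.C (a i)) := aeval_X _ i

lemma psi_C (a : Fin m → ℝ) (r : ℝ) :
    psi a (MvPolynomial.C r) = Polynomial.C (MvPolynomial.C r) := by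
  simp [psi, algHom_C]

lemma eval_one_psi (a : Fin m → ℝ) (h : Rm m) : (psi a h).eval 1 = h := by
  induction h using MvPolynomial.induction_on with
  | C r => rw [psi_C]; simp
  | add p q hp hq => simp [map_add, hp, hq]
  | mul_X p i hp => rw [_root_.map_mul, Polynomial.eval_mul, hp, psi_X]; simp

lemma eval_zero_psi (a : Fin m → ℝ) (h : Rm m) :
    (psi a h).eval 0 = MvPolynomial.C (eval a h) := by
  induction h using MvPolynomial.induction_on with
  | C r => rw [psi_C]; simp
  | add p q hp hq => simp [map_add, hp, hq]
  | mul_X p i hp => rw [_root_.map_mul, Polynomial.eval_mul, hp, psi_X]; simp [mul_comm]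

lemma deriv_psi (a : Fin m → ℝ) (h : Rm m) :
    Polynomial.derivative (psi a h)
      = ∑ i, psi a (pderiv i h) * Polynomial.C (X i - MvPolynomial.C (a i)) := by
  induction h using MvPolynomial.induction_on with
  | C r => simp [psi_C, pderiv_C]
  | add p q hp hq => simp [map_add, hp, hq, add_mul, Finset.sum_add_distrib]
  | mul_X p j hp =>
      rw [_root_.map_mul, Polynomial.derivative_mul, hp, psi_X]
      have hd : Polynomial.derivative (Polynomial.C (X j - MvPolynomial.C (a j)) * Polynomial.X
          + Polynomial.C (MvPolynomial.C (a j))) = Polynomial.C (X j - MvPolynomial.C (a j)) := by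
        simp
      rw [hd]
      have : ∀ i : Fin m, pderiv i (p * X j) = pderiv i p * X j
          + p * (if i = j then 1 else 0) := by
        intro i
        rw [pderiv_mul, pderiv_X, Pi.single_apply]
        simp [eq_comm]
      simp only [this, map_add, _root_.map_mul, add_mul, Finset.sum_add_distrib]
      congr 1
      · rw [Finset.sum_mul, ← psi_X]
        exact Finset.sum_congr rfl fun i _ => by ring
      · rw [Finset.sum_eq_single j]
        · simp
        · intro i _ hij
          simp [hij]
        · simp

lemma isSumSq_sum {ι : Type*} (s : Finset ι) (f : ι → Rm m)
    (hf : ∀ i ∈ s, IsSumSq (f i)) : IsSumSq (∑ i ∈ s, f i) := by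
  induction s using Finset.cons_induction with
  | empty => simpa using IsSumSq.zero
  | cons i s his ih =>
      rw [Finset.sum_cons]
      exact (hf i (Finset.mem_cons_self i s)).add
        (ih fun j hj => hf j (Finset.mem_cons_of_mem hj))

lemma deriv2_psi (a : Fin m → ℝ) (h : Rm m) {r : ℕ}
    (H : Matrix (Fin r) (Fin m) (Rm m))
    (hH : ∀ i j : Fin m, pderiv i (pderiv j h) = ∑ k : Fin r, H k i * H k j) :
    Polynomial.derivative (Polynomial.derivative (psi a h))
      = ∑ k : Fin r, (∑ i, psi a (H k i) * Polynomial.C (X i - MvPolynomial.C (a i)))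
          * (∑ i, psi a (H k i) * Polynomial.C (X i - MvPolynomial.C (a i))) := by
  rw [deriv_psi, map_sum]
  simp only [Polynomial.derivative_mul, Polynomial.derivative_C, mul_zero, add_zero,
    deriv_psi, Finset.sum_mul]
  have inner : ∀ i : Fin m, ∑ j : Fin m,
      psi a (pderiv j (pderiv i h)) * Polynomial.C (X j - MvPolynomial.C (a j))
        * Polynomial.C (X i - MvPolynomial.C (a i))
      = ∑ j : Fin m, ∑ k : Fin r,
          (psi a (H k j) * Polynomial.C (X j - MvPolynomial.C (a j)))
            * (psi a (H k i) * Polynomial.C (X i - MvPolynomial.C (a i))) := by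
    intro i
    refine Finset.sum_congr rfl fun j _ => ?_
    rw [hH j i, map_sum, Finset.sum_mul, Finset.sum_mul]
    exact Finset.sum_congr rfl fun k _ => by rw [_root_.map_mul]; ring
  simp only [inner]
  have swap : ∀ i : Fin m, (∑ j : Fin m, ∑ k : Fin r,
      (psi a (H k j) * Polynomial.C (X j - MvPolynomial.C (a j)))
        * (psi a (H k i) * Polynomial.C (X i - MvPolynomial.C (a i))))
      = ∑ k : Fin r, ∑ j : Fin m,
      (psi a (H k j) * Polynomial.C (X j - MvPolynomial.C (a j)))
        * (psi a (H k i) * Polynomial.C (X i - MvPolynomial.C (a i))) :=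
    fun _ => Finset.sum_comm
  simp only [swap, Finset.mul_sum]
  exact Finset.sum_comm.trans (Finset.sum_congr rfl fun k _ => Finset.sum_comm)

/-- The sos Taylor remainder identity. -/
lemma remainder_eq (a : Fin m → ℝ) (h : Rm m) :
    h = MvPolynomial.C (eval a h)
      + (∑ i, MvPolynomial.C (eval a (pderiv i h)) * (X i - MvPolynomial.C (a i)))
      + Lam (Polynomial.derivative (Polynomial.derivative (psi a h))) := by
  have t := taylor_id (psi a h)
  rw [eval_one_psi, eval_zero_psi] at t
  have e : Polynomial.eval (0 : Rm m) (∑ i : Fin m, psi a (pderiv i h)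
      * Polynomial.C (X i - MvPolynomial.C (a i)))
      = ∑ i : Fin m, MvPolynomial.C (eval a (pderiv i h)) * (X i - MvPolynomial.C (a i)) := by
    rw [Polynomial.eval_finset_sum]
    refine Finset.sum_congr rfl fun i _ => ?_
    rw [Polynomial.eval_mul, eval_zero_psi, Polynomial.eval_C]
  conv_lhs => rw [t]
  congr 1
  congr 1
  rw [deriv_psi]
  exact e

end
end JensenAux

open JensenAux in
/-- Extended Jensen's inequality for s.o.s-convex polynomials: if `L` is a linear
functional with `L 1 = 1` that is nonnegative on sums of squares of degree at most `2d`,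
then `L h ≥ h(L x₁, …, L xₘ)` for every s.o.s-convex `h` of degree at most `2d`. -/
theorem jensen_sosConvex (m d : ℕ) (h : MvPolynomial (Fin m) ℝ)
    (hdeg : h.totalDegree ≤ 2 * d) (hsc : SosConvex h)
    (L : MvPolynomial (Fin m) ℝ →ₗ[ℝ] ℝ) (hL1 : L 1 = 1)
    (hLsos : ∀ σ : MvPolynomial (Fin m) ℝ, IsSumSq σ → σ.totalDegree ≤ 2 * d → 0 ≤ L σ) :
    eval (fun i => L (X i)) h ≤ L h := by
  classical
  -- L of a constant
  have hLC : ∀ c : ℝ, L (MvPolynomial.C c) = c := by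
    intro c
    rw [show (MvPolynomial.C c : MvPolynomial (Fin m) ℝ) = c • 1 by
      rw [← MvPolynomial.algebraMap_eq, Algebra.algebraMap_eq_smul_one], map_smul, hL1,
      smul_eq_mul, mul_one]
  set a : Fin m → ℝ := fun i => L (X i) with ha
  rcases Nat.eq_zero_or_pos d with rfl | hd
  · -- degree 0 : h is constant
    have h0 : h.totalDegree = 0 := by omega
    have hC : h = MvPolynomial.C (MvPolynomial.coeff 0 h) := by
      ext s
      rcases eq_or_ne s 0 with rfl | hs
      · simp
      · rw [MvPolynomial.coeff_C, if_neg (Ne.symm hs)]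
        by_contra hne
        have hmem : s ∈ h.support := MvPolynomial.mem_support_iff.mpr hne
        have := (MvPolynomial.totalDegree_eq_zero_iff _ h).mp h0 s hmem
        exact hs (Finsupp.ext this)
    rw [hC, MvPolynomial.eval_C, hLC]
  · -- main case
    obtain ⟨r, H, hH⟩ := hsc
    set σ : MvPolynomial (Fin m) ℝ :=
      Lam (Polynomial.derivative (Polynomial.derivative (psi a h))) with hσ
    have hrem := remainder_eq a h
    -- σ is a sum of squares
    have hsos : IsSumSq σ := by
      rw [hσ, deriv2_psi a h H hH, Lam_sum]
      exact isSumSq_sum _ _ fun k _ => isSumSq_Lam_sq _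
    -- degree bound
    have hdegσ : σ.totalDegree ≤ 2 * d := by
      have hσeq : σ = h - (MvPolynomial.C (eval a h)
          + ∑ i, MvPolynomial.C (eval a (pderiv i h)) * (X i - MvPolynomial.C (a i))) := by
        rw [hσ]
        nth_rewrite 2 [hrem]
        ring
      rw [hσeq]
      refine (MvPolynomial.totalDegree_sub _ _).trans (max_le hdeg ?_)
      refine (MvPolynomial.totalDegree_add _ _).trans (max_le ?_ ?_)
      · simp
      · refine (MvPolynomial.totalDegree_finset_sum _ _).trans (Finset.sup_le fun i _ => ?_)
        refine (MvPolynomial.totalDegree_mul _ _).trans ?_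
        have h1 : (MvPolynomial.C (eval a (pderiv i h)) :
            MvPolynomial (Fin m) ℝ).totalDegree = 0 := MvPolynomial.totalDegree_C _
        have h2 : (X i - MvPolynomial.C (a i) :
            MvPolynomial (Fin m) ℝ).totalDegree ≤ 1 := by
          refine (MvPolynomial.totalDegree_sub _ _).trans (max_le ?_ ?_)
          · exact le_of_eq (MvPolynomial.totalDegree_X i)
          · simp
        omega
    -- L of linear terms vanishes
    have hlin : ∀ i : Fin m,
        L (MvPolynomial.C (eval a (pderiv i h)) * (X i - MvPolynomial.C (a i))) = 0 := by
      intro i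
      rw [MvPolynomial.C_mul', map_smul, map_sub, hLC, smul_eq_mul]
      have hXi : L (X i) = a i := rfl
      rw [hXi, sub_self, mul_zero]
    -- conclude
    have hLσ : L σ = L h - eval a h := by
      have : L h = eval a h + 0 + L σ := by
        nth_rewrite 1 [hrem]
        rw [map_add, map_add, hLC, map_sum]
        congr 2
        rw [Finset.sum_eq_zero fun i _ => hlin i]
      linarith [this]
    have := hLsos σ hsos hdegσ
    linarith [hLσ ▸ this]
end

section
/- Under assumptions (A1)-(A2), suppose u* ∈ K minimizes f/g over K with value r*, μ* ∈ M(Y) and η* ∈ ℝ_+^s satisfy strong duality inf_x L_{f,g}(x,μ*,η*) = 0, and X ⊂ ℝ^m contains some minimizer of f/g over K. Then the supremum of ρ over all (ρ, H, η) with H a nonnegative linear functional on the cone of polynomials in y nonnegative on Y, η ∈ ℝ_+^s, and f(x) - ρ·g(x) + H(p(x,·))(x) + ∑_j η_j ψ_j(x) nonnegative on X, equals r*. -/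
open MvPolynomial MeasureTheory

/-- Conic reformulation of the FSIPP problem: under (A1)-(A3), if `X` contains a
minimizer of `f/g` over `K`, the supremum of `ρ` over all `(ρ, H, η)` with `H` a
nonnegative linear functional on the cone of polynomials nonnegative on `Y`,
`η ∈ ℝ₊^s`, and `f - ρ g + H(p(x,·)) + ∑ ηⱼ ψⱼ` nonnegative on `X`, equals `r*`. -/
theorem conic_reformulation (m n s : ℕ)
    (f g : (Fin m → ℝ) → ℝ) (ψ : Fin s → (Fin m → ℝ) → ℝ)
    (Y : Set (Fin n → ℝ)) (hY : IsCompact Y)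
    (p : (Fin m → ℝ) → MvPolynomial (Fin n) ℝ)
    (hf : ConvexOn ℝ Set.univ f) (hg : ConcaveOn ℝ Set.univ g)
    (hψ : ∀ j, ConvexOn ℝ Set.univ (ψ j))
    (hp : ∀ y ∈ Y, ConvexOn ℝ Set.univ fun x => eval y (p x))
    (K : Set (Fin m → ℝ))
    (hK : K = {x | (∀ j, ψ j x ≤ 0) ∧ ∀ y ∈ Y, eval y (p x) ≤ 0})
    (hgpos : ∀ x ∈ K, 0 < g x)
    (hA2 : (∀ x ∈ K, 0 ≤ f x) ∨
      ∃ (l : (Fin m → ℝ) →ₗ[ℝ] ℝ) (c : ℝ), ∀ x, g x = l x + c)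
    (rstar : ℝ) (ustar : Fin m → ℝ) (hustar : ustar ∈ K)
    (hmin : ∀ x ∈ K, rstar ≤ f x / g x) (hval : f ustar / g ustar = rstar)
    (μstar : Measure (Fin n → ℝ)) [IsFiniteMeasure μstar] (hμ : μstar Yᶜ = 0)
    (ηstar : Fin s → ℝ) (hηstar : ∀ j, 0 ≤ ηstar j)
    (hinf : IsGLB (Set.range fun x =>
        f x - rstar * g x + (∫ y, eval y (p x) ∂μstar) + ∑ j, ηstar j * ψ j x) 0)
    (X : Set (Fin m → ℝ))
    (hX : ∃ u ∈ X, u ∈ K ∧ f u / g u = rstar) :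
    IsLUB {ρ : ℝ | ∃ (H : MvPolynomial (Fin n) ℝ →ₗ[ℝ] ℝ) (η : Fin s → ℝ),
      (∀ q : MvPolynomial (Fin n) ℝ, (∀ y ∈ Y, 0 ≤ eval y q) → 0 ≤ H q) ∧
      (∀ j, 0 ≤ η j) ∧
      ∀ x ∈ X, 0 ≤ f x - ρ * g x + H (p x) + ∑ j, η j * ψ j x} rstar := by
  have hμY : ∀ᵐ y ∂μstar, y ∈ Y := by
    rw [ae_iff]
    exact hμ
  have hrestr : μstar.restrict Y = μstar :=
    Measure.restrict_eq_self_of_ae_mem hμY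
  have hint : ∀ q : MvPolynomial (Fin n) ℝ, Integrable (fun y => eval y q) μstar := by
    intro q
    have h1 : IntegrableOn (fun y => eval y q) Y μstar :=
      (MvPolynomial.continuous_eval (p := q)).continuousOn.integrableOn_compact hY
    rwa [IntegrableOn, hrestr] at h1
  constructor
  · -- upper bound
    rintro ρ ⟨H, η, hH, hη, hnn⟩
    obtain ⟨u, huX, huK, hur⟩ := hX
    have hgu : 0 < g u := hgpos u huK
    have huK' := hK ▸ huK
    have hψu : ∀ j, ψ j u ≤ 0 := huK'.1
    have hpu : ∀ y ∈ Y, eval y (p u) ≤ 0 := huK'.2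
    have hHpu : H (p u) ≤ 0 := by
      have : 0 ≤ H (-(p u)) := by
        apply hH
        intro y hy
        rw [eval_neg]
        linarith [hpu y hy]
      rw [map_neg] at this
      linarith
    have hsum : ∑ j, η j * ψ j u ≤ 0 := by
      apply Finset.sum_nonpos
      intro j _
      exact mul_nonpos_of_nonneg_of_nonpos (hη j) (hψu j)
    have h0 := hnn u huX
    have : ρ * g u ≤ f u := by linarith
    have : ρ ≤ f u / g u := (le_div_iff₀ hgu).2 this
    linarith [hur ▸ this]
  · -- least upper bound: show rstar itself is in the set
    intro b hb
    apply hb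
    refine ⟨{ toFun := fun q => ∫ y, eval y q ∂μstar
              map_add' := fun q r => by
                simp only [eval_add]
                exact integral_add (hint q) (hint r)
              map_smul' := fun c q => by
                simp only [smul_eval, RingHom.id_apply, smul_eq_mul, ← integral_const_mul] },
            ηstar, ?_, hηstar, ?_⟩
    · intro q hq
      apply integral_nonneg_of_ae
      filter_upwards [hμY] with y hy
      exact hq y hy
    · intro x _
      exact hinf.1 ⟨x, rfl⟩
end

section
/- Let C_1 = ∪_{μ ∈ M(Y)} epi(Φ_μ)* where Φ_μ(x) = ∫_Y p(x,y)dμ(y), and C_2 = ∪_{η ∈ ℝ_+^s} epi(∑_j η_j ψ_j)*, where (·)* denotes the convex conjugate and epi the epigraph in ℝ^{m+1}. If p(·,y) is convex for each y ∈ Y, p(x,·) is continuous, Y is compact, and each ψ_j is continuous and convex, then both C_1 and C_1 + C_2 are convex cones in ℝ^{m+1}. -/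
open MeasureTheory Pointwise

private lemma integrable_of_compact_support {n m : ℕ} {Y : Set (Fin n → ℝ)}
    (hY : IsCompact Y) {p : (Fin m → ℝ) → (Fin n → ℝ) → ℝ}
    (hpcont : ∀ x, Continuous (p x))
    (μ : Measure (Fin n → ℝ)) [IsFiniteMeasure μ] (hμ : μ Yᶜ = 0) (x : Fin m → ℝ) :
    Integrable (fun y => p x y) μ := by
  obtain ⟨C, hC⟩ := hY.exists_bound_of_continuousOn ((hpcont x).continuousOn)
  refine ⟨(hpcont x).measurable.aestronglyMeasurable, HasFiniteIntegral.of_bounded (C := C) ?_⟩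
  have hae : ∀ᵐ y ∂μ, y ∈ Y := by
    rw [MeasureTheory.ae_iff]
    exact hμ
  filter_upwards [hae] with y hy using hC y hy

/-- The characteristic cones `C₁` and `C₁ + C₂` associated with a convex
semi-infinite system are convex cones in `ℝ^{m+1}`. -/
theorem characteristic_cones_convexCone (m n s : ℕ)
    (Y : Set (Fin n → ℝ)) (hY : IsCompact Y)
    (p : (Fin m → ℝ) → (Fin n → ℝ) → ℝ)
    (hpconv : ∀ y ∈ Y, ConvexOn ℝ Set.univ fun x => p x y)
    (hpcont : ∀ x, Continuous (p x))
    (ψ : Fin s → (Fin m → ℝ) → ℝ)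
    (hψcont : ∀ j, Continuous (ψ j))
    (hψconv : ∀ j, ConvexOn ℝ Set.univ (ψ j))
    (C1 C2 : Set ((Fin m → ℝ) × ℝ))
    (hC1 : C1 = {wv | ∃ μ : Measure (Fin n → ℝ), IsFiniteMeasure μ ∧ μ Yᶜ = 0 ∧
        ∀ x : Fin m → ℝ, (∑ i, wv.1 i * x i) - (∫ y, p x y ∂μ) ≤ wv.2})
    (hC2 : C2 = {wv | ∃ η : Fin s → ℝ, (∀ j, 0 ≤ η j) ∧
        ∀ x : Fin m → ℝ, (∑ i, wv.1 i * x i) - (∑ j, η j * ψ j x) ≤ wv.2}) :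
    (Convex ℝ C1 ∧ ∀ c : ℝ, 0 < c → ∀ w ∈ C1, c • w ∈ C1) ∧
      (Convex ℝ (C1 + C2) ∧ ∀ c : ℝ, 0 < c → ∀ w ∈ C1 + C2, c • w ∈ C1 + C2) := by
  -- C1 is convex
  have hC1conv : Convex ℝ C1 := by
    subst hC1
    rintro ⟨w₁, v₁⟩ ⟨μ₁, hf₁, hY₁, h₁⟩ ⟨w₂, v₂⟩ ⟨μ₂, hf₂, hY₂, h₂⟩ a b ha hb hab
    haveI := hf₁; haveI := hf₂
    haveI := μ₁.smul_finite (c := ENNReal.ofReal a) ENNReal.ofReal_ne_top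
    haveI := μ₂.smul_finite (c := ENNReal.ofReal b) ENNReal.ofReal_ne_top
    refine ⟨ENNReal.ofReal a • μ₁ + ENNReal.ofReal b • μ₂, by infer_instance, ?_, ?_⟩
    · simp [hY₁, hY₂]
    · intro x
      have hi₁ := integrable_of_compact_support hY hpcont μ₁ hY₁ x
      have hi₂ := integrable_of_compact_support hY hpcont μ₂ hY₂ x
      have hint : (∫ y, p x y ∂(ENNReal.ofReal a • μ₁ + ENNReal.ofReal b • μ₂))
          = a * (∫ y, p x y ∂μ₁) + b * (∫ y, p x y ∂μ₂) := by
        rw [integral_add_measure (hi₁.smul_measure ENNReal.ofReal_ne_top)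
          (hi₂.smul_measure ENNReal.ofReal_ne_top),
          integral_smul_measure, integral_smul_measure,
          ENNReal.toReal_ofReal ha, ENNReal.toReal_ofReal hb]
        simp [smul_eq_mul]
      have hsum : (∑ i, (a • (w₁, v₁) + b • (w₂, v₂)).1 i * x i)
          = a * (∑ i, w₁ i * x i) + b * (∑ i, w₂ i * x i) := by
        simp only [Prod.fst_add, Prod.smul_fst, Pi.add_apply, Pi.smul_apply, smul_eq_mul,
          Finset.mul_sum, ← Finset.sum_add_distrib]
        exact Finset.sum_congr rfl fun i _ => by ring
      have e2 : (a • (w₁, v₁) + b • (w₂, v₂) : (Fin m → ℝ) × ℝ).2 = a * v₁ + b * v₂ := by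
        simp [smul_eq_mul]
      rw [hint, hsum, e2]
      have t₁ := mul_le_mul_of_nonneg_left (h₁ x) ha
      have t₂ := mul_le_mul_of_nonneg_left (h₂ x) hb
      nlinarith
  -- C1 is a cone
  have hC1cone : ∀ c : ℝ, 0 < c → ∀ w ∈ C1, c • w ∈ C1 := by
    subst hC1
    rintro c hc ⟨w, v⟩ ⟨μ, hf, hYμ, h⟩
    haveI := hf
    refine ⟨ENNReal.ofReal c • μ, μ.smul_finite ENNReal.ofReal_ne_top, by simp [hYμ], ?_⟩
    intro x
    have hint : (∫ y, p x y ∂(ENNReal.ofReal c • μ)) = c * (∫ y, p x y ∂μ) := by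
      rw [integral_smul_measure, ENNReal.toReal_ofReal hc.le]; simp [smul_eq_mul]
    have hsum : (∑ i, (c • (w, v)).1 i * x i) = c * (∑ i, w i * x i) := by
      simp only [Prod.smul_fst, Pi.smul_apply, smul_eq_mul, Finset.mul_sum]
      exact Finset.sum_congr rfl fun i _ => by ring
    have e2 : (c • (w, v) : (Fin m → ℝ) × ℝ).2 = c * v := by simp [smul_eq_mul]
    rw [hint, hsum, e2]
    nlinarith [mul_le_mul_of_nonneg_left (h x) hc.le]
  -- C2 is convex
  have hC2conv : Convex ℝ C2 := by
    subst hC2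
    rintro ⟨w₁, v₁⟩ ⟨η₁, hη₁, h₁⟩ ⟨w₂, v₂⟩ ⟨η₂, hη₂, h₂⟩ a b ha hb hab
    refine ⟨fun j => a * η₁ j + b * η₂ j,
      fun j => add_nonneg (mul_nonneg ha (hη₁ j)) (mul_nonneg hb (hη₂ j)), ?_⟩
    intro x
    have hsum : (∑ i, (a • (w₁, v₁) + b • (w₂, v₂)).1 i * x i)
        = a * (∑ i, w₁ i * x i) + b * (∑ i, w₂ i * x i) := by
      simp only [Prod.fst_add, Prod.smul_fst, Pi.add_apply, Pi.smul_apply, smul_eq_mul,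
        Finset.mul_sum, ← Finset.sum_add_distrib]
      exact Finset.sum_congr rfl fun i _ => by ring
    have hsum2 : (∑ j, (a * η₁ j + b * η₂ j) * ψ j x)
        = a * (∑ j, η₁ j * ψ j x) + b * (∑ j, η₂ j * ψ j x) := by
      simp only [Finset.mul_sum, ← Finset.sum_add_distrib]
      exact Finset.sum_congr rfl fun i _ => by ring
    have e2 : (a • (w₁, v₁) + b • (w₂, v₂) : (Fin m → ℝ) × ℝ).2 = a * v₁ + b * v₂ := by
      simp [smul_eq_mul]
    rw [hsum, hsum2, e2]
    have t₁ := mul_le_mul_of_nonneg_left (h₁ x) ha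
    have t₂ := mul_le_mul_of_nonneg_left (h₂ x) hb
    nlinarith
  -- C2 is a cone
  have hC2cone : ∀ c : ℝ, 0 < c → ∀ w ∈ C2, c • w ∈ C2 := by
    subst hC2
    rintro c hc ⟨w, v⟩ ⟨η, hη, h⟩
    refine ⟨fun j => c * η j, fun j => mul_nonneg hc.le (hη j), ?_⟩
    intro x
    have hsum : (∑ i, (c • (w, v)).1 i * x i) = c * (∑ i, w i * x i) := by
      simp only [Prod.smul_fst, Pi.smul_apply, smul_eq_mul, Finset.mul_sum]
      exact Finset.sum_congr rfl fun i _ => by ring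
    have hsum2 : (∑ j, (c * η j) * ψ j x) = c * (∑ j, η j * ψ j x) := by
      simp only [Finset.mul_sum]; exact Finset.sum_congr rfl fun i _ => by ring
    have e2 : (c • (w, v) : (Fin m → ℝ) × ℝ).2 = c * v := by simp [smul_eq_mul]
    rw [hsum, hsum2, e2]
    nlinarith [mul_le_mul_of_nonneg_left (h x) hc.le]
  refine ⟨⟨hC1conv, hC1cone⟩, ⟨hC1conv.add hC2conv, ?_⟩⟩
  intro c hc w hw
  obtain ⟨u, hu, z, hz, rfl⟩ := Set.mem_add.mp hw
  rw [smul_add]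
  exact Set.add_mem_add (hC1cone c hc u hu) (hC2cone c hc z hz)
end

section
/- Under the SCCCQ (C_1 + C_2 closed), strong duality holds for the convex semi-infinite program with dual attainment: if r* = inf{h(x) : ψ_j(x) ≤ 0 ∀j, p(x,y) ≤ 0 ∀y ∈ Y} is finite, then there exist μ* ∈ M(Y) and η* ∈ ℝ_+^s such that r* = inf_{x∈ℝ^m} { h(x) + ∫_Y p(x,y)dμ*(y) + ∑_{j=1}^s η*_j ψ_j(x) }. -/
open MeasureTheory Pointwise

section helperdecls

/-- Representation of a continuous linear functional on `(Fin m → ℝ) × ℝ`. -/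
lemma clm_rep {m : ℕ} (φ : ((Fin m → ℝ) × ℝ) →L[ℝ] ℝ) :
    ∃ g : Fin m → ℝ, ∀ w v, φ (w, v) = (∑ i, g i * w i) + v * φ (0, 1) := by
  refine ⟨fun i => φ (fun j => if i = j then 1 else 0, 0), fun w v => ?_⟩
  have h1 : ((w, v) : (Fin m → ℝ) × ℝ) = (w, 0) + (0, v) := by simp
  rw [h1, map_add]
  have h2 : φ (0, v) = v * φ (0, 1) := by
    have hv : ((0, v) : (Fin m → ℝ) × ℝ) = v • (0, 1) := by simp
    rw [hv, φ.map_smul, smul_eq_mul]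
  have h3 : φ (w, 0) = ∑ i, w i * φ (fun j => if i = j then 1 else 0, 0) := by
    have := LinearMap.pi_apply_eq_sum_univ
      ((φ : ((Fin m → ℝ) × ℝ) →ₗ[ℝ] ℝ).comp (LinearMap.inl ℝ (Fin m → ℝ) ℝ)) w
    simpa [smul_eq_mul] using this
  rw [h2, h3]
  congr 1
  exact Finset.sum_congr rfl fun i _ => mul_comm _ _

lemma epi_limit {A c u fx : ℝ} (hc : c < 0) (H : ∀ t, fx < t → A + t * c < u) :
    A + fx * c ≤ u := by
  by_contra hlt
  push_neg at hlt
  have hcne : c ≠ 0 := ne_of_lt hc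
  set s := (A + fx * c - u) / (-c) with hs
  have hs0 : 0 < s := div_pos (by linarith) (by linarith)
  have h2 := H (fx + s) (by linarith)
  have h3 : s * c = -(A + fx * c - u) := by
    rw [hs]
    rw [div_mul_eq_mul_div, div_neg, mul_div_assoc, div_self hcne, mul_one]
  have h4 : (fx + s) * c = fx * c + s * c := by ring
  linarith

lemma strictEpi_convex {m : ℕ} {f : (Fin m → ℝ) → ℝ} (hconv : ConvexOn ℝ Set.univ f) :
    Convex ℝ {q : (Fin m → ℝ) × ℝ | f q.1 < q.2} := by
  rintro ⟨x1, t1⟩ h1 ⟨x2, t2⟩ h2 a b ha hb hab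
  simp only [Set.mem_setOf_eq] at h1 h2 ⊢
  have hf := hconv.2 (Set.mem_univ x1) (Set.mem_univ x2) ha hb hab
  simp only [smul_eq_mul] at hf
  have hstrict : a * f x1 + b * f x2 < a * t1 + b * t2 := by
    rcases lt_or_eq_of_le ha with ha' | ha'
    · have u1 := mul_lt_mul_of_pos_left h1 ha'
      have u2 := mul_le_mul_of_nonneg_left h2.le hb
      linarith
    · have hb1 : (0 : ℝ) < b := by linarith
      have u2 := mul_lt_mul_of_pos_left h2 hb1
      rw [← ha']
      simpa using u2
  calc f (a • x1 + b • x2) ≤ a * f x1 + b * f x2 := hf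
  _ < a * t1 + b * t2 := hstrict

/-- Existence of subgradients for finite convex functions on `ℝ^m`. -/
lemma exists_subgrad {m : ℕ} {f : (Fin m → ℝ) → ℝ} (hconv : ConvexOn ℝ Set.univ f)
    (x0 : Fin m → ℝ) :
    ∃ w : Fin m → ℝ, ∀ x, (∑ i, w i * x i) - f x ≤ (∑ i, w i * x0 i) - f x0 := by
  have hcont : Continuous f := by
    have := hconv.continuousOn isOpen_univ
    exact continuousOn_univ.mp this
  set S : Set ((Fin m → ℝ) × ℝ) := {q | f q.1 < q.2} with hS
  have hSopen : IsOpen S := isOpen_lt (hcont.comp continuous_fst) continuous_snd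
  have hSconv : Convex ℝ S := strictEpi_convex hconv
  have hpt : ((x0, f x0) : (Fin m → ℝ) × ℝ) ∉ S := by simp [hS]
  obtain ⟨φ, hφ⟩ := geometric_hahn_banach_open_point hSconv hSopen hpt
  obtain ⟨g, hg⟩ := clm_rep φ
  set c := φ (0, 1) with hcdef
  have hc : c < 0 := by
    have h1 := hφ (x0, f x0 + 1) (by simp [hS])
    rw [hg, hg] at h1
    linarith
  have hkey : ∀ x, (∑ i, g i * x i) + f x * c ≤ (∑ i, g i * x0 i) + f x0 * c := by
    intro x
    refine epi_limit hc ?_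
    intro t ht
    have := hφ (x, t) (by simpa [hS] using ht)
    rw [hg, hg] at this
    linarith
  have hc' : (0 : ℝ) < -c := by linarith
  have hcne : -c ≠ 0 := ne_of_gt hc'
  refine ⟨fun i => g i / (-c), fun x => ?_⟩
  have e1 : ∀ z : Fin m → ℝ, (∑ i, g i / (-c) * z i) = (∑ i, g i * z i) / (-c) := by
    intro z
    rw [Finset.sum_div]
    exact Finset.sum_congr rfl fun i _ => by ring
  rw [e1, e1]
  rw [div_sub' hcne, div_sub' hcne, div_le_div_iff₀ hc' hc']
  nlinarith [hkey x]

/-- Integrability of a continuous function wrt a finite measure concentrated on a compact set. -/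
lemma integrable_aux {n : ℕ} {Y : Set (Fin n → ℝ)} (hY : IsCompact Y)
    {μ : Measure (Fin n → ℝ)} (hfin : IsFiniteMeasure μ) (hμY : μ Yᶜ = 0)
    {f : (Fin n → ℝ) → ℝ} (hf : Continuous f) : Integrable f μ := by
  haveI := hfin
  obtain ⟨C, hC⟩ := hY.exists_bound_of_continuousOn hf.continuousOn
  have haeY : ∀ᵐ y ∂μ, y ∈ Y := by
    rw [ae_iff]
    exact hμY
  refine (integrable_const C).mono' hf.aestronglyMeasurable ?_
  filter_upwards [haeY] with y hy using hC y hy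

lemma integral_nonpos_aux {n : ℕ} {Y : Set (Fin n → ℝ)}
    {μ : Measure (Fin n → ℝ)} (hμY : μ Yᶜ = 0)
    {f : (Fin n → ℝ) → ℝ} (hneg : ∀ y ∈ Y, f y ≤ 0) : ∫ y, f y ∂μ ≤ 0 := by
  refine integral_nonpos_of_ae ?_
  have haeY : ∀ᵐ y ∂μ, y ∈ Y := by
    rw [ae_iff]
    exact hμY
  filter_upwards [haeY] with y hy using hneg y hy

lemma sum_mul_factor {m : ℕ} (t : ℝ) (w x : Fin m → ℝ) :
    ∑ i, t * w i * x i = t * ∑ i, w i * x i := by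
  rw [Finset.mul_sum]
  exact Finset.sum_congr rfl fun i _ => by ring

end helperdecls

set_option maxHeartbeats 1600000 in
/-- Under the SCCCQ (`C₁ + C₂` closed), strong duality with dual attainment holds
for the convex semi-infinite program. -/
theorem scccq_strong_duality (m n s : ℕ)
    (h : (Fin m → ℝ) → ℝ) (hhcont : Continuous h) (hhconv : ConvexOn ℝ Set.univ h)
    (ψ : Fin s → (Fin m → ℝ) → ℝ)
    (hψcont : ∀ j, Continuous (ψ j)) (hψconv : ∀ j, ConvexOn ℝ Set.univ (ψ j))
    (Y : Set (Fin n → ℝ)) (hY : IsCompact Y)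
    (p : (Fin m → ℝ) → (Fin n → ℝ) → ℝ)
    (hpconv : ∀ y ∈ Y, ConvexOn ℝ Set.univ fun x => p x y)
    (hplsc : ∀ y ∈ Y, LowerSemicontinuous fun x => p x y)
    (hpcont : ∀ x, Continuous (p x))
    (K : Set (Fin m → ℝ))
    (hK : K = {x | (∀ j, ψ j x ≤ 0) ∧ ∀ y ∈ Y, p x y ≤ 0})
    (hKne : K.Nonempty)
    (C1 C2 : Set ((Fin m → ℝ) × ℝ))
    (hC1 : C1 = {wv | ∃ μ : Measure (Fin n → ℝ), IsFiniteMeasure μ ∧ μ Yᶜ = 0 ∧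
        ∀ x : Fin m → ℝ, (∑ i, wv.1 i * x i) - (∫ y, p x y ∂μ) ≤ wv.2})
    (hC2 : C2 = {wv | ∃ η : Fin s → ℝ, (∀ j, 0 ≤ η j) ∧
        ∀ x : Fin m → ℝ, (∑ i, wv.1 i * x i) - (∑ j, η j * ψ j x) ≤ wv.2})
    (hSCCCQ : IsClosed (C1 + C2))
    (rstar : ℝ) (hr : IsGLB (h '' K) rstar) :
    ∃ (μ : Measure (Fin n → ℝ)) (η : Fin s → ℝ),
      IsFiniteMeasure μ ∧ μ Yᶜ = 0 ∧ (∀ j, 0 ≤ η j) ∧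
      IsGLB (Set.range fun x : Fin m → ℝ =>
        h x + (∫ y, p x y ∂μ) + ∑ j, η j * ψ j x) rstar := by
  classical
  obtain ⟨xh, hxhK⟩ := hKne
  have hxhK' : (∀ j, ψ j xh ≤ 0) ∧ ∀ y ∈ Y, p xh y ≤ 0 := by rw [hK] at hxhK; exact hxhK
  obtain ⟨hxhψ, hxhp⟩ := hxhK'
  have hrlb : ∀ x, ((∀ j, ψ j x ≤ 0) ∧ ∀ y ∈ Y, p x y ≤ 0) → rstar ≤ h x := by
    intro x hx
    exact hr.1 (Set.mem_image_of_mem h (by rw [hK]; exact hx))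
  -- K is convex
  have hKconv : Convex ℝ {x | (∀ j, ψ j x ≤ 0) ∧ ∀ y ∈ Y, p x y ≤ 0} := by
    rintro x1 ⟨ha1, hb1⟩ x2 ⟨ha2, hb2⟩ a b ha hb hab
    constructor
    · intro j
      have hf := (hψconv j).2 (Set.mem_univ x1) (Set.mem_univ x2) ha hb hab
      simp only [smul_eq_mul] at hf
      nlinarith [mul_le_mul_of_nonneg_left (ha1 j) ha, mul_le_mul_of_nonneg_left (ha2 j) hb]
    · intro y hy
      have hf := (hpconv y hy).2 (Set.mem_univ x1) (Set.mem_univ x2) ha hb hab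
      simp only [smul_eq_mul] at hf
      nlinarith [mul_le_mul_of_nonneg_left (hb1 y hy) ha, mul_le_mul_of_nonneg_left (hb2 y hy) hb]
  ----------------------------------------------------------------
  -- Part 1 : Fenchel duality via separation of the strict epigraph of h from K × (-∞, r*]
  ----------------------------------------------------------------
  set S : Set ((Fin m → ℝ) × ℝ) := {q | h q.1 < q.2} with hSdef
  have hSopen : IsOpen S := isOpen_lt (hhcont.comp continuous_fst) continuous_snd
  have hSconv : Convex ℝ S := strictEpi_convex hhconv
  set T : Set ((Fin m → ℝ) × ℝ) :=
    {x | (∀ j, ψ j x ≤ 0) ∧ ∀ y ∈ Y, p x y ≤ 0} ×ˢ Set.Iic rstar with hTdef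
  have hTconv : Convex ℝ T := hKconv.prod (convex_Iic rstar)
  have hdisj : Disjoint S T := by
    rw [Set.disjoint_left]
    rintro ⟨x, t⟩ hxS hxT
    rw [hTdef, Set.mem_prod] at hxT
    obtain ⟨hxK, hxt⟩ := hxT
    have := hrlb x hxK
    have hlt : h x < t := hxS
    have : t ≤ rstar := hxt
    linarith
  obtain ⟨φ, u, hφS, hφT⟩ := geometric_hahn_banach_open hSconv hSopen hTconv hdisj
  obtain ⟨g, hg⟩ := clm_rep φ
  set c := φ (0, 1) with hcdef
  have hc : c < 0 := by
    rcases lt_trichotomy c 0 with h' | h' | h'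
    · exact h'
    · exfalso
      have h1 := hφS (xh, h xh + 1) (by simp [hSdef])
      have h2 := hφT (xh, rstar) (by
        rw [hTdef, Set.mem_prod]
        exact ⟨⟨hxhψ, hxhp⟩, Set.mem_Iic.mpr le_rfl⟩)
      rw [hg] at h1 h2
      rw [h'] at h1 h2
      simp only [mul_zero] at h1 h2
      linarith
    · exfalso
      set t0 := max (h xh + 1) ((u - ∑ i, g i * xh i) / c) with ht0
      have h1 := hφS (xh, t0) (by
        simp only [hSdef, Set.mem_setOf_eq]
        exact lt_of_lt_of_le (lt_add_one _) (le_max_left _ _))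
      rw [hg] at h1
      have h2 : (u - ∑ i, g i * xh i) / c ≤ t0 := le_max_right _ _
      have h3 : ((u - ∑ i, g i * xh i) / c) * c ≤ t0 * c :=
        mul_le_mul_of_nonneg_right h2 h'.le
      rw [div_mul_cancel₀ _ (ne_of_gt h')] at h3
      linarith
  have hc' : (0 : ℝ) < -c := by linarith
  have hc'ne : -c ≠ 0 := ne_of_gt hc'
  have e1 : ∀ z : Fin m → ℝ, (∑ i, g i / (-c) * z i) = (∑ i, g i * z i) / (-c) := by
    intro z
    rw [Finset.sum_div]
    exact Finset.sum_congr rfl fun i _ => by ring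
  set w0 : Fin m → ℝ := fun i => g i / (-c) with hw0def
  set a : ℝ := u / (-c) with hadef
  have hFen1 : ∀ x, (∑ i, w0 i * x i) - h x ≤ a := by
    intro x
    have hel : (∑ i, g i * x i) + h x * c ≤ u := by
      refine epi_limit hc ?_
      intro t ht
      have := hφS (x, t) (by simpa [hSdef] using ht)
      rw [hg] at this
      linarith
    rw [hw0def, hadef]
    rw [e1, sub_le_iff_le_add, div_le_iff₀ hc']
    have hexp : (u / (-c) + h x) * (-c) = u + h x * (-c) := by
      rw [add_mul, div_mul_cancel₀ _ hc'ne]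
    rw [hexp]
    linarith
  have hFen2 : ∀ x, ((∀ j, ψ j x ≤ 0) ∧ ∀ y ∈ Y, p x y ≤ 0) →
      a + rstar ≤ ∑ i, w0 i * x i := by
    intro x hxK
    have h2 := hφT (x, rstar) (by
      rw [hTdef, Set.mem_prod]
      exact ⟨hxK, Set.mem_Iic.mpr le_rfl⟩)
    rw [hg] at h2
    rw [hw0def, hadef, e1, le_div_iff₀ hc']
    have hexp : (u / (-c) + rstar) * (-c) = u + rstar * (-c) := by
      rw [add_mul, div_mul_cancel₀ _ hc'ne]
    rw [hexp]
    linarith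
  ----------------------------------------------------------------
  -- Preliminary facts about C1 and C2
  ----------------------------------------------------------------
  have hC1zero : ∀ t : ℝ, 0 ≤ t → (((0 : Fin m → ℝ), t) : (Fin m → ℝ) × ℝ) ∈ C1 := by
    intro t ht
    rw [hC1]
    refine ⟨0, inferInstance, by simp, fun x => ?_⟩
    simpa using ht
  have hC2zero : (((0 : Fin m → ℝ), (0 : ℝ)) : (Fin m → ℝ) × ℝ) ∈ C2 := by
    rw [hC2]
    exact ⟨0, fun j => le_rfl, fun x => by simp⟩
  have hD0 : ∀ t : ℝ, 0 ≤ t → (((0 : Fin m → ℝ), t) : (Fin m → ℝ) × ℝ) ∈ C1 + C2 :=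
    fun t ht => Set.mem_add.mpr ⟨(0, t), hC1zero t ht, (0, 0), hC2zero, by simp⟩
  -- convexity of C1
  have hC1conv : Convex ℝ C1 := by
    rw [hC1]
    rintro ⟨w1, v1⟩ ⟨μ1, hμ1fin, hμ1Y, hμ1⟩ ⟨w2, v2⟩ ⟨μ2, hμ2fin, hμ2Y, hμ2⟩ a' b' ha' hb' hab'
    haveI := hμ1fin
    haveI := hμ2fin
    refine ⟨ENNReal.ofReal a' • μ1 + ENNReal.ofReal b' • μ2, ?_, ?_, ?_⟩
    · constructor
      rw [Measure.add_apply, Measure.smul_apply, Measure.smul_apply, smul_eq_mul, smul_eq_mul]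
      exact ENNReal.add_lt_top.mpr
        ⟨ENNReal.mul_lt_top ENNReal.ofReal_lt_top (measure_lt_top _ _),
         ENNReal.mul_lt_top ENNReal.ofReal_lt_top (measure_lt_top _ _)⟩
    · rw [Measure.add_apply, Measure.smul_apply, Measure.smul_apply, hμ1Y, hμ2Y]
      simp
    · intro x
      have i1 : Integrable (fun y => p x y) μ1 := integrable_aux hY hμ1fin hμ1Y (hpcont x)
      have i2 : Integrable (fun y => p x y) μ2 := integrable_aux hY hμ2fin hμ2Y (hpcont x)
      have hsplit : ∫ y, p x y ∂(ENNReal.ofReal a' • μ1 + ENNReal.ofReal b' • μ2)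
          = a' * ∫ y, p x y ∂μ1 + b' * ∫ y, p x y ∂μ2 := by
        rw [integral_add_measure (i1.smul_measure ENNReal.ofReal_ne_top)
            (i2.smul_measure ENNReal.ofReal_ne_top),
          integral_smul_measure, integral_smul_measure, ENNReal.toReal_ofReal ha',
          ENNReal.toReal_ofReal hb', smul_eq_mul, smul_eq_mul]
      simp only [Prod.smul_mk, Prod.mk_add_mk, smul_eq_mul, Set.mem_setOf_eq]
      simp only at hμ1 hμ2
      rw [hsplit]
      have hsum : ∑ i, (a' • w1 + b' • w2) i * x i
          = a' * (∑ i, w1 i * x i) + b' * (∑ i, w2 i * x i) := by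
        rw [Finset.mul_sum, Finset.mul_sum, ← Finset.sum_add_distrib]
        refine Finset.sum_congr rfl fun i _ => ?_
        simp only [Pi.add_apply, Pi.smul_apply, smul_eq_mul]
        ring
      rw [hsum]
      nlinarith [mul_le_mul_of_nonneg_left (hμ1 x) ha', mul_le_mul_of_nonneg_left (hμ2 x) hb']
  -- convexity of C2
  have hC2conv : Convex ℝ C2 := by
    rw [hC2]
    rintro ⟨w1, v1⟩ ⟨η1, hη1, hι1⟩ ⟨w2, v2⟩ ⟨η2, hη2, hι2⟩ a' b' ha' hb' hab'
    refine ⟨fun j => a' * η1 j + b' * η2 j,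
      fun j => add_nonneg (mul_nonneg ha' (hη1 j)) (mul_nonneg hb' (hη2 j)), fun x => ?_⟩
    simp only [Prod.smul_mk, Prod.mk_add_mk, smul_eq_mul, Set.mem_setOf_eq]
    simp only at hι1 hι2
    have hsum : ∑ i, (a' • w1 + b' • w2) i * x i
        = a' * (∑ i, w1 i * x i) + b' * (∑ i, w2 i * x i) := by
      rw [Finset.mul_sum, Finset.mul_sum, ← Finset.sum_add_distrib]
      refine Finset.sum_congr rfl fun i _ => ?_
      simp only [Pi.add_apply, Pi.smul_apply, smul_eq_mul]
      ring
    have hsum2 : ∑ j, (a' * η1 j + b' * η2 j) * ψ j x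
        = a' * (∑ j, η1 j * ψ j x) + b' * (∑ j, η2 j * ψ j x) := by
      rw [Finset.mul_sum, Finset.mul_sum, ← Finset.sum_add_distrib]
      refine Finset.sum_congr rfl fun j _ => ?_
      ring
    rw [hsum, hsum2]
    nlinarith [mul_le_mul_of_nonneg_left (hι1 x) ha', mul_le_mul_of_nonneg_left (hι2 x) hb']
  have hDconv : Convex ℝ (C1 + C2) := hC1conv.add hC2conv
  -- "positivity" of the correction functional on C1 + C2
  have hDpos : ∀ q ∈ C1 + C2, (∑ i, q.1 i * xh i) ≤ q.2 := by
    intro q hq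
    obtain ⟨q1, hq1, q2, hq2, rfl⟩ := Set.mem_add.mp hq
    rw [hC1] at hq1
    rw [hC2] at hq2
    obtain ⟨μ, hμfin, hμY, hμ⟩ := hq1
    obtain ⟨η, hη, hηi⟩ := hq2
    have e1' := hμ xh
    have e2' := hηi xh
    have hint : ∫ y, p xh y ∂μ ≤ 0 := integral_nonpos_aux hμY (fun y hy => hxhp y hy)
    have hpsi : ∑ j, η j * ψ j xh ≤ 0 := by
      refine Finset.sum_nonpos fun j _ => ?_
      have := mul_le_mul_of_nonneg_left (hxhψ j) (hη j)
      simpa using this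
    have hsum : ∑ i, (q1 + q2).1 i * xh i
        = (∑ i, q1.1 i * xh i) + ∑ i, q2.1 i * xh i := by
      rw [← Finset.sum_add_distrib]
      refine Finset.sum_congr rfl fun i _ => ?_
      simp only [Prod.fst_add, Pi.add_apply]
      ring
    rw [hsum]
    have hsnd : (q1 + q2).2 = q1.2 + q2.2 := rfl
    rw [hsnd]
    linarith
  ----------------------------------------------------------------
  -- Part 2 : the point (-w0, -a - r*) belongs to C1 + C2
  ----------------------------------------------------------------
  have hmem : ((fun i => -(w0 i), -a - rstar) : (Fin m → ℝ) × ℝ) ∈ C1 + C2 := by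
    by_contra hnot
    obtain ⟨φ₂, u₂, hφ₂D, hφ₂pt⟩ := geometric_hahn_banach_closed_point hDconv hSCCCQ hnot
    obtain ⟨g₂, hg₂⟩ := clm_rep φ₂
    set c₂ := φ₂ (0, 1) with hc₂def
    have hc₂ : c₂ ≤ 0 := by
      by_contra hpos
      push_neg at hpos
      set t0 := max 0 (u₂ / c₂ + 1) with ht0
      have h1 := hφ₂D _ (hD0 t0 (le_max_left _ _))
      rw [hg₂] at h1
      simp only [Pi.zero_apply, mul_zero, Finset.sum_const_zero, zero_add] at h1
      have h2 : u₂ / c₂ + 1 ≤ t0 := le_max_right _ _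
      have h3 : (u₂ / c₂ + 1) * c₂ ≤ t0 * c₂ := mul_le_mul_of_nonneg_right h2 hpos.le
      rw [add_mul, div_mul_cancel₀ _ (ne_of_gt hpos)] at h3
      linarith
    have hu₂pos : 0 < u₂ := by
      have h1 := hφ₂D _ (hD0 0 le_rfl)
      rw [hg₂] at h1
      simpa using h1
    -- the value at the separated point
    rw [hg₂] at hφ₂pt
    -- hφ₂pt : u₂ < (∑ i, g₂ i * (-(w0 i))) + (-a - rstar) * c₂
    set Pv : ℝ := (∑ i, g₂ i * (-(w0 i))) + (-a - rstar) * c₂ with hPvdef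
    set δ : ℝ := (-a - rstar) - ∑ i, (-(w0 i)) * xh i with hδdef
    set ε : ℝ := min 1 ((Pv - u₂) / (2 * (|δ| + 1))) with hεdef
    have hε0 : 0 < ε := lt_min one_pos (div_pos (by linarith) (by positivity))
    have hεδ : ε * δ ≤ (Pv - u₂) / 2 := by
      have habs : |δ| + 1 ≠ 0 := by positivity
      calc ε * δ ≤ ε * |δ| := mul_le_mul_of_nonneg_left (le_abs_self δ) hε0.le
      _ ≤ ((Pv - u₂) / (2 * (|δ| + 1))) * (|δ| + 1) := by
          refine mul_le_mul (min_le_right _ _) (by linarith [abs_nonneg δ]) (abs_nonneg δ) ?_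
          exact div_nonneg (by linarith) (by positivity)
      _ = (Pv - u₂) / 2 := by
          field_simp
    have hc3 : (0 : ℝ) < ε - c₂ := by linarith
    have hc3ne : ε - c₂ ≠ 0 := ne_of_gt hc3
    set xg : Fin m → ℝ := fun i => (g₂ i + ε * xh i) / (ε - c₂) with hxgdef
    -- main evaluation identity
    have hval : ∀ (qw : Fin m → ℝ) (qv : ℝ),
        φ₂ (qw, qv) - ε * (qv - ∑ i, qw i * xh i)
          = (ε - c₂) * ((∑ i, xg i * qw i) - qv) := by
      intro qw qv
      rw [hg₂]
      have hxgsum : (ε - c₂) * (∑ i, xg i * qw i)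
          = (∑ i, g₂ i * qw i) + ε * (∑ i, qw i * xh i) := by
        rw [Finset.mul_sum, Finset.mul_sum, ← Finset.sum_add_distrib]
        refine Finset.sum_congr rfl fun i _ => ?_
        rw [hxgdef]
        field_simp
      linear_combination -hxgsum
    -- separation on the set, rephrased
    have HD : ∀ q ∈ C1 + C2, (ε - c₂) * ((∑ i, xg i * q.1 i) - q.2) < u₂ := by
      intro q hq
      have h1 := hφ₂D q hq
      have h2 := hDpos q hq
      have h3 := hval q.1 q.2
      rw [Prod.mk.eta] at h3
      have h4 : 0 ≤ ε * (q.2 - ∑ i, q.1 i * xh i) := mul_nonneg hε0.le (by linarith)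
      linarith
    -- separation at the point, rephrased
    have Hpt : u₂ < (ε - c₂) * ((∑ i, xg i * (-(w0 i))) - (-a - rstar)) := by
      have h3 := hval (fun i => -(w0 i)) (-a - rstar)
      rw [hg₂] at h3
      rw [hδdef] at hεδ
      rw [hPvdef] at hεδ hφ₂pt
      linarith [h3, hεδ, hφ₂pt]
    -- ψ j xg ≤ 0 for all j
    have hψneg : ∀ j, ψ j xg ≤ 0 := by
      intro j
      by_contra hpos
      push_neg at hpos
      obtain ⟨w1, hw1⟩ := exists_subgrad (hψconv j) xg
      set tt : ℝ := u₂ / ((ε - c₂) * ψ j xg) with httdef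
      have htt : 0 ≤ tt := le_of_lt (div_pos hu₂pos (mul_pos hc3 hpos))
      have hq2mem : ((fun i => tt * w1 i, tt * (∑ i, w1 i * xg i) - tt * ψ j xg) :
          (Fin m → ℝ) × ℝ) ∈ C2 := by
        rw [hC2]
        refine ⟨fun k => if k = j then tt else 0, fun k => ?_, fun x => ?_⟩
        · dsimp only
          split_ifs
          · exact htt
          · exact le_rfl
        · have hsumη : ∑ k, (if k = j then tt else 0) * ψ k x = tt * ψ j x := by
            simp [ite_mul]
          simp only
          rw [hsumη, sum_mul_factor]
          nlinarith [mul_le_mul_of_nonneg_left (hw1 x) htt]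
      have hqD : ((fun i => tt * w1 i, tt * (∑ i, w1 i * xg i) - tt * ψ j xg) :
          (Fin m → ℝ) × ℝ) ∈ C1 + C2 :=
        Set.mem_add.mpr ⟨(0, 0), hC1zero 0 le_rfl, _, hq2mem, by simp⟩
      have hcontr := HD _ hqD
      simp only at hcontr
      have hval2 : (∑ i, xg i * (tt * w1 i)) = tt * ∑ i, w1 i * xg i := by
        rw [Finset.mul_sum]
        exact Finset.sum_congr rfl fun i _ => by ring
      rw [hval2] at hcontr
      have hcancel : (ε - c₂) * (tt * (∑ i, w1 i * xg i) -
          (tt * (∑ i, w1 i * xg i) - tt * ψ j xg)) = u₂ := by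
        rw [sub_sub_cancel, httdef]
        field_simp [hc3ne, ne_of_gt hpos]
      linarith
    -- p xg y ≤ 0 for all y ∈ Y
    have hpneg : ∀ y ∈ Y, p xg y ≤ 0 := by
      intro y hy
      by_contra hpos
      push_neg at hpos
      obtain ⟨w1, hw1⟩ := exists_subgrad (hpconv y hy) xg
      set tt : ℝ := u₂ / ((ε - c₂) * p xg y) with httdef
      have htt : 0 ≤ tt := le_of_lt (div_pos hu₂pos (mul_pos hc3 hpos))
      have hq1mem : ((fun i => tt * w1 i, tt * (∑ i, w1 i * xg i) - tt * p xg y) :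
          (Fin m → ℝ) × ℝ) ∈ C1 := by
        rw [hC1]
        refine ⟨ENNReal.ofReal tt • Measure.dirac y, ?_, ?_, fun x => ?_⟩
        · constructor
          rw [Measure.smul_apply, smul_eq_mul]
          exact ENNReal.mul_lt_top ENNReal.ofReal_lt_top (measure_lt_top _ _)
        · rw [Measure.smul_apply, Measure.dirac_apply' _ hY.isClosed.measurableSet.compl]
          simp [hy]
        · have hint : ∫ y', p x y' ∂(ENNReal.ofReal tt • Measure.dirac y) = tt * p x y := by
            rw [integral_smul_measure, integral_dirac' _ _ (hpcont x).stronglyMeasurable,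
              ENNReal.toReal_ofReal htt, smul_eq_mul]
          simp only
          rw [hint, sum_mul_factor]
          nlinarith [mul_le_mul_of_nonneg_left (hw1 x) htt]
      have hqD : ((fun i => tt * w1 i, tt * (∑ i, w1 i * xg i) - tt * p xg y) :
          (Fin m → ℝ) × ℝ) ∈ C1 + C2 :=
        Set.mem_add.mpr ⟨_, hq1mem, (0, 0), hC2zero, by simp⟩
      have hcontr := HD _ hqD
      simp only at hcontr
      have hval2 : (∑ i, xg i * (tt * w1 i)) = tt * ∑ i, w1 i * xg i := by
        rw [Finset.mul_sum]
        exact Finset.sum_congr rfl fun i _ => by ring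
      rw [hval2] at hcontr
      have hcancel : (ε - c₂) * (tt * (∑ i, w1 i * xg i) -
          (tt * (∑ i, w1 i * xg i) - tt * p xg y)) = u₂ := by
        rw [sub_sub_cancel, httdef]
        field_simp [hc3ne, ne_of_gt hpos]
      linarith
    -- hence xg ∈ K, contradiction with Hpt
    have hxgK : a + rstar ≤ ∑ i, w0 i * xg i := hFen2 xg ⟨hψneg, hpneg⟩
    have hflip : (∑ i, xg i * (-(w0 i))) = -(∑ i, w0 i * xg i) := by
      rw [← Finset.sum_neg_distrib]
      exact Finset.sum_congr rfl fun i _ => by ring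
    rw [hflip] at Hpt
    nlinarith [Hpt, hxgK, hc3, hu₂pos]
  ----------------------------------------------------------------
  -- Part 3 : assemble the dual solution
  ----------------------------------------------------------------
  obtain ⟨q1, hq1, q2, hq2, hsum⟩ := Set.mem_add.mp hmem
  rw [hC1] at hq1
  rw [hC2] at hq2
  obtain ⟨μ, hμfin, hμY, hμ⟩ := hq1
  obtain ⟨η, hη, hηi⟩ := hq2
  have hfst : ∀ i, q1.1 i + q2.1 i = -(w0 i) := by
    intro i
    have := congrArg Prod.fst hsum
    exact congrFun this i
  have hsnd : q1.2 + q2.2 = -a - rstar := congrArg Prod.snd hsum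
  refine ⟨μ, η, hμfin, hμY, hη, ?_, ?_⟩
  · -- rstar is a lower bound
    rintro z ⟨x, rfl⟩
    have e0 := hFen1 x
    have e1' := hμ x
    have e2' := hηi x
    have hsums : (∑ i, q1.1 i * x i) + (∑ i, q2.1 i * x i) = -(∑ i, w0 i * x i) := by
      rw [← Finset.sum_add_distrib, ← Finset.sum_neg_distrib]
      refine Finset.sum_congr rfl fun i _ => ?_
      linear_combination x i * hfst i
    simp only
    linarith
  · -- rstar is the greatest lower bound
    intro b hb
    refine hr.2 ?_
    rintro z ⟨x, hxK, rfl⟩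
    have hxK' : (∀ j, ψ j x ≤ 0) ∧ ∀ y ∈ Y, p x y ≤ 0 := by rw [hK] at hxK; exact hxK
    have hint : ∫ y, p x y ∂μ ≤ 0 := integral_nonpos_aux hμY (fun y hy => hxK'.2 y hy)
    have hpsi : ∑ j, η j * ψ j x ≤ 0 := by
      refine Finset.sum_nonpos fun j _ => ?_
      have := mul_le_mul_of_nonneg_left (hxK'.1 j) (hη j)
      simpa using this
    have hbx := hb (Set.mem_range_self (f := fun x : Fin m → ℝ =>
      h x + (∫ y, p x y ∂μ) + ∑ j, η j * ψ j x) x)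
    linarith
end

section
/- If the Slater condition holds (there exists u ∈ ℝ^m with p(u,y) < 0 for all y ∈ Y and ψ_j(u) < 0 for all j), then C_1 + C_2 is closed, i.e., the SCCCQ holds. -/
open MeasureTheory Pointwise

namespace SCCCQ
open MeasureTheory Filter Set Topology

variable {n : ℕ}

noncomputable def zc (l : ℕ) (y : Fin n → ℝ) : Fin n → ℤ := fun i => ⌊y i * 2 ^ l⌋

noncomputable def cube (l : ℕ) (z : Fin n → ℤ) : Set (Fin n → ℝ) := zc l ⁻¹' {z}

lemma mem_cube {l : ℕ} {z : Fin n → ℤ} {y : Fin n → ℝ} : y ∈ cube l z ↔ zc l y = z :=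
  Iff.rfl

lemma measurable_zc (l : ℕ) : Measurable (zc (n := n) l) := by
  apply measurable_pi_lambda
  intro i
  exact Measurable.floor ((measurable_pi_apply i).mul measurable_const)

lemma measurableSet_cube (l : ℕ) (z : Fin n → ℤ) : MeasurableSet (cube l z) :=
  measurable_zc l (MeasurableSet.singleton z)

lemma cube_pairwise_disjoint (l : ℕ) :
    Pairwise (Function.onFun Disjoint (cube (n := n) l)) := by
  intro z z' hzz'
  simp only [Function.onFun, Set.disjoint_left]
  intro y hy hy'
  exact hzz' ((mem_cube.1 hy).symm.trans (mem_cube.1 hy'))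

lemma dist_le_of_mem_cube {l : ℕ} {z : Fin n → ℤ} {y y' : Fin n → ℝ}
    (hy : y ∈ cube l z) (hy' : y' ∈ cube l z) : dist y y' ≤ (2 ^ l)⁻¹ := by
  rw [dist_pi_le_iff (by positivity)]
  intro i
  have h1 : ⌊y i * 2 ^ l⌋ = z i := congrFun (mem_cube.1 hy) i
  have h2 : ⌊y' i * 2 ^ l⌋ = z i := congrFun (mem_cube.1 hy') i
  rw [Int.floor_eq_iff] at h1 h2
  rw [Real.dist_eq, abs_le]
  have hp : (0:ℝ) < 2 ^ l := by positivity
  have hinv : (2:ℝ) ^ l * ((2:ℝ) ^ l)⁻¹ = 1 := mul_inv_cancel₀ (ne_of_gt hp)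
  constructor
  · nlinarith [h1.1, h1.2, h2.1, h2.2]
  · nlinarith [h1.1, h1.2, h2.1, h2.2]

noncomputable def pa (z : Fin n → ℤ) : Fin n → ℤ := fun i => Int.fdiv (z i) 2

lemma zc_succ (l : ℕ) (y : Fin n → ℝ) : zc l y = pa (zc (l + 1) y) := by
  funext i
  simp only [zc, pa]
  set a : ℝ := y i * 2 ^ l with ha
  have h2a : y i * 2 ^ (l+1) = a * 2 := by rw [ha]; ring
  rw [h2a]
  set k : ℤ := ⌊a * 2⌋ with hk
  set q : ℤ := Int.fdiv k 2 with hq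
  set r : ℤ := Int.fmod k 2 with hr
  have hdm : 2 * q + r = k := by have := Int.fmod_add_fdiv_mul k 2; linarith
  have hr0 : (0:ℝ) ≤ r := by exact_mod_cast Int.fmod_nonneg_of_pos k (by norm_num)
  have hr1 : (r:ℝ) ≤ 1 := by
    have : r < 2 := Int.fmod_lt_of_pos k (by norm_num)
    exact_mod_cast Int.lt_add_one_iff.mp this
  have hkr : (k:ℝ) = 2*q + r := by exact_mod_cast hdm.symm
  have hk1 : (k:ℝ) ≤ a * 2 := Int.floor_le _
  have hk2 : a * 2 < k + 1 := Int.lt_floor_add_one _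
  rw [Int.floor_eq_iff]
  constructor
  · rw [hkr] at hk1; linarith
  · rw [hkr] at hk2; push_cast; linarith

lemma cube_succ_subset {l : ℕ} {z' : Fin n → ℤ} : cube (l + 1) z' ⊆ cube l (pa z') := by
  intro y hy
  rw [mem_cube] at hy ⊢
  rw [zc_succ, hy]



noncomputable def off' {α : Type*} [DecidableEq α] (S : Finset α) (r : α → ℕ) (ω : α → ℝ)
    (b : ℝ) (z : α) : ℝ :=
  b + ∑ z' ∈ S.filter (fun z' => r z' < r z), ω z'

lemma tile {α : Type*} [DecidableEq α] (r : α → ℕ) (ω : α → ℝ) (b : ℝ) (S : Finset α)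
    (hr : Set.InjOn r S) (hω : ∀ z ∈ S, 0 ≤ ω z) :
    ((S : Set α).PairwiseDisjoint fun z => Ico (off' S r ω b z) (off' S r ω b z + ω z)) ∧
      (⋃ z ∈ S, Ico (off' S r ω b z) (off' S r ω b z + ω z)) = Ico b (b + ∑ z ∈ S, ω z) := by
  classical
  induction S using Finset.strongInduction with
  | _ S ih =>
    rcases S.eq_empty_or_nonempty with rfl | hS
    · simp
    obtain ⟨zM, hzM, hmax⟩ := S.exists_max_image r hS
    set S' := S.erase zM with hS'
    have hsub : S' ⊂ S := Finset.erase_ssubset hzM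
    have hr' : Set.InjOn r S' := hr.mono (by exact_mod_cast hsub.subset)
    have hω' : ∀ z ∈ S', 0 ≤ ω z := fun z hz => hω z (hsub.subset hz)
    obtain ⟨ihd, ihu⟩ := ih S' hsub hr' hω'
    -- off' agrees on S'
    have hoff : ∀ z ∈ S', off' S r ω b z = off' S' r ω b z := by
      intro z hz
      have hz' : z ∈ S := hsub.subset hz
      have : S.filter (fun z' => r z' < r z) = S'.filter (fun z' => r z' < r z) := by
        rw [hS', Finset.filter_erase, Finset.erase_eq_of_notMem]
        simp only [Finset.mem_filter, not_and, not_lt]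
        intro _; exact hmax z hz'
      rw [off', off', this]
    -- off' at zM
    have hoffM : off' S r ω b zM = b + ∑ z ∈ S', ω z := by
      rw [off']
      congr 1
      apply Finset.sum_congr _ (fun _ _ => rfl)
      ext z
      simp only [Finset.mem_filter, hS', Finset.mem_erase]
      constructor
      · rintro ⟨hz, hlt⟩; exact ⟨fun h => absurd (h ▸ hlt) (lt_irrefl _), hz⟩
      · rintro ⟨hne, hz⟩
        refine ⟨hz, lt_of_le_of_ne (hmax z hz) fun h => hne (hr hz hzM h)⟩
    have hsum : ∑ z ∈ S, ω z = (∑ z ∈ S', ω z) + ω zM := by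
      rw [hS', Finset.sum_erase_add _ _ hzM]
    have hsum0 : 0 ≤ ∑ z ∈ S', ω z := Finset.sum_nonneg hω'
    have hωM : 0 ≤ ω zM := hω zM hzM
    have hSins : S = insert zM S' := (Finset.insert_erase hzM).symm
    set f : α → Set ℝ := fun z => Ico (off' S r ω b z) (off' S r ω b z + ω z) with hf
    -- union
    have hunion : (⋃ z ∈ S, f z) = Ico b (b + ∑ z ∈ S, ω z) := by
      rw [hsum]
      rw [show (⋃ z ∈ S, f z) = f zM ∪ ⋃ z ∈ S', f z by
        conv_lhs => rw [hSins]
        exact Finset.set_biUnion_insert _ _ _]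
      have h1 : (⋃ z ∈ S', f z) = Ico b (b + ∑ z ∈ S', ω z) := by
        rw [← ihu]
        exact Set.iUnion₂_congr fun z hz => by show Ico (off' S r ω b z) (off' S r ω b z + ω z) = _; rw [hoff z hz]
      rw [h1]
      show Ico (off' S r ω b zM) (off' S r ω b zM + ω zM) ∪ _ = _
      rw [hoffM, union_comm,
        Set.Ico_union_Ico_eq_Ico (by linarith) (by linarith)]
      ring_nf
    refine ⟨?_, hunion⟩
    -- disjointness
    intro z hz z' hz' hne
    have key : ∀ w ∈ S', Disjoint (f zM) (f w) := by
      intro w hw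
      have hsubIco : f w ⊆ Ico b (b + ∑ z ∈ S', ω z) := by
        show Ico (off' S r ω b w) (off' S r ω b w + ω w) ⊆ _
        rw [hoff w hw, ← ihu]
        exact Set.subset_biUnion_of_mem (u := fun z => Ico (off' S' r ω b z) (off' S' r ω b z + ω z)) hw
      show Disjoint (Ico (off' S r ω b zM) (off' S r ω b zM + ω zM)) (f w)
      rw [hoffM]
      exact (Set.Ico_disjoint_Ico_same).symm.mono_right hsubIco
    have hz2 := Finset.mem_insert.mp (hSins ▸ Finset.mem_coe.mp hz)
    have hz2' := Finset.mem_insert.mp (hSins ▸ Finset.mem_coe.mp hz')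
    show Disjoint (f z) (f z')
    rcases hz2 with rfl | hz2 <;> rcases hz2' with rfl | hz2'
    · exact absurd rfl hne
    · exact key _ hz2'
    · exact (key _ hz2).symm
    · have := ihd hz2 hz2' hne
      rw [Function.onFun] at this
      rw [hf]
      simp only []
      rw [hoff _ hz2, hoff _ hz2']
      exact this
variable {n : ℕ}

lemma finite_zc_image {Y : Set (Fin n → ℝ)} (hY : IsCompact Y) (l : ℕ) :
    (zc l '' Y).Finite := by
  obtain ⟨R, hR⟩ := hY.isBounded.subset_closedBall 0
  apply Set.Finite.subset (Finset.Icc (fun _ : Fin n => -⌈R * 2 ^ l⌉) fun _ => ⌈R * 2 ^ l⌉).finite_toSet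
  rintro z ⟨y, hy, rfl⟩
  have hyR : ∀ i, |y i| ≤ R := by
    intro i
    have h1 : dist (y i) 0 ≤ dist y 0 := dist_le_pi_dist y 0 i
    have h2 : dist y 0 ≤ R := by simpa [Metric.mem_closedBall] using hR hy
    simpa [Real.dist_eq] using h1.trans h2
  simp only [Finset.coe_Icc, Set.mem_Icc]
  have hp : (0:ℝ) < 2 ^ l := by positivity
  constructor <;> intro i
  · show -⌈R * 2 ^ l⌉ ≤ ⌊y i * 2 ^ l⌋
    have h1 : -(R * 2 ^ l) ≤ y i * 2 ^ l := by nlinarith [abs_le.1 (hyR i)]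
    calc -⌈R * 2 ^ l⌉ = ⌊-(R * 2 ^ l)⌋ := by rw [Int.floor_neg]
    _ ≤ ⌊y i * 2 ^ l⌋ := Int.floor_mono h1
  · show ⌊y i * 2 ^ l⌋ ≤ ⌈R * 2 ^ l⌉
    have h1 : y i * 2 ^ l ≤ R * 2 ^ l := by nlinarith [abs_le.1 (hyR i)]
    exact (Int.floor_mono h1).trans (Int.floor_le_ceil _)

variable {Y : Set (Fin n → ℝ)}

noncomputable def ZS (hY : IsCompact Y) (l : ℕ) : Finset (Fin n → ℤ) :=
  (finite_zc_image hY l).toFinset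

lemma mem_ZS {hY : IsCompact Y} {l : ℕ} {z : Fin n → ℤ} :
    z ∈ ZS hY l ↔ ∃ y ∈ Y, zc l y = z := by
  simp [ZS, Set.Finite.mem_toFinset, Set.mem_image]

lemma pa_mem_ZS {hY : IsCompact Y} {l : ℕ} {z' : Fin n → ℤ} (h : z' ∈ ZS hY (l+1)) :
    pa z' ∈ ZS hY l := by
  rw [mem_ZS] at h ⊢
  obtain ⟨y, hy, rfl⟩ := h
  exact ⟨y, hy, zc_succ l y⟩

open Classical in
noncomputable def cpt (Y : Set (Fin n → ℝ)) (l : ℕ) (z : Fin n → ℤ) : Fin n → ℝ :=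
  if h : z ∈ zc l '' Y then h.choose else 0

lemma cpt_mem {hY : IsCompact Y} {l : ℕ} {z : Fin n → ℤ} (h : z ∈ ZS hY l) :
    cpt Y l z ∈ cube l z ∩ Y := by
  rw [ZS, Set.Finite.mem_toFinset] at h
  rw [cpt, dif_pos h]
  obtain ⟨hy, hz⟩ := h.choose_spec
  exact ⟨mem_cube.2 hz, hy⟩

noncomputable def rk : (Fin n → ℤ) → ℕ := (exists_injective_nat (Fin n → ℤ)).choose

lemma rk_inj : Function.Injective (rk (n := n)) :=
  (exists_injective_nat (Fin n → ℤ)).choose_spec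

variable (hY : IsCompact Y) (mm : ℕ → (Fin n → ℤ) → ℝ)

open Classical in
/-- left endpoints of stacked intervals -/
noncomputable def off : ℕ → (Fin n → ℤ) → ℝ
  | 0 => fun z => off' (ZS hY 0) rk (mm 0) 0 z
  | (l+1) => fun z =>
      off' ((ZS hY (l+1)).filter fun w => pa w = pa z) rk (mm (l+1)) (off l (pa z)) z

/-- the interval of cube (l, z) -/
noncomputable def Iv (l : ℕ) (z : Fin n → ℤ) : Set ℝ :=
  Ico (off hY mm l z) (off hY mm l z + mm l z)

variable {t : ℝ} (hm0 : ∀ l z, 0 ≤ mm l z)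
  (hmtot : ∀ l, ∑ z ∈ ZS hY l, mm l z = t)
  (hmcons : ∀ l z, mm l z = ∑ z' ∈ (ZS hY (l+1)).filter fun w => pa w = z, mm (l+1) z')

include hm0 hmcons in
lemma childtile : ∀ l : ℕ, ∀ w₀ : Fin n → ℤ,
      ((↑((ZS hY (l+1)).filter fun w => pa w = w₀) : Set (Fin n → ℤ)).PairwiseDisjoint
        fun z => Iv hY mm (l+1) z) ∧
      (⋃ z ∈ (ZS hY (l+1)).filter fun w => pa w = w₀, Iv hY mm (l+1) z)
        = Iv hY mm l w₀ := by
  classical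
intro l w₀
  have hinj : Set.InjOn rk ((((ZS hY (l+1)).filter fun w => pa w = w₀) :
    Finset (Fin n → ℤ)) : Set (Fin n → ℤ)) := rk_inj.injOn
  have h := tile rk (mm (l+1)) (off hY mm l w₀)
    ((ZS hY (l+1)).filter fun w => pa w = w₀) hinj (fun z _ => hm0 (l+1) z)
  have hoffeq : ∀ z ∈ (ZS hY (l+1)).filter fun w => pa w = w₀,
      off' ((ZS hY (l+1)).filter fun w => pa w = w₀) rk (mm (l+1))
        (off hY mm l w₀) z = off hY mm (l+1) z := by
    intro z hz
    have hpz : pa z = w₀ := (Finset.mem_filter.mp hz).2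
    show _ = off' ((ZS hY (l+1)).filter fun w => pa w = pa z) rk (mm (l+1))
      (off hY mm l (pa z)) z
    rw [hpz]
  constructor
  · intro z hz z' hz' hne
    have := h.1 hz hz' hne
    rw [Function.onFun] at this ⊢
    rw [Iv, Iv, ← hoffeq z hz, ← hoffeq z' hz']
    exact this
  · rw [show (⋃ z ∈ (ZS hY (l+1)).filter fun w => pa w = w₀, Iv hY mm (l+1) z)
        = ⋃ z ∈ (ZS hY (l+1)).filter fun w => pa w = w₀,
          Ico (off' ((ZS hY (l+1)).filter fun w => pa w = w₀) rk (mm (l+1))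
            (off hY mm l w₀) z)
            (off' ((ZS hY (l+1)).filter fun w => pa w = w₀) rk (mm (l+1))
              (off hY mm l w₀) z + mm (l+1) z) from
      Set.iUnion₂_congr fun z hz => by rw [Iv, hoffeq z hz]]
    rw [h.2, Iv, ← hmcons l w₀]

include hm0 hmcons in
lemma Iv_succ_subset {l : ℕ} {z' : Fin n → ℤ} (hz' : z' ∈ ZS hY (l+1)) :
    Iv hY mm (l+1) z' ⊆ Iv hY mm l (pa z') := by
  rw [← (childtile hY mm hm0 hmcons l (pa z')).2]
  exact Set.subset_biUnion_of_mem (u := fun z => Iv hY mm (l+1) z)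
    (Finset.mem_filter.mpr ⟨hz', rfl⟩)

include hm0 hmtot hmcons in
lemma tiling : ∀ l : ℕ,
    ((ZS hY l : Set (Fin n → ℤ)).PairwiseDisjoint fun z => Iv hY mm l z) ∧
    (⋃ z ∈ ZS hY l, Iv hY mm l z) = Ico 0 t := by
  classical
  have childtile := childtile hY mm hm0 hmcons
  intro l
  induction l with
  | zero =>
    have h := tile rk (mm 0) 0 (ZS hY 0) rk_inj.injOn (fun z _ => hm0 0 z)
    have hoffeq : ∀ z, off' (ZS hY 0) rk (mm 0) 0 z = off hY mm 0 z := fun z => rfl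
    constructor
    · intro z hz z' hz' hne
      have := h.1 hz hz' hne
      rw [Function.onFun] at this ⊢
      rw [Iv, Iv, ← hoffeq z, ← hoffeq z']
      exact this
    · rw [show (⋃ z ∈ ZS hY 0, Iv hY mm 0 z) = ⋃ z ∈ ZS hY 0,
          Ico (off' (ZS hY 0) rk (mm 0) 0 z) (off' (ZS hY 0) rk (mm 0) 0 z + mm 0 z) from
        Set.iUnion₂_congr fun z hz => by rw [Iv, hoffeq z]]
      rw [h.2, hmtot 0, zero_add]
  | succ l ih =>
    obtain ⟨ihd, ihu⟩ := ih
    have hsubI : ∀ z' ∈ ZS hY (l+1), Iv hY mm (l+1) z' ⊆ Iv hY mm l (pa z') := by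
      intro z' hz'
      rw [← (childtile l (pa z')).2]
      exact Set.subset_biUnion_of_mem (u := fun z => Iv hY mm (l+1) z)
        (Finset.mem_filter.mpr ⟨hz', rfl⟩)
    constructor
    · intro z hz z' hz' hne
      rw [Finset.mem_coe] at hz hz'
      by_cases hpp : pa z = pa z'
      · have := (childtile l (pa z)).1 (Finset.mem_filter.mpr ⟨hz, rfl⟩)
          (Finset.mem_filter.mpr ⟨hz', hpp.symm⟩) hne
        exact this
      · have hd := ihd (Finset.mem_coe.2 (pa_mem_ZS hz)) (Finset.mem_coe.2 (pa_mem_ZS hz')) hpp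
        rw [Function.onFun] at hd ⊢
        exact hd.mono (hsubI z hz) (hsubI z' hz')
    · apply Set.Subset.antisymm
      · refine Set.iUnion₂_subset fun z hz => ?_
        rw [← ihu]
        exact (hsubI z hz).trans (Set.subset_biUnion_of_mem (u := fun w => Iv hY mm l w)
          (Finset.mem_coe.2 (pa_mem_ZS hz)))
      · rw [← ihu]
        refine Set.iUnion₂_subset fun z₀ hz₀ u hu => ?_
        rw [← (childtile l z₀).2] at hu
        obtain ⟨z, hz, hu⟩ := Set.mem_iUnion₂.mp hu
        exact Set.mem_biUnion (Finset.mem_coe.2 (Finset.mem_filter.mp hz).1) hu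

noncomputable def gl (l : ℕ) (u : ℝ) : Fin n → ℝ :=
  ∑ z ∈ ZS hY l, (Iv hY mm l z).indicator (fun _ => cpt Y l z) u

lemma gl_measurable (l : ℕ) : Measurable (gl hY mm l) := by
  apply Finset.measurable_sum
  intro z _
  exact Measurable.indicator measurable_const measurableSet_Ico

include hm0 hmtot hmcons

lemma gl_apply_mem {l : ℕ} {z : Fin n → ℤ} {u : ℝ} (hz : z ∈ ZS hY l)
    (hu : u ∈ Iv hY mm l z) : gl hY mm l u = cpt Y l z := by
  rw [gl]
  rw [Finset.sum_eq_single_of_mem z hz]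
  · exact Set.indicator_of_mem hu _
  · intro z' hz' hne
    apply Set.indicator_of_notMem
    have hd := (tiling hY mm hm0 hmtot hmcons l).1 (Finset.mem_coe.2 hz')
      (Finset.mem_coe.2 hz) hne
    rw [Function.onFun] at hd
    exact fun hu' => (Set.disjoint_left.mp hd hu') hu

lemma gl_cover {l : ℕ} {u : ℝ} (hu : u ∈ Ico (0:ℝ) t) :
    ∃ z ∈ ZS hY l, u ∈ Iv hY mm l z := by
  have := (tiling hY mm hm0 hmtot hmcons l).2
  rw [← this] at hu
  obtain ⟨z, hz, hu⟩ := Set.mem_iUnion₂.mp hu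
  exact ⟨z, hz, hu⟩

lemma gl_mem_Y {l : ℕ} {u : ℝ} (hu : u ∈ Ico (0:ℝ) t) : gl hY mm l u ∈ Y := by
  obtain ⟨z, hz, huz⟩ := gl_cover hY mm hm0 hmtot hmcons (l := l) hu
  rw [gl_apply_mem hY mm hm0 hmtot hmcons hz huz]
  exact (cpt_mem hz).2

lemma gl_dist_succ {l : ℕ} {u : ℝ} (hu : u ∈ Ico (0:ℝ) t) :
    dist (gl hY mm (l+1) u) (gl hY mm l u) ≤ ((2:ℝ) ^ l)⁻¹ := by
  obtain ⟨z', hz', huz'⟩ := gl_cover hY mm hm0 hmtot hmcons (l := l+1) hu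
  have hpz : pa z' ∈ ZS hY l := pa_mem_ZS hz'
  have husub : u ∈ Iv hY mm l (pa z') := by
    exact Iv_succ_subset hY mm hm0 hmcons hz' huz'
  rw [gl_apply_mem hY mm hm0 hmtot hmcons hz' huz',
    gl_apply_mem hY mm hm0 hmtot hmcons hpz husub]
  have h1 := cpt_mem hz'
  have h2 := cpt_mem hpz
  exact dist_le_of_mem_cube (cube_succ_subset h1.1) h2.1

lemma gl_tendsto (u : ℝ) : ∃ L, Tendsto (fun l => gl hY mm l u) atTop (𝓝 L) := by
  by_cases hu : u ∈ Ico (0:ℝ) t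
  · apply cauchySeq_tendsto_of_complete
    apply cauchySeq_of_le_geometric_two (C := 2)
    intro l
    rw [dist_comm]
    calc dist (gl hY mm (l+1) u) (gl hY mm l u) ≤ ((2:ℝ) ^ l)⁻¹ :=
          gl_dist_succ hY mm hm0 hmtot hmcons hu
    _ = 2 / 2 / 2 ^ l := by ring
  · refine ⟨0, ?_⟩
    have : ∀ l, gl hY mm l u = 0 := by
      intro l
      rw [gl]
      apply Finset.sum_eq_zero
      intro z hz
      apply Set.indicator_of_notMem
      intro huz
      apply hu
      rw [← (tiling hY mm hm0 hmtot hmcons l).2]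
      exact Set.mem_biUnion (Finset.mem_coe.2 hz) huz
    simp only [this]
    exact tendsto_const_nhds

omit hm0 hmtot hmcons in
open Classical in
noncomputable def GG (u : ℝ) : Fin n → ℝ :=
  if h : ∃ L, Tendsto (fun l => gl hY mm l u) atTop (𝓝 L) then h.choose else 0

lemma GG_tendsto (u : ℝ) : Tendsto (fun l => gl hY mm l u) atTop (𝓝 (GG hY mm u)) := by
  have h := gl_tendsto hY mm hm0 hmtot hmcons (t := t) u
  rw [GG, dif_pos h]
  exact h.choose_spec

lemma GG_measurable : Measurable (GG hY mm : ℝ → (Fin n → ℝ)) := by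
  apply measurable_of_tendsto_metrizable (f := fun l => gl hY mm l)
  · exact fun l => gl_measurable hY mm l
  · rw [tendsto_pi_nhds]
    exact GG_tendsto hY mm hm0 hmtot hmcons (t := t)

lemma GG_mem_Y {u : ℝ} (hu : u ∈ Ico (0:ℝ) t) : GG hY mm u ∈ Y := by
  apply hY.isClosed.mem_of_tendsto (GG_tendsto hY mm hm0 hmtot hmcons (t := t) u)
  exact Eventually.of_forall fun l => gl_mem_Y hY mm hm0 hmtot hmcons hu

lemma GG_dist {u : ℝ} (hu : u ∈ Ico (0:ℝ) t) (l : ℕ) :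
    dist (GG hY mm u) (gl hY mm l u) ≤ 2 * ((2:ℝ) ^ l)⁻¹ := by
  have key : ∀ d : ℕ, dist (gl hY mm (l+d) u) (gl hY mm l u)
      ≤ 2 * ((2:ℝ) ^ l)⁻¹ - 2 * ((2:ℝ) ^ (l+d))⁻¹ := by
    intro d
    induction d with
    | zero => simp
    | succ d ih =>
      have h1 := gl_dist_succ hY mm hm0 hmtot hmcons (l := l + d) hu
      have h2 : dist (gl hY mm (l+(d+1)) u) (gl hY mm l u)
          ≤ dist (gl hY mm (l+d+1) u) (gl hY mm (l+d) u) + dist (gl hY mm (l+d) u) (gl hY mm l u) := by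
        rw [show l+(d+1) = l+d+1 by ring]
        exact dist_triangle _ _ _
      have h3 : ((2:ℝ) ^ (l+(d+1)))⁻¹ = ((2:ℝ) ^ (l+d))⁻¹ / 2 := by
        rw [show l+(d+1) = (l+d)+1 by ring, pow_succ]
        field_simp
      rw [h3]
      calc dist (gl hY mm (l+(d+1)) u) (gl hY mm l u)
          ≤ ((2:ℝ) ^ (l+d))⁻¹ + (2 * ((2:ℝ) ^ l)⁻¹ - 2 * ((2:ℝ) ^ (l+d))⁻¹) := by
            linarith [h2]
      _ = 2 * ((2:ℝ) ^ l)⁻¹ - 2 * (((2:ℝ) ^ (l+d))⁻¹ / 2) := by ring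
  have htd : Tendsto (fun d => dist (gl hY mm (l+d) u) (gl hY mm l u)) atTop
      (𝓝 (dist (GG hY mm u) (gl hY mm l u))) := by
    apply Tendsto.dist _ tendsto_const_nhds
    have h1 := (GG_tendsto hY mm hm0 hmtot hmcons (t := t) u).comp (tendsto_add_atTop_nat l)
    simpa [add_comm, Function.comp_def] using h1
  apply le_of_tendsto htd
  apply Eventually.of_forall
  intro d
  calc dist (gl hY mm (l+d) u) (gl hY mm l u)
      ≤ 2 * ((2:ℝ) ^ l)⁻¹ - 2 * ((2:ℝ) ^ (l+d))⁻¹ := key d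
  _ ≤ 2 * ((2:ℝ) ^ l)⁻¹ := by
      have : (0:ℝ) < ((2:ℝ) ^ (l+d))⁻¹ := by positivity
      linarith

omit hm0 hmtot hmcons

lemma conc_inter {ρ : Measure (Fin n → ℝ)} (hconc : ρ Yᶜ = 0) (A : Set (Fin n → ℝ)) :
    ρ A = ρ (A ∩ Y) := by
  apply le_antisymm _ (measure_mono inter_subset_left)
  calc ρ A ≤ ρ ((A ∩ Y) ∪ (A ∩ Yᶜ)) := by
        apply measure_mono
        rw [← inter_union_distrib_left, union_compl_self, inter_univ]
  _ ≤ ρ (A ∩ Y) + ρ (A ∩ Yᶜ) := measure_union_le _ _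
  _ ≤ ρ (A ∩ Y) + ρ Yᶜ := add_le_add le_rfl (measure_mono inter_subset_right)
  _ = ρ (A ∩ Y) := by rw [hconc, add_zero]

lemma Y_decomp (l : ℕ) : Y = ⋃ z ∈ ZS hY l, (cube l z ∩ Y) := by
  ext y
  constructor
  · intro hy
    exact Set.mem_biUnion (Finset.mem_coe.2 (mem_ZS.2 ⟨y, hy, rfl⟩))
      ⟨mem_cube.2 rfl, hy⟩
  · intro hy
    obtain ⟨z, _, _, hy⟩ := Set.mem_iUnion₂.mp hy
    exact hy

lemma cube_decomp (l : ℕ) (z : Fin n → ℤ) :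
    cube l z ∩ Y = ⋃ z' ∈ (ZS hY (l+1)).filter fun w => pa w = z, (cube (l+1) z' ∩ Y) := by
  ext y
  constructor
  · rintro ⟨hyc, hyY⟩
    refine Set.mem_biUnion (Finset.mem_coe.2 (Finset.mem_filter.mpr
      ⟨mem_ZS.2 ⟨y, hyY, rfl⟩, ?_⟩)) ⟨mem_cube.2 rfl, hyY⟩
    rw [← zc_succ]
    exact mem_cube.1 hyc
  · intro hy
    obtain ⟨z', hz', hy⟩ := Set.mem_iUnion₂.mp hy
    have hpz : pa z' = z := (Finset.mem_filter.mp (Finset.mem_coe.1 hz')).2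
    exact ⟨hpz ▸ cube_succ_subset hy.1, hy.2⟩

lemma pd_cubeY (l : ℕ) : ((ZS hY l : Set (Fin n → ℤ))).PairwiseDisjoint
    fun z => cube (n := n) l z ∩ Y := by
  intro z hz z' hz' hne
  exact ((cube_pairwise_disjoint l hne).mono inter_subset_left inter_subset_left)

lemma meas_total {ρ : Measure (Fin n → ℝ)} [IsFiniteMeasure ρ] (hconc : ρ Yᶜ = 0) (l : ℕ) :
    (ρ Set.univ).toReal = ∑ z ∈ ZS hY l, (ρ (cube l z)).toReal := by
  have h1 : ρ Set.univ = ρ Y := by rw [conc_inter hconc Set.univ, Set.univ_inter]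
  have h2 : ρ Y = ρ (⋃ z ∈ ZS hY l, (cube l z ∩ Y)) := by conv_lhs => rw [Y_decomp hY l]
  rw [h1, h2, measure_biUnion_finset (pd_cubeY hY l)
    (fun z _ => (measurableSet_cube l z).inter hY.isClosed.measurableSet),
    ENNReal.toReal_sum (fun z _ => measure_ne_top _ _)]
  exact Finset.sum_congr rfl fun z _ => by rw [← conc_inter hconc]

lemma meas_cube_sum {ρ : Measure (Fin n → ℝ)} [IsFiniteMeasure ρ] (hconc : ρ Yᶜ = 0)
    (l : ℕ) (z : Fin n → ℤ) :
    (ρ (cube l z)).toReal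
      = ∑ z' ∈ (ZS hY (l+1)).filter fun w => pa w = z, (ρ (cube (l+1) z')).toReal := by
  have hsub : ((((ZS hY (l+1)).filter fun w => pa w = z) : Finset (Fin n → ℤ)) :
      Set (Fin n → ℤ)) ⊆ ((ZS hY (l+1) : Finset (Fin n → ℤ)) : Set (Fin n → ℤ)) := by
    intro x hx
    exact Finset.mem_coe.2 (Finset.mem_filter.mp (Finset.mem_coe.1 hx)).1
  have h2 : ρ (cube l z ∩ Y)
      = ρ (⋃ z' ∈ (ZS hY (l+1)).filter fun w => pa w = z, (cube (l+1) z' ∩ Y)) := by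
    conv_lhs => rw [cube_decomp hY l z]
  rw [conc_inter hconc (cube l z), h2, measure_biUnion_finset
    ((pd_cubeY hY (l+1)).subset hsub)
    (fun z' _ => (measurableSet_cube (l+1) z').inter hY.isClosed.measurableSet),
    ENNReal.toReal_sum (fun z' _ => measure_ne_top _ _)]
  exact Finset.sum_congr rfl fun z' _ => by rw [← conc_inter hconc]

lemma ae_mem_Y {ρ : Measure (Fin n → ℝ)} (hconc : ρ Yᶜ = 0) : ∀ᵐ y ∂ρ, y ∈ Y := by
  rw [ae_iff]
  have : {y : Fin n → ℝ | ¬ y ∈ Y} = Yᶜ := rfl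
  rw [this, hconc]

lemma integrable_of_conc {ρ : Measure (Fin n → ℝ)} [IsFiniteMeasure ρ] (hconc : ρ Yᶜ = 0)
    {f : (Fin n → ℝ) → ℝ} (hf : Continuous f) {C : ℝ} (hC : ∀ y ∈ Y, ‖f y‖ ≤ C) :
    Integrable f ρ := by
  apply Integrable.mono' (integrable_const C) hf.measurable.aestronglyMeasurable
  filter_upwards [ae_mem_Y hconc] with y hy
  exact hC y hy

include hY in
lemma weak_limit (ρ : ℕ → Measure (Fin n → ℝ)) (hfin : ∀ j, IsFiniteMeasure (ρ j))
    (hconc : ∀ j, ρ j Yᶜ = 0) (t : ℝ)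
    (ht : Tendsto (fun j => (ρ j Set.univ).toReal) atTop (𝓝 t))
    (M : ℕ → (Fin n → ℤ) → ℝ)
    (hm : ∀ l z, Tendsto (fun j => (ρ j (cube l z)).toReal) atTop (𝓝 (M l z))) :
    ∃ μ : Measure (Fin n → ℝ), IsFiniteMeasure μ ∧ μ Yᶜ = 0 ∧
      ∀ f : (Fin n → ℝ) → ℝ, Continuous f →
        Tendsto (fun j => ∫ y, f y ∂(ρ j)) atTop (𝓝 (∫ y, f y ∂μ)) := by
  classical
  haveI := hfin
  have hm0' : ∀ l z, 0 ≤ M l z := fun l z =>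
    ge_of_tendsto (hm l z) (Eventually.of_forall fun j => ENNReal.toReal_nonneg)
  have ht0 : 0 ≤ t := ge_of_tendsto ht (Eventually.of_forall fun j => ENNReal.toReal_nonneg)
  have htot : ∀ l, ∑ z ∈ ZS hY l, M l z = t := by
    intro l
    refine tendsto_nhds_unique (tendsto_finset_sum _ fun z _ => hm l z) ?_
    have h1 : (fun j => ∑ z ∈ ZS hY l, (ρ j (cube l z)).toReal)
        = fun j => (ρ j Set.univ).toReal := funext fun j => (meas_total hY (hconc j) l).symm
    rw [h1]; exact ht
  have hcons : ∀ l z, M l z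
      = ∑ z' ∈ (ZS hY (l+1)).filter fun w => pa w = z, M (l+1) z' := by
    intro l z
    refine tendsto_nhds_unique (hm l z) ?_
    have h1 : (fun j => (ρ j (cube l z)).toReal)
        = fun j => ∑ z' ∈ (ZS hY (l+1)).filter fun w => pa w = z,
            (ρ j (cube (l+1) z')).toReal :=
      funext fun j => meas_cube_sum hY (hconc j) l z
    rw [h1]
    exact tendsto_finset_sum _ fun z' _ => hm (l+1) z'
  have hGmeas : Measurable (GG hY M) := GG_measurable hY M hm0' htot hcons
  refine ⟨Measure.map (GG hY M) ((volume : Measure ℝ).restrict (Ico 0 t)), ?_, ?_, ?_⟩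
  · constructor
    rw [Measure.map_apply hGmeas MeasurableSet.univ, Set.preimage_univ,
      Measure.restrict_apply_univ, Real.volume_Ico]
    exact ENNReal.ofReal_lt_top
  · rw [Measure.map_apply hGmeas hY.isClosed.measurableSet.compl,
      Measure.restrict_apply (hGmeas hY.isClosed.measurableSet.compl)]
    have : GG hY M ⁻¹' Yᶜ ∩ Ico 0 t = ∅ := by
      rw [Set.eq_empty_iff_forall_notMem]
      rintro u ⟨hu1, hu2⟩
      exact hu1 (GG_mem_Y hY M hm0' htot hcons hu2)
    rw [this, measure_empty]
  · intro f hf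
    obtain ⟨C₀, hC₀⟩ := hY.exists_bound_of_continuousOn hf.continuousOn
    set C := max C₀ 0 with hCdef
    have hC : ∀ y ∈ Y, ‖f y‖ ≤ C := fun y hy => (hC₀ y hy).trans (le_max_left _ _)
    have hucont := hY.uniformContinuousOn_of_continuous hf.continuousOn
    rw [Metric.uniformContinuousOn_iff] at hucont
    have hI4 : ∫ y, f y ∂(Measure.map (GG hY M) ((volume : Measure ℝ).restrict (Ico 0 t)))
        = ∫ u in Ico (0:ℝ) t, f (GG hY M u) :=
      integral_map hGmeas.aemeasurable hf.aestronglyMeasurable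
    have hI1 : ∀ l, ∫ u in Ico (0:ℝ) t, f (gl hY M l u)
        = ∑ z ∈ ZS hY l, M l z * f (cpt Y l z) := by
      intro l
      have hun := (tiling hY M hm0' htot hcons l).2
      have hpd := (tiling hY M hm0' htot hcons l).1
      have hres : ∫ u in Ico (0:ℝ) t, f (gl hY M l u)
          = ∫ u in ⋃ z ∈ ZS hY l, Iv hY M l z, f (gl hY M l u) := by rw [hun]
      have hint : ∀ z ∈ ZS hY l, IntegrableOn (fun u => f (gl hY M l u)) (Iv hY M l z) volume := by
        intro z hz
        refine IntegrableOn.congr_fun (f := fun _ => f (cpt Y l z))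
          (integrableOn_const measure_Ico_lt_top.ne) ?_ measurableSet_Ico
        intro u hu
        simp only
        rw [gl_apply_mem hY M hm0' htot hcons hz hu]
      rw [hres, integral_biUnion_finset (s := fun z => Iv hY M l z) (ZS hY l)
        (fun z _ => measurableSet_Ico) hpd hint]
      refine Finset.sum_congr rfl fun z hz => ?_
      have hIvIco : Iv hY M l z = Ico (off hY M l z) (off hY M l z + M l z) := rfl
      rw [hIvIco, setIntegral_congr_fun (f := fun u => f (gl hY M l u))
        (g := fun _ => f (cpt Y l z)) measurableSet_Ico
        (fun u hu => by
          show f (gl hY M l u) = _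
          rw [gl_apply_mem hY M hm0' htot hcons hz (show u ∈ Iv hY M l z from hu)]),
        setIntegral_const]
      rw [measureReal_def, Real.volume_Ico, show off hY M l z + M l z - off hY M l z = M l z by ring,
        ENNReal.toReal_ofReal (hm0' l z), smul_eq_mul]
    rw [Metric.tendsto_atTop]
    intro ε hε
    have h2t3 : (0:ℝ) < 2*t+3 := by linarith
    set ε' := ε / (2*t+3) with hε'def
    have hε' : 0 < ε' := by positivity
    obtain ⟨δ, hδ0, hδ⟩ := hucont ε' hε'
    obtain ⟨l, hl⟩ : ∃ l : ℕ, 2 * ((2:ℝ)^l)⁻¹ < δ := by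
      obtain ⟨l, hl⟩ := pow_unbounded_of_one_lt (R := ℝ) (2/δ) one_lt_two
      refine ⟨l, ?_⟩
      have hp : (0:ℝ) < 2^l := by positivity
      rw [div_lt_iff₀ hδ0] at hl
      rw [mul_inv_lt_iff₀ hp]  -- might need different name
      nlinarith
    have hl2 : ((2:ℝ)^l)⁻¹ < δ := by
      have hp : (0:ℝ) < ((2:ℝ)^l)⁻¹ := by positivity
      linarith
    have hIntG : IntegrableOn (fun u => f (GG hY M u)) (Ico 0 t) volume := by
      refine Integrable.mono' (g := fun _ => C) (integrableOn_const measure_Ico_lt_top.ne)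
        ((hf.measurable.comp hGmeas).aestronglyMeasurable) ?_
      filter_upwards [ae_restrict_mem measurableSet_Ico] with u hu
      exact hC _ (GG_mem_Y hY M hm0' htot hcons hu)
    have hIntg : IntegrableOn (fun u => f (gl hY M l u)) (Ico 0 t) volume := by
      refine Integrable.mono' (g := fun _ => C) (integrableOn_const measure_Ico_lt_top.ne)
        ((hf.measurable.comp (gl_measurable hY M l)).aestronglyMeasurable) ?_
      filter_upwards [ae_restrict_mem measurableSet_Ico] with u hu
      exact hC _ (gl_mem_Y hY M hm0' htot hcons hu)
    have hI2 : |(∫ u in Ico (0:ℝ) t, f (GG hY M u)) - ∑ z ∈ ZS hY l, M l z * f (cpt Y l z)|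
        ≤ ε' * t := by
      rw [← hI1 l, ← integral_sub hIntG hIntg]
      have h1 : |∫ u in Ico (0:ℝ) t, (f (GG hY M u) - f (gl hY M l u))|
          ≤ ∫ u in Ico (0:ℝ) t, |f (GG hY M u) - f (gl hY M l u)| := by
        simpa [Real.norm_eq_abs] using norm_integral_le_integral_norm
          (μ := (volume : Measure ℝ).restrict (Ico 0 t))
          (fun u => f (GG hY M u) - f (gl hY M l u))
      refine h1.trans ?_
      have h2 : ∫ u in Ico (0:ℝ) t, |f (GG hY M u) - f (gl hY M l u)|
          ≤ ∫ _u in Ico (0:ℝ) t, ε' := by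
        refine setIntegral_mono_on (hIntG.sub hIntg).abs
          (integrableOn_const measure_Ico_lt_top.ne) measurableSet_Ico ?_
        intro u hu
        have hG := GG_mem_Y hY M hm0' htot hcons hu
        obtain ⟨z, hz, huz⟩ := gl_cover hY M hm0' htot hcons (l := l) hu
        have hgl : gl hY M l u = cpt Y l z := gl_apply_mem hY M hm0' htot hcons hz huz
        have hglY : gl hY M l u ∈ Y := by rw [hgl]; exact (cpt_mem hz).2
        have hd := GG_dist hY M hm0' htot hcons hu l
        have hlt := hδ _ hG _ hglY (lt_of_le_of_lt hd hl)
        rw [Real.dist_eq] at hlt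
        exact hlt.le
      refine h2.trans ?_
      rw [setIntegral_const, measureReal_def, Real.volume_Ico, smul_eq_mul, sub_zero,
        ENNReal.toReal_ofReal ht0, mul_comm]
    have hI3 : ∀ j, |(∫ y, f y ∂(ρ j)) - ∑ z ∈ ZS hY l, ((ρ j) (cube l z)).toReal * f (cpt Y l z)|
        ≤ ε' * ((ρ j) Set.univ).toReal := by
      intro j
      have hrs : (ρ j).restrict Y = ρ j := Measure.restrict_eq_self_of_ae_mem (ae_mem_Y (hconc j))
      have hIntf : Integrable f (ρ j) := integrable_of_conc (hconc j) hf hC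
      have hY2 : ∫ y, f y ∂(ρ j) = ∑ z ∈ ZS hY l, ∫ y in cube l z ∩ Y, f y ∂(ρ j) := by
        conv_lhs => rw [← hrs]
        conv_lhs => rw [Y_decomp hY l]
        exact integral_biUnion_finset (ZS hY l)
          (fun z _ => (measurableSet_cube l z).inter hY.isClosed.measurableSet)
          (pd_cubeY hY l) (fun z _ => hIntf.integrableOn)
      have heach : ∀ z ∈ ZS hY l,
          |(∫ y in cube l z ∩ Y, f y ∂(ρ j)) - ((ρ j) (cube l z)).toReal * f (cpt Y l z)|
            ≤ ε' * ((ρ j) (cube l z)).toReal := by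
        intro z hz
        have hcz := cpt_mem (hY := hY) hz
        have hconst : ((ρ j) (cube l z)).toReal * f (cpt Y l z)
            = ∫ _y in cube l z ∩ Y, f (cpt Y l z) ∂(ρ j) := by
          rw [setIntegral_const, smul_eq_mul, measureReal_def, ← conc_inter (hconc j)]
        rw [hconst, ← integral_sub hIntf.integrableOn
          (integrableOn_const (measure_lt_top _ _).ne)]
        have h1 : |∫ y in cube l z ∩ Y, (f y - f (cpt Y l z)) ∂(ρ j)|
            ≤ ∫ y in cube l z ∩ Y, |f y - f (cpt Y l z)| ∂(ρ j) := by
          simpa [Real.norm_eq_abs] using norm_integral_le_integral_norm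
            (μ := (ρ j).restrict (cube l z ∩ Y)) (fun y => f y - f (cpt Y l z))
        refine h1.trans ?_
        have h2 : ∫ y in cube l z ∩ Y, |f y - f (cpt Y l z)| ∂(ρ j)
            ≤ ∫ _y in cube l z ∩ Y, ε' ∂(ρ j) := by
          refine setIntegral_mono_on (hIntf.integrableOn.sub
            (integrableOn_const (measure_lt_top _ _).ne)).abs
            (integrableOn_const (measure_lt_top _ _).ne)
            ((measurableSet_cube l z).inter hY.isClosed.measurableSet) ?_
          intro y hy
          have hdy : dist y (cpt Y l z) ≤ ((2:ℝ)^l)⁻¹ := dist_le_of_mem_cube hy.1 hcz.1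
          have hlt := hδ y hy.2 _ hcz.2 (lt_of_le_of_lt hdy hl2)
          rw [Real.dist_eq] at hlt
          exact hlt.le
        refine h2.trans ?_
        rw [setIntegral_const, smul_eq_mul, mul_comm, measureReal_def, ← conc_inter (hconc j)]
      calc |(∫ y, f y ∂(ρ j)) - ∑ z ∈ ZS hY l, ((ρ j) (cube l z)).toReal * f (cpt Y l z)|
          = |∑ z ∈ ZS hY l, ((∫ y in cube l z ∩ Y, f y ∂(ρ j))
              - ((ρ j) (cube l z)).toReal * f (cpt Y l z))| := by
            rw [hY2, Finset.sum_sub_distrib]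
      _ ≤ ∑ z ∈ ZS hY l, |(∫ y in cube l z ∩ Y, f y ∂(ρ j))
              - ((ρ j) (cube l z)).toReal * f (cpt Y l z)| := Finset.abs_sum_le_sum_abs _ _
      _ ≤ ∑ z ∈ ZS hY l, ε' * ((ρ j) (cube l z)).toReal :=
            Finset.sum_le_sum heach
      _ = ε' * ∑ z ∈ ZS hY l, ((ρ j) (cube l z)).toReal := by rw [Finset.mul_sum]
      _ = ε' * ((ρ j) Set.univ).toReal := by rw [← meas_total hY (hconc j) l]
    have hSj : Tendsto (fun j => ∑ z ∈ ZS hY l, ((ρ j) (cube l z)).toReal * f (cpt Y l z))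
        atTop (𝓝 (∑ z ∈ ZS hY l, M l z * f (cpt Y l z))) :=
      tendsto_finset_sum _ fun z _ => (hm l z).mul_const _
    obtain ⟨N₁, hN₁⟩ := Metric.tendsto_atTop.mp hSj ε' hε'
    obtain ⟨N₂, hN₂⟩ := eventually_atTop.mp (ht.eventually (gt_mem_nhds (lt_add_one t)))
    refine ⟨max N₁ N₂, fun j hj => ?_⟩
    have h1 := hN₁ j (le_trans (le_max_left _ _) hj)
    have h2 := hN₂ j (le_trans (le_max_right _ _) hj)
    rw [Real.dist_eq] at h1 ⊢
    rw [hI4]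
    have htri : |(∫ y, f y ∂(ρ j)) - ∫ u in Ico (0:ℝ) t, f (GG hY M u)|
        ≤ |(∫ y, f y ∂(ρ j)) - ∑ z ∈ ZS hY l, ((ρ j) (cube l z)).toReal * f (cpt Y l z)|
          + |(∑ z ∈ ZS hY l, ((ρ j) (cube l z)).toReal * f (cpt Y l z))
              - ∑ z ∈ ZS hY l, M l z * f (cpt Y l z)|
          + |(∑ z ∈ ZS hY l, M l z * f (cpt Y l z)) - ∫ u in Ico (0:ℝ) t, f (GG hY M u)| := by
      have := abs_sub_le (∫ y, f y ∂(ρ j))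
        (∑ z ∈ ZS hY l, ((ρ j) (cube l z)).toReal * f (cpt Y l z))
        (∫ u in Ico (0:ℝ) t, f (GG hY M u))
      have h4 := abs_sub_le (∑ z ∈ ZS hY l, ((ρ j) (cube l z)).toReal * f (cpt Y l z))
        (∑ z ∈ ZS hY l, M l z * f (cpt Y l z))
        (∫ u in Ico (0:ℝ) t, f (GG hY M u))
      linarith
    have hb1 := hI3 j
    have hb2 : ε' * ((ρ j) Set.univ).toReal ≤ ε' * (t+1) :=
      mul_le_mul_of_nonneg_left h2.le hε'.le
    have hb3 : |(∑ z ∈ ZS hY l, M l z * f (cpt Y l z)) - ∫ u in Ico (0:ℝ) t, f (GG hY M u)|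
        ≤ ε' * t := by rw [abs_sub_comm]; exact hI2
    have hfin : ε' * (2*t+3) = ε := div_mul_cancel₀ _ (ne_of_gt h2t3)
    have hexp : ε' * (2*t+3) = ε' * (t+1) + ε' + ε' * t + ε' := by ring
    linarith
end SCCCQ


open Filter Set Topology Pointwise in
/-- The Slater condition implies the SCCCQ: `C₁ + C₂` is closed. -/
theorem slater_implies_scccq (m n s : ℕ)
    (Y : Set (Fin n → ℝ)) (hY : IsCompact Y)
    (p : (Fin m → ℝ) → (Fin n → ℝ) → ℝ)
    (hpconv : ∀ y ∈ Y, ConvexOn ℝ Set.univ fun x => p x y)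
    (hpcont : ∀ x, Continuous (p x))
    (ψ : Fin s → (Fin m → ℝ) → ℝ)
    (hψcont : ∀ j, Continuous (ψ j)) (hψconv : ∀ j, ConvexOn ℝ Set.univ (ψ j))
    (hslater : ∃ u : Fin m → ℝ, (∀ y ∈ Y, p u y < 0) ∧ ∀ j, ψ j u < 0)
    (C1 C2 : Set ((Fin m → ℝ) × ℝ))
    (hC1 : C1 = {wv | ∃ μ : Measure (Fin n → ℝ), IsFiniteMeasure μ ∧ μ Yᶜ = 0 ∧
        ∀ x : Fin m → ℝ, (∑ i, wv.1 i * x i) - (∫ y, p x y ∂μ) ≤ wv.2})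
    (hC2 : C2 = {wv | ∃ η : Fin s → ℝ, (∀ j, 0 ≤ η j) ∧
        ∀ x : Fin m → ℝ, (∑ i, wv.1 i * x i) - (∑ j, η j * ψ j x) ≤ wv.2}) :
    IsClosed (C1 + C2) := by
  classical
  subst hC1 hC2
  obtain ⟨u, hpu, hψu⟩ := hslater
  -- Slater margins
  obtain ⟨ε₀, hε₀, hpε⟩ : ∃ ε > (0:ℝ), ∀ y ∈ Y, p u y ≤ -ε := by
    rcases Y.eq_empty_or_nonempty with rfl | hYne
    · exact ⟨1, one_pos, by simp⟩
    · obtain ⟨y₀, hy₀, hmax⟩ := hY.exists_isMaxOn hYne (hpcont u).continuousOn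
      exact ⟨-p u y₀, by linarith [hpu y₀ hy₀], fun y hy => by
        have := hmax hy; simp only [Set.mem_setOf_eq] at this; linarith⟩
  obtain ⟨δ₀, hδ₀, hψδ⟩ : ∃ δ > (0:ℝ), ∀ k, ψ k u ≤ -δ := by
    rcases isEmpty_or_nonempty (Fin s) with h | h
    · exact ⟨1, one_pos, fun k => h.elim k⟩
    · obtain ⟨k₀, _, hmax⟩ := Finset.exists_max_image Finset.univ (fun k => ψ k u)
        ⟨h.some, Finset.mem_univ _⟩
      exact ⟨-ψ k₀ u, by linarith [hψu k₀], fun k => by linarith [hmax k (Finset.mem_univ k)]⟩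
  -- bounds for p on Y
  have hCpb : ∀ x : Fin m → ℝ, ∃ C, 0 ≤ C ∧ ∀ y ∈ Y, |p x y| ≤ C := by
    intro x
    obtain ⟨C, hC⟩ := hY.exists_bound_of_continuousOn (hpcont x).continuousOn
    exact ⟨max C 0, le_max_right _ _, fun y hy => le_trans (by
      simpa [Real.norm_eq_abs] using hC y hy) (le_max_left _ _)⟩
  choose Cp hCp0 hCpB using hCpb
  apply IsSeqClosed.isClosed
  intro q wv hq hlim
  simp only [Set.mem_add] at hq
  choose a ha b hb hab using hq
  choose μ hμ1 hμ2 hμ3 using ha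
  choose η hη0 hη3 using hb
  haveI : ∀ j, IsFiniteMeasure (μ j) := hμ1
  -- integrability
  have hInt : ∀ j x, Integrable (p x) (μ j) := by
    intro j x
    apply Integrable.mono' (integrable_const (Cp x)) (hpcont x).measurable.aestronglyMeasurable
    filter_upwards [SCCCQ.ae_mem_Y (hμ2 j)] with y hy
    simpa [Real.norm_eq_abs] using hCpB x y hy
  have habs : ∀ j x, |∫ y, p x y ∂μ j| ≤ Cp x * ((μ j) Set.univ).toReal := by
    intro j x
    have := norm_integral_le_of_norm_le_const (μ := μ j) (f := p x) (C := Cp x) ?_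
    · simpa [Real.norm_eq_abs, measureReal_def] using this
    · filter_upwards [SCCCQ.ae_mem_Y (hμ2 j)] with y hy
      simpa [Real.norm_eq_abs] using hCpB x y hy
  -- limits of q components
  have hw : Tendsto (fun j => (q j).1) atTop (𝓝 wv.1) := (continuous_fst.tendsto _).comp hlim
  have hv : Tendsto (fun j => (q j).2) atTop (𝓝 wv.2) := (continuous_snd.tendsto _).comp hlim
  -- the summed inequality
  have hsum : ∀ j x, (∑ i, (q j).1 i * x i) - (∫ y, p x y ∂μ j)
      - (∑ k, η j k * ψ k x) ≤ (q j).2 := by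
    intro j x
    have h1 := hμ3 j x
    have h2 := hη3 j x
    have hq1 : (q j).1 = (a j).1 + (b j).1 := by rw [← hab j]; rfl
    have hq2 : (q j).2 = (a j).2 + (b j).2 := by rw [← hab j]; rfl
    have hsplit : (∑ i, (q j).1 i * x i)
        = (∑ i, (a j).1 i * x i) + ∑ i, (b j).1 i * x i := by
      rw [hq1, ← Finset.sum_add_distrib]
      exact Finset.sum_congr rfl fun i _ => by rw [Pi.add_apply]; ring
    rw [hsplit, hq2]
    linarith
  -- mass and multiplier bounds
  have hbound : ∀ j, ε₀ * ((μ j) Set.univ).toReal + δ₀ * (∑ k, η j k)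
      ≤ (q j).2 - ∑ i, (q j).1 i * u i := by
    intro j
    have h1 := hsum j u
    have h2 : ∫ y, p u y ∂μ j ≤ -ε₀ * ((μ j) Set.univ).toReal := by
      have hae : ∀ᵐ y ∂(μ j), p u y ≤ -ε₀ := by
        filter_upwards [SCCCQ.ae_mem_Y (hμ2 j)] with y hy
        exact hpε y hy
      calc ∫ y, p u y ∂μ j ≤ ∫ _y, -ε₀ ∂μ j :=
            integral_mono_ae (hInt j u) (integrable_const _) hae
      _ = ((μ j) Set.univ).toReal • (-ε₀) := integral_const _
      _ = -ε₀ * ((μ j) Set.univ).toReal := by rw [smul_eq_mul]; ring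
    have h3 : ∑ k, η j k * ψ k u ≤ -δ₀ * ∑ k, η j k := by
      calc ∑ k, η j k * ψ k u ≤ ∑ k, η j k * (-δ₀) :=
            Finset.sum_le_sum fun k _ => mul_le_mul_of_nonneg_left (hψδ k) (hη0 j k)
      _ = -δ₀ * ∑ k, η j k := by rw [← Finset.sum_mul, mul_comm]
    linarith
  -- uniform bound on the dual pairing
  obtain ⟨K₀, hK₀'⟩ := (hv.sub (tendsto_finset_sum Finset.univ fun i _ =>
      (((continuous_apply i).tendsto _).comp hw).mul_const (u i))).bddAbove_range
  have hK : ∀ j, (q j).2 - ∑ i, (q j).1 i * u i ≤ K₀ := fun j => hK₀' (Set.mem_range_self j)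
  set B₁ := K₀ / ε₀ with hB₁
  set B₂ := K₀ / δ₀ with hB₂
  have hmass : ∀ j, ((μ j) Set.univ).toReal ≤ B₁ := by
    intro j
    have h1 := hbound j
    have h2 := hK j
    have h3 : 0 ≤ δ₀ * ∑ k, η j k := mul_nonneg hδ₀.le (Finset.sum_nonneg fun k _ => hη0 j k)
    rw [hB₁, le_div_iff₀ hε₀]
    nlinarith
  have hηB : ∀ j k, η j k ≤ B₂ := by
    intro j k
    have h1 := hbound j
    have h2 := hK j
    have h4 : η j k ≤ ∑ k', η j k' :=
      Finset.single_le_sum (fun k' _ => hη0 j k') (Finset.mem_univ k)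
    have h5 : 0 ≤ ε₀ * ((μ j) Set.univ).toReal := mul_nonneg hε₀.le ENNReal.toReal_nonneg
    rw [hB₂, le_div_iff₀ hδ₀]
    nlinarith
  obtain ⟨K₂, hK₂'⟩ := hv.bddAbove_range
  have hK₂ : ∀ j, (q j).2 ≤ K₂ := fun j => hK₂' (Set.mem_range_self j)
  set C2 := B₂ * ∑ k, |ψ k 0| with hC2def
  have hvb : ∀ j, -C2 ≤ (b j).2 := by
    intro j
    have h1 := hη3 j 0
    have h0 : (∑ i, (b j).1 i * (0 : Fin m → ℝ) i) = 0 := by simp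
    have h2 : ∑ k, η j k * ψ k 0 ≤ C2 := by
      rw [hC2def, Finset.mul_sum]
      refine Finset.sum_le_sum fun k _ => ?_
      calc η j k * ψ k 0 ≤ η j k * |ψ k 0| :=
            mul_le_mul_of_nonneg_left (le_abs_self _) (hη0 j k)
      _ ≤ B₂ * |ψ k 0| := mul_le_mul_of_nonneg_right (hηB j k) (abs_nonneg _)
    rw [h0] at h1
    linarith
  have hva_lb : ∀ j, -(Cp 0 * B₁) ≤ (a j).2 := by
    intro j
    have h1 := hμ3 j 0
    have h0 : (∑ i, (a j).1 i * (0 : Fin m → ℝ) i) = 0 := by simp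
    have h3 : |∫ y, p 0 y ∂μ j| ≤ Cp 0 * B₁ :=
      (habs j 0).trans (mul_le_mul_of_nonneg_left (hmass j) (hCp0 0))
    rw [h0] at h1
    have h4 := abs_le.mp h3
    linarith [h4.1, h4.2]
  have hva_ub : ∀ j, (a j).2 ≤ K₂ + C2 := by
    intro j
    have hq2 : (q j).2 = (a j).2 + (b j).2 := by rw [← hab j]; rfl
    have h1 := hK₂ j
    have h2 := hvb j
    linarith
  set VU := K₂ + C2 with hVU
  set VL := -(Cp 0 * B₁) with hVL
  have hsingle : ∀ (w : Fin m → ℝ) i, (∑ i', w i' * (Pi.single i (1:ℝ) : Fin m → ℝ) i') = w i := by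
    intro w i
    rw [Finset.sum_eq_single i]
    · simp
    · intro i' _ hne; simp [Pi.single_apply, hne]
    · simp
  have hwa_ub : ∀ j i, (a j).1 i ≤ VU + Cp (Pi.single i 1) * B₁ := by
    intro j i
    have h1 := hμ3 j (Pi.single i 1)
    rw [hsingle] at h1
    have h3 : |∫ y, p (Pi.single i 1) y ∂μ j| ≤ Cp (Pi.single i 1) * B₁ :=
      (habs j _).trans (mul_le_mul_of_nonneg_left (hmass j) (hCp0 _))
    have h4 := abs_le.mp h3
    have h5 := hva_ub j
    rw [hVU]
    linarith [h4.1, h4.2]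
  have hwa_lb : ∀ j i, -(VU + Cp (-Pi.single i 1) * B₁) ≤ (a j).1 i := by
    intro j i
    have h1 := hμ3 j (-Pi.single i 1)
    have hneg : (∑ i', (a j).1 i' * (-Pi.single i 1 : Fin m → ℝ) i') = -(a j).1 i := by
      rw [show (∑ i', (a j).1 i' * (-Pi.single i 1 : Fin m → ℝ) i')
          = -∑ i', (a j).1 i' * (Pi.single i (1:ℝ) : Fin m → ℝ) i' by
        rw [← Finset.sum_neg_distrib]
        exact Finset.sum_congr rfl fun i' _ => by simp [Pi.neg_apply]]
      rw [hsingle]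
    rw [hneg] at h1
    have h3 : |∫ y, p (-Pi.single i 1) y ∂μ j| ≤ Cp (-Pi.single i 1) * B₁ :=
      (habs j _).trans (mul_le_mul_of_nonneg_left (hmass j) (hCp0 _))
    have h4 := abs_le.mp h3
    have h5 := hva_ub j
    rw [hVU]
    linarith [h4.1, h4.2]
  -- compact extraction
  set X : ℕ → ℝ × (Fin m → ℝ) × (Fin s → ℝ) × ℝ × ((ℕ × (Fin n → ℤ)) → ℝ) :=
    fun j => ((a j).2, (a j).1, η j, ((μ j) Set.univ).toReal,
      fun lz => ((μ j) (SCCCQ.cube lz.1 lz.2)).toReal) with hX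
  set K : Set (ℝ × (Fin m → ℝ) × (Fin s → ℝ) × ℝ × ((ℕ × (Fin n → ℤ)) → ℝ)) :=
    (Icc VL VU) ×ˢ ((univ.pi fun i => Icc (-(VU + Cp (-Pi.single i 1) * B₁))
        (VU + Cp (Pi.single i 1) * B₁)) ×ˢ ((univ.pi fun _ => Icc 0 B₂) ×ˢ
        ((Icc 0 B₁) ×ˢ (univ.pi fun _ => Icc 0 B₁)))) with hKdef
  have hKc : IsCompact K :=
    isCompact_Icc.prod ((isCompact_univ_pi fun i => isCompact_Icc).prod
      ((isCompact_univ_pi fun _ => isCompact_Icc).prod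
        (isCompact_Icc.prod (isCompact_univ_pi fun _ => isCompact_Icc))))
  have hXK : ∀ j, X j ∈ K := by
    intro j
    refine ⟨⟨hva_lb j, hva_ub j⟩, Set.mem_univ_pi.mpr fun i => ⟨hwa_lb j i, hwa_ub j i⟩,
      Set.mem_univ_pi.mpr fun k => ⟨hη0 j k, hηB j k⟩,
      ⟨ENNReal.toReal_nonneg, hmass j⟩,
      Set.mem_univ_pi.mpr fun lz => ⟨ENNReal.toReal_nonneg, ?_⟩⟩
    exact (ENNReal.toReal_mono (measure_ne_top _ _)
      (measure_mono (Set.subset_univ _))).trans (hmass j)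
  obtain ⟨P₀, hP₀K, φ, hφ, hXφ⟩ := hKc.tendsto_subseq hXK
  have hva : Tendsto (fun j => (a (φ j)).2) atTop (𝓝 P₀.1) :=
    ((continuous_fst).tendsto _).comp hXφ
  have hwa : Tendsto (fun j => (a (φ j)).1) atTop (𝓝 P₀.2.1) :=
    ((continuous_fst.comp continuous_snd).tendsto _).comp hXφ
  have hηlim : Tendsto (fun j => η (φ j)) atTop (𝓝 P₀.2.2.1) :=
    ((continuous_fst.comp (continuous_snd.comp continuous_snd)).tendsto _).comp hXφ
  have htm : Tendsto (fun j => ((μ (φ j)) Set.univ).toReal) atTop (𝓝 P₀.2.2.2.1) :=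
    ((continuous_fst.comp (continuous_snd.comp (continuous_snd.comp
      continuous_snd))).tendsto _).comp hXφ
  have hcube : ∀ (l : ℕ) (z : Fin n → ℤ),
      Tendsto (fun j => ((μ (φ j)) (SCCCQ.cube l z)).toReal) atTop (𝓝 (P₀.2.2.2.2 (l, z))) :=
    fun l z => (((continuous_apply ((l, z) : ℕ × (Fin n → ℤ))).comp
      (continuous_snd.comp (continuous_snd.comp (continuous_snd.comp
        continuous_snd)))).tendsto _).comp hXφ
  obtain ⟨μlim, hmufin, hμlimconc, hwk⟩ := SCCCQ.weak_limit hY (fun j => μ (φ j))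
    (fun j => hμ1 _) (fun j => hμ2 _) P₀.2.2.2.1 htm
    (fun l z => P₀.2.2.2.2 (l, z)) hcube
  have hwφ : Tendsto (fun j => (q (φ j)).1) atTop (𝓝 wv.1) := hw.comp hφ.tendsto_atTop
  have hvφ : Tendsto (fun j => (q (φ j)).2) atTop (𝓝 wv.2) := hv.comp hφ.tendsto_atTop
  have hbeq1 : ∀ j', (b j').1 = (q j').1 - (a j').1 := by
    intro j'
    rw [← hab j', Prod.fst_add]
    abel
  have hbeq2 : ∀ j', (b j').2 = (q j').2 - (a j').2 := by
    intro j'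
    rw [← hab j', Prod.snd_add]
    abel
  refine Set.mem_add.mpr ⟨(P₀.2.1, P₀.1), ?_, (wv.1 - P₀.2.1, wv.2 - P₀.1), ?_, ?_⟩
  · refine ⟨μlim, hmufin, hμlimconc, fun x => ?_⟩
    refine le_of_tendsto_of_tendsto'
      ((tendsto_finset_sum Finset.univ fun i _ =>
        (((continuous_apply i).tendsto _).comp hwa).mul_const (x i)).sub
        (hwk (p x) (hpcont x))) hva (fun j => hμ3 (φ j) x)
  · refine ⟨fun k => P₀.2.2.1 k, fun k => ?_, fun x => ?_⟩
    · exact ge_of_tendsto (((continuous_apply k).tendsto _).comp hηlim)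
        (Eventually.of_forall fun j => hη0 (φ j) k)
    · refine le_of_tendsto_of_tendsto'
        ((tendsto_finset_sum Finset.univ fun i _ =>
          (((((continuous_apply i).tendsto _).comp hwφ).sub
            (((continuous_apply i).tendsto _).comp hwa)).mul_const (x i))).sub
          (tendsto_finset_sum Finset.univ fun k _ =>
            (((continuous_apply k).tendsto _).comp hηlim).mul_const (ψ k x)))
        (hvφ.sub hva) (fun j => ?_)
      have h1 := hη3 (φ j) x
      rw [hbeq1, hbeq2] at h1
      exact h1
  · have h1 : P₀.2.1 + (wv.1 - P₀.2.1) = wv.1 := by abel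
    have h2 : P₀.1 + (wv.2 - P₀.1) = wv.2 := by abel
    rw [Prod.mk_add_mk, h1, h2]
end
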